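/- arXiv:2305.02951 — 9 statements merged into one kernel-verified Lean document; each statement's English description precedes it below -/
import Mathlib

section
/- Let X be an injective metric space. Then X is a geodesic metric space: for all x, y ∈ X there exists an isometric embedding γ : [0, dist(x,y)] → X with γ(0) = x and γ(dist(x,y)) = y (i.e., dist(γ(s), γ(t)) = |s − t| for all s, t ∈ [0, dist(x,y)]). -/
universe u v w

/-- A metric space `X` is injective if for all metric spaces `Y` and `Z`, every isometric
embedding `i : Y → Z`, and every 1-Lipschitz map `f : Y → X`, there exists a 1-Lipschitz
map `g : Z → X` with `g ∘ i = f`. -/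
def IsInjMetric (X : Type w) [MetricSpace X] : Prop :=
  ∀ (Y : Type u) (Z : Type v) [MetricSpace Y] [MetricSpace Z]
    (i : Y → Z) (f : Y → X), Isometry i → LipschitzWith 1 f →
      ∃ g : Z → X, LipschitzWith 1 g ∧ ∀ y, g (i y) = f y

/-- An injective metric space is geodesic: any two points `x, y` are joined by an isometric
embedding `γ : [0, dist x y] → X` with `γ 0 = x` and `γ (dist x y) = y`. -/
theorem injective_metric_space_is_geodesic (X : Type w) [MetricSpace X]
    (hX : IsInjMetric.{u, v} X) (x y : X) :
    ∃ γ : ℝ → X, γ 0 = x ∧ γ (dist x y) = y ∧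
      ∀ s ∈ Set.Icc (0 : ℝ) (dist x y), ∀ t ∈ Set.Icc (0 : ℝ) (dist x y),
        dist (γ s) (γ t) = |s - t| := by
  set d := dist x y with hd
  have hd0 : (0 : ℝ) ≤ d := dist_nonneg
  let Y : Type u := ULift.{u} ({0, d} : Set ℝ)
  let Z : Type v := ULift.{v} (Set.Icc (0 : ℝ) d)
  have memY0 : (0 : ℝ) ∈ ({0, d} : Set ℝ) := Or.inl rfl
  have memYd : d ∈ ({0, d} : Set ℝ) := Or.inr rfl
  let i : Y → Z := fun p => ⟨⟨p.down.1, by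
    rcases p.down.2 with h | h
    · rw [h]; exact ⟨le_refl _, hd0⟩
    · rw [h]; exact ⟨hd0, le_refl _⟩⟩⟩
  let f : Y → X := fun p => if p.down.1 = 0 then x else y
  have hi : Isometry i := Isometry.of_dist_eq fun a b => by
    rw [ULift.dist_eq, ULift.dist_eq, Subtype.dist_eq, Subtype.dist_eq]
  have hf : LipschitzWith 1 f := LipschitzWith.of_dist_le_mul fun a b => by
    have hab : dist a b = |(a.down.1 : ℝ) - b.down.1| := by
      rw [ULift.dist_eq, Subtype.dist_eq, Real.dist_eq]
    rw [NNReal.coe_one, one_mul, hab]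
    have ha := a.down.2; have hb := b.down.2
    rw [Set.mem_insert_iff, Set.mem_singleton_iff] at ha hb
    rcases ha with ha | ha <;> rcases hb with hb | hb
    · have hfa : f a = x := by simp [f, ha]
      have hfb : f b = x := by simp [f, hb]
      rw [hfa, hfb, ha, hb]; simp
    · by_cases h0 : d = 0
      · have hxy : x = y := by rw [← dist_eq_zero, ← hd, h0]
        have hfa : f a = x := by simp [f, ha]
        have hfb : f b = x := by simp [f, hb, h0, ← hxy]
        rw [hfa, hfb]; simp [abs_nonneg]
      · have hfa : f a = x := by simp [f, ha]
        have hfb : f b = y := by simp [f, hb, h0]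
        rw [hfa, hfb, ha, hb, zero_sub, abs_neg, abs_of_nonneg hd0]
    · by_cases h0 : d = 0
      · have hxy : x = y := by rw [← dist_eq_zero, ← hd, h0]
        have hfa : f a = x := by simp [f, ha, h0, ← hxy]
        have hfb : f b = x := by simp [f, hb]
        rw [hfa, hfb]; simp [abs_nonneg]
      · have hfa : f a = y := by simp [f, ha, h0]
        have hfb : f b = x := by simp [f, hb]
        rw [hfa, hfb, ha, hb, sub_zero, abs_of_nonneg hd0, dist_comm]
    · have hfa : f a = f b := by simp [f, ha, hb]
      rw [hfa]; simp [abs_nonneg]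
  obtain ⟨g, hg, hgi⟩ := hX Y Z i f hi hf
  have h0m : (0 : ℝ) ∈ Set.Icc (0 : ℝ) d := ⟨le_refl _, hd0⟩
  have hdm : d ∈ Set.Icc (0 : ℝ) d := ⟨hd0, le_refl _⟩
  have hx0 : g ⟨⟨0, h0m⟩⟩ = x := by
    have := hgi ⟨⟨0, memY0⟩⟩
    simpa [f] using this
  have hyd : g ⟨⟨d, hdm⟩⟩ = y := by
    have := hgi ⟨⟨d, memYd⟩⟩
    by_cases h0 : d = 0
    · have hxy : x = y := by rw [← dist_eq_zero, ← hd, h0]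
      simpa [f, h0, hxy] using this
    · simpa [f, h0] using this
  have hup : ∀ s (hs : s ∈ Set.Icc (0:ℝ) d) t (ht : t ∈ Set.Icc (0:ℝ) d),
      dist (g ⟨⟨s, hs⟩⟩) (g ⟨⟨t, ht⟩⟩) ≤ |s - t| := by
    intro s hs t ht
    have := hg.dist_le_mul ⟨⟨s, hs⟩⟩ ⟨⟨t, ht⟩⟩
    rwa [NNReal.coe_one, one_mul, ULift.dist_eq, Subtype.dist_eq, Real.dist_eq] at this
  refine ⟨fun t => if h : t ∈ Set.Icc (0:ℝ) d then g ⟨⟨t, h⟩⟩ else x, ?_, ?_, ?_⟩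
  · simp only [dif_pos h0m, hx0]
  · simp only [dif_pos hdm, hyd]
  · intro s hs t ht
    simp only [dif_pos hs, dif_pos ht]
    refine le_antisymm (hup s hs t ht) ?_
    -- lower bound
    have key : ∀ s (hs : s ∈ Set.Icc (0:ℝ) d) t (ht : t ∈ Set.Icc (0:ℝ) d), s ≤ t →
        t - s ≤ dist (g ⟨⟨s, hs⟩⟩) (g ⟨⟨t, ht⟩⟩) := by
      intro s hs t ht hst
      have h1 : dist x (g ⟨⟨s, hs⟩⟩) ≤ s := by
        have := hup 0 h0m s hs
        rw [hx0] at this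
        calc dist x (g ⟨⟨s, hs⟩⟩) ≤ |0 - s| := this
        _ = s := by rw [zero_sub, abs_neg, abs_of_nonneg hs.1]
      have h2 : dist (g ⟨⟨t, ht⟩⟩) y ≤ d - t := by
        have := hup t ht d hdm
        rw [hyd] at this
        calc dist (g ⟨⟨t, ht⟩⟩) y ≤ |t - d| := this
        _ = d - t := by rw [abs_of_nonpos (by linarith [ht.2]), neg_sub]
      have h3 := dist_triangle4 x (g ⟨⟨s, hs⟩⟩) (g ⟨⟨t, ht⟩⟩) y
      linarith [hd]
    rcases le_total s t with h | h
    · have := key s hs t ht h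
      rw [abs_of_nonpos (by linarith), neg_sub]; linarith
    · have := key t ht s hs h
      rw [dist_comm] at this
      rw [abs_of_nonneg (by linarith)]; linarith
end

section
/- Let X be an injective metric space, let n ≥ 1, and let x_1, …, x_n ∈ X. Then there exists a point c ∈ X (a center of x_1, …, x_n) such that for every i, dist(c, x_i) ≤ (1/n) · Σ_{j=1}^{n} dist(x_i, x_j). -/
universe u v w

/-- Distance on the one-point extension `Option E` of a metric space `E`,
where the new point `none` is at distance `ρ e` from `some e`. -/
def extDist {E : Type*} [MetricSpace E] (ρ : E → ℝ) : Option E → Option E → ℝ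
  | none, none => 0
  | none, some a => ρ a
  | some a, none => ρ a
  | some a, some b => dist a b

/-- The one-point extension metric space structure on `Option E`. -/
def onePointMetric {E : Type*} [MetricSpace E] (ρ : E → ℝ)
    (hpos : ∀ e, 0 < ρ e)
    (hlip : ∀ e e', ρ e ≤ ρ e' + dist e' e)
    (htri : ∀ e e', dist e e' ≤ ρ e + ρ e') : MetricSpace (Option E) where
  dist := extDist ρ
  dist_self := by rintro (_ | a) <;> simp [extDist]
  dist_comm := by rintro (_ | a) (_ | b) <;> simp [extDist, dist_comm]
  dist_triangle := by
    rintro (_ | a) (_ | b) (_ | c)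
    · show (0:ℝ) ≤ 0 + 0; norm_num
    · show ρ c ≤ 0 + ρ c; linarith
    · show (0:ℝ) ≤ ρ b + ρ b; linarith [hpos b]
    · show ρ c ≤ ρ b + dist b c; exact hlip c b
    · show ρ a ≤ ρ a + 0; linarith
    · show dist a c ≤ ρ a + ρ c; exact htri a c
    · show ρ a ≤ dist a b + ρ b
      calc ρ a ≤ ρ b + dist b a := hlip a b
        _ = dist a b + ρ b := by rw [dist_comm]; ring
    · show dist a c ≤ dist a b + dist b c; exact dist_triangle a b c
  eq_of_dist_eq_zero := by
    rintro (_ | a) (_ | b) h <;> simp only [extDist] at h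
    · rfl
    · exact absurd h (hpos b).ne'
    · exact absurd h (hpos a).ne'
    · exact congrArg some (eq_of_dist_eq_zero h)

/-- In an injective metric space, every finite family of points `x 1, …, x n` (with `n ≥ 1`)
admits a center `c` with `dist c (x i) ≤ (1/n) * ∑ j, dist (x i) (x j)` for every `i`. -/
theorem injective_center (X : Type w) [MetricSpace X]
    (hX : IsInjMetric.{u, v} X) (n : ℕ) (hn : 1 ≤ n) (x : Fin n → X) :
    ∃ c : X, ∀ i : Fin n, dist c (x i) ≤ (1 / (n : ℝ)) * ∑ j : Fin n, dist (x i) (x j) := by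
  have hn0 : (0 : ℝ) < n := by exact_mod_cast hn
  set r : Fin n → ℝ := fun i => (1 / (n : ℝ)) * ∑ j : Fin n, dist (x i) (x j) with hr
  have hrnn : ∀ i, 0 ≤ r i := fun i => by
    apply mul_nonneg (by positivity)
    exact Finset.sum_nonneg fun j _ => dist_nonneg
  -- the key triangle-type inequality for the radii
  have hrr : ∀ i j, dist (x i) (x j) ≤ r i + r j := by
    intro i j
    have : ∀ k : Fin n, dist (x i) (x j) ≤ dist (x i) (x k) + dist (x j) (x k) := fun k =>
      (dist_triangle (x i) (x k) (x j)).trans (by rw [dist_comm (x k) (x j)])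
    have hsum : (n : ℝ) * dist (x i) (x j)
        ≤ (∑ k : Fin n, dist (x i) (x k)) + ∑ k : Fin n, dist (x j) (x k) := by
      rw [← Finset.sum_add_distrib]
      calc (n : ℝ) * dist (x i) (x j) = ∑ _k : Fin n, dist (x i) (x j) := by
            simp [Finset.sum_const, mul_comm]
        _ ≤ _ := Finset.sum_le_sum fun k _ => this k
    have hmul : (1 / (n:ℝ)) * ((n:ℝ) * dist (x i) (x j))
        ≤ (1 / (n:ℝ)) * ((∑ k : Fin n, dist (x i) (x k)) + ∑ k : Fin n, dist (x j) (x k)) :=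
      mul_le_mul_of_nonneg_left hsum (by positivity)
    calc dist (x i) (x j) = (1 / (n:ℝ)) * ((n:ℝ) * dist (x i) (x j)) := by field_simp
      _ ≤ _ := hmul
      _ = r i + r j := by simp only [hr]; ring
  by_cases hall : ∀ j, x j = x ⟨0, hn⟩
  · refine ⟨x ⟨0, hn⟩, fun i => ?_⟩
    rw [← hall i, dist_self]
    exact hrnn i
  -- all radii are positive
  push_neg at hall
  obtain ⟨j0, hj0⟩ := hall
  have hrpos : ∀ i, 0 < r i := by
    intro i
    rcases (hrnn i).lt_or_eq with h | h
    · exact h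
    · exfalso
      have hsum0 : ∑ j : Fin n, dist (x i) (x j) = 0 := by
        have := h.symm
        rw [hr] at this
        field_simp at this
        rw [mul_zero] at this
        exact this
      have hall' : ∀ j, x j = x i := by
        intro j
        have := Finset.sum_eq_zero_iff_of_nonneg (fun k _ => dist_nonneg (x := x i) (y := x k))
          |>.mp hsum0 j (Finset.mem_univ j)
        exact (eq_of_dist_eq_zero this).symm
      exact hj0 ((hall' j0).trans (hall' ⟨0, hn⟩).symm)
  -- quotient carrier
  let s : Setoid (Fin n) := ⟨fun i j => x i = x j, ⟨fun _ => rfl, Eq.symm, Eq.trans⟩⟩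
  let C := Quotient s
  let φ : C → X := Quotient.lift x fun _ _ h => h
  have hφinj : Function.Injective φ := by
    rintro ⟨a⟩ ⟨b⟩ h
    exact Quotient.sound h
  letI instC : MetricSpace C := MetricSpace.induced φ hφinj inferInstance
  have hφdist : ∀ a b : C, dist a b = dist (φ a) (φ b) := fun _ _ => rfl
  have hne : (Finset.univ : Finset (Fin n)).Nonempty := ⟨⟨0, hn⟩, Finset.mem_univ _⟩
  let ρ : C → ℝ := fun a => Finset.univ.inf' hne fun i => r i + dist (x i) (φ a)
  have hρ_le : ∀ (a : C) (i : Fin n), ρ a ≤ r i + dist (x i) (φ a) := fun a i =>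
    Finset.inf'_le _ (Finset.mem_univ i)
  have hρ_min : ∀ a : C, ∃ i : Fin n, ρ a = r i + dist (x i) (φ a) := by
    intro a
    obtain ⟨i, _, hi⟩ := Finset.exists_mem_eq_inf' hne fun i => r i + dist (x i) (φ a)
    exact ⟨i, hi⟩
  have hρpos : ∀ a, 0 < ρ a := by
    intro a
    obtain ⟨i, hi⟩ := hρ_min a
    rw [hi]
    have := dist_nonneg (x := x i) (y := φ a)
    linarith [hrpos i]
  have hρlip : ∀ a b : C, ρ a ≤ ρ b + dist b a := by
    intro a b
    obtain ⟨i, hi⟩ := hρ_min b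
    calc ρ a ≤ r i + dist (x i) (φ a) := hρ_le a i
      _ ≤ r i + (dist (x i) (φ b) + dist (φ b) (φ a)) := by
          gcongr; exact dist_triangle _ _ _
      _ = ρ b + dist b a := by rw [hi, hφdist]; ring
  have hρtri : ∀ a b : C, dist a b ≤ ρ a + ρ b := by
    intro a b
    obtain ⟨i, hi⟩ := hρ_min a
    obtain ⟨j, hj⟩ := hρ_min b
    rw [hi, hj, hφdist]
    calc dist (φ a) (φ b)
        ≤ dist (φ a) (x i) + dist (x i) (x j) + dist (x j) (φ b) :=
          dist_triangle4 _ _ _ _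
      _ ≤ dist (φ a) (x i) + (r i + r j) + dist (x j) (φ b) := by gcongr; exact hrr i j
      _ = r i + dist (x i) (φ a) + (r j + dist (x j) (φ b)) := by
          rw [dist_comm (φ a) (x i)]; ring
  letI instO : MetricSpace (Option C) := onePointMetric ρ hρpos hρlip hρtri
  -- lift to the right universes
  let Y := ULift.{u} C
  let Z := ULift.{v} (Option C)
  let ii : Y → Z := fun y => ⟨some y.down⟩
  let f : Y → X := fun y => φ y.down
  have hii : Isometry ii := by
    apply Isometry.of_dist_eq
    intro a b
    show extDist ρ (some a.down) (some b.down) = dist a.down b.down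
    rfl
  have hf : LipschitzWith 1 f := by
    apply LipschitzWith.of_dist_le_mul
    intro a b
    simp only [NNReal.coe_one, one_mul]
    exact le_of_eq (hφdist a.down b.down).symm
  obtain ⟨g, hg, hgi⟩ := hX Y Z ii f hii hf
  refine ⟨g ⟨none⟩, fun i => ?_⟩
  have hx : x i = g ⟨some (Quotient.mk s i)⟩ := (hgi ⟨Quotient.mk s i⟩).symm
  calc dist (g ⟨none⟩) (x i) = dist (g ⟨none⟩) (g ⟨some (Quotient.mk s i)⟩) := by rw [hx]
    _ ≤ dist (⟨none⟩ : Z) (⟨some (Quotient.mk s i)⟩ : Z) := by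
        exact (hg.dist_le_mul _ _).trans (le_of_eq (by rw [NNReal.coe_one, one_mul]))
    _ = ρ (Quotient.mk s i) := rfl
    _ ≤ r i + dist (x i) (φ (Quotient.mk s i)) := hρ_le _ i
    _ = r i := by
        have : φ (Quotient.mk s i) = x i := rfl
        rw [this, dist_self, add_zero]
    _ = _ := rfl
end

section
/- Let X be an injective metric space and let x_1, y_1, x_2, y_2 ∈ X. Then there exist maps γ_1, γ_2 : [0,1] → X such that for j = 1, 2: γ_j(0) = x_j, γ_j(1) = y_j, and dist(γ_j(s), γ_j(t)) = |s − t| · dist(x_j, y_j) for all s, t ∈ [0,1] (each γ_j is a constant-speed geodesic), and moreover dist(γ_1(t), γ_2(t)) ≤ (1 − t) · dist(x_1, x_2) + t · dist(y_1, y_2) for all t ∈ [0,1]. In particular the two geodesics fellow-travel at distance max(dist(x_1,x_2), dist(y_1,y_2)). -/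
universe u v w

/-- In an injective metric space, any two pairs of points can be joined by constant-speed
geodesics `γ₁, γ₂ : [0,1] → X` that fellow-travel: `dist (γ₁ t) (γ₂ t)` is bounded by the
convex combination `(1 - t) * dist x₁ x₂ + t * dist y₁ y₂`. -/
theorem injective_fellow_travelling_geodesics (X : Type w) [MetricSpace X]
    (hX : IsInjMetric.{u, v} X) (x₁ y₁ x₂ y₂ : X) :
    ∃ γ₁ γ₂ : ℝ → X,
      γ₁ 0 = x₁ ∧ γ₁ 1 = y₁ ∧ γ₂ 0 = x₂ ∧ γ₂ 1 = y₂ ∧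
      (∀ s ∈ Set.Icc (0 : ℝ) 1, ∀ t ∈ Set.Icc (0 : ℝ) 1,
        dist (γ₁ s) (γ₁ t) = |s - t| * dist x₁ y₁) ∧
      (∀ s ∈ Set.Icc (0 : ℝ) 1, ∀ t ∈ Set.Icc (0 : ℝ) 1,
        dist (γ₂ s) (γ₂ t) = |s - t| * dist x₂ y₂) ∧
      (∀ t ∈ Set.Icc (0 : ℝ) 1,
        dist (γ₁ t) (γ₂ t) ≤ (1 - t) * dist x₁ x₂ + t * dist y₁ y₂) := by
  classical
  set pts : Fin 4 → X := ![x₁, y₁, x₂, y₂] with hpts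
  set K : X → (Fin 4 → ℝ) := fun u i => dist u (pts i) with hK
  -- K is 1-Lipschitz
  have hKle : ∀ u v : X, dist (K u) (K v) ≤ dist u v := by
    intro u v
    rw [dist_pi_le_iff dist_nonneg]
    intro i
    simpa [hK, Real.dist_eq] using abs_dist_sub_le u v (pts i)
  -- K is isometric against the base points
  have hKpt : ∀ (u : X) (j : Fin 4), dist (K u) (K (pts j)) = dist u (pts j) := by
    intro u j
    refine le_antisymm (hKle _ _) ?_
    have h := dist_le_pi_dist (K u) (K (pts j)) j
    have : dist (K u j) (K (pts j) j) = dist u (pts j) := by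
      simp [hK, Real.dist_eq, abs_of_nonneg dist_nonneg]
    linarith [this ▸ h]
  have hKK : ∀ j j' : Fin 4, dist (K (pts j)) (K (pts j')) = dist (pts j) (pts j') :=
    fun j j' => hKpt (pts j) j'
  -- set up the extension problem
  let S : Set (Fin 4 → ℝ) := Set.range (fun j => K (pts j))
  let Y : Type u := ULift.{u} S
  let Z : Type v := ULift.{v} (Fin 4 → ℝ)
  let i : Y → Z := fun y => ULift.up y.down.val
  have hi : Isometry i := fun y y' => rfl
  let f : Y → X := fun y => pts (Classical.choose y.down.2)
  have hfspec : ∀ y : Y, K (pts (Classical.choose y.down.2)) = y.down.val :=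
    fun y => Classical.choose_spec y.down.2
  have hf : LipschitzWith 1 f := by
    apply LipschitzWith.of_dist_le_mul
    intro y y'
    have : dist (f y) (f y') = dist (y : Y).down.val (y' : Y).down.val := by
      rw [← hfspec y, ← hfspec y', hKK]
    simp only [NNReal.coe_one, one_mul]
    exact le_of_eq (by rw [this]; rfl)
  obtain ⟨g, hg, hgi⟩ := hX Y Z i f hi hf
  -- g sends K (pts j) back to pts j
  have hgK : ∀ j : Fin 4, g (ULift.up (K (pts j))) = pts j := by
    intro j
    let y : Y := ULift.up ⟨K (pts j), ⟨j, rfl⟩⟩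
    have h1 : g (ULift.up (K (pts j))) = f y := hgi y
    have h2 : dist (f y) (pts j) = 0 := by
      have : dist (K (pts (Classical.choose y.down.2))) (K (pts j)) = dist (f y) (pts j) := by
        rw [hKK]
      rw [← this, hfspec y]
      simp [y]
    rw [h1]
    exact dist_eq_zero.mp h2
  -- the geodesics
  have key : ∀ j j' : Fin 4,
      ∃ γ : ℝ → X, γ 0 = pts j ∧ γ 1 = pts j' ∧
        (∀ t : ℝ, γ t = g (ULift.up ((1 - t) • K (pts j) + t • K (pts j')))) ∧
        (∀ s ∈ Set.Icc (0 : ℝ) 1, ∀ t ∈ Set.Icc (0 : ℝ) 1,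
          dist (γ s) (γ t) = |s - t| * dist (pts j) (pts j')) := by
    intro j j'
    set A := K (pts j)
    set B := K (pts j')
    set P : ℝ → (Fin 4 → ℝ) := fun t => (1 - t) • A + t • B with hP
    have hPdist : ∀ s t : ℝ, dist (P s) (P t) = |s - t| * dist A B := by
      intro s t
      have : P s - P t = (t - s) • (A - B) := by
        simp only [hP]
        module
      rw [dist_eq_norm, this, norm_smul, Real.norm_eq_abs, ← dist_eq_norm,
        abs_sub_comm]
    refine ⟨fun t => g (ULift.up (P t)), ?_, ?_, fun t => rfl, ?_⟩
    · have : P 0 = A := by simp [hP]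
      simp only [this]; exact hgK j
    · have : P 1 = B := by simp [hP]
      simp only [this]; exact hgK j'
    · -- geodesic property
      have upper : ∀ s t : ℝ,
          dist (g (ULift.up (P s))) (g (ULift.up (P t))) ≤ |s - t| * dist (pts j) (pts j') := by
        intro s t
        calc dist (g (ULift.up (P s))) (g (ULift.up (P t)))
            ≤ 1 * dist (ULift.up (P s) : Z) (ULift.up (P t) : Z) := hg.dist_le_mul _ _
          _ = |s - t| * dist (pts j) (pts j') := by
              rw [one_mul, ULift.dist_up_up, hPdist, hKK]
      intro s hs t ht
      rcases le_total s t with hst | hst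
      · refine le_antisymm (upper s t) ?_
        have h0 : dist (g (ULift.up (P 0))) (g (ULift.up (P s))) ≤ s * dist (pts j) (pts j') := by
          have := upper 0 s
          rwa [abs_of_nonpos (by linarith [hs.1]), neg_sub, sub_zero] at this
        have h1 : dist (g (ULift.up (P t))) (g (ULift.up (P 1))) ≤
            (1 - t) * dist (pts j) (pts j') := by
          have := upper t 1
          rwa [abs_of_nonpos (by linarith [ht.2]), neg_sub] at this
        have hchain : dist (g (ULift.up (P 0))) (g (ULift.up (P 1))) ≤
            dist (g (ULift.up (P 0))) (g (ULift.up (P s))) +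
            dist (g (ULift.up (P s))) (g (ULift.up (P t))) +
            dist (g (ULift.up (P t))) (g (ULift.up (P 1))) := dist_triangle4 _ _ _ _
        have hends : dist (g (ULift.up (P 0))) (g (ULift.up (P 1))) = dist (pts j) (pts j') := by
          have e0 : P 0 = A := by simp [hP]
          have e1 : P 1 = B := by simp [hP]
          rw [e0, e1, hgK j, hgK j']
        rw [hends] at hchain
        rw [abs_of_nonpos (by linarith)]
        nlinarith [(dist_nonneg : (0:ℝ) ≤ dist (pts j) (pts j'))]
      · refine le_antisymm (upper s t) ?_
        have h0 : dist (g (ULift.up (P 0))) (g (ULift.up (P t))) ≤ t * dist (pts j) (pts j') := by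
          have := upper 0 t
          rwa [abs_of_nonpos (by linarith [ht.1]), neg_sub, sub_zero] at this
        have h1 : dist (g (ULift.up (P s))) (g (ULift.up (P 1))) ≤
            (1 - s) * dist (pts j) (pts j') := by
          have := upper s 1
          rwa [abs_of_nonpos (by linarith [hs.2]), neg_sub] at this
        have hchain : dist (g (ULift.up (P 0))) (g (ULift.up (P 1))) ≤
            dist (g (ULift.up (P 0))) (g (ULift.up (P t))) +
            dist (g (ULift.up (P t))) (g (ULift.up (P s))) +
            dist (g (ULift.up (P s))) (g (ULift.up (P 1))) := dist_triangle4 _ _ _ _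
        have hends : dist (g (ULift.up (P 0))) (g (ULift.up (P 1))) = dist (pts j) (pts j') := by
          have e0 : P 0 = A := by simp [hP]
          have e1 : P 1 = B := by simp [hP]
          rw [e0, e1, hgK j, hgK j']
        rw [hends] at hchain
        rw [abs_of_nonneg (by linarith), dist_comm (g (ULift.up (P t)))] at *
        nlinarith [(dist_nonneg : (0:ℝ) ≤ dist (pts j) (pts j'))]
  obtain ⟨γ₁, hγ₁0, hγ₁1, hγ₁def, hγ₁geo⟩ := key 0 1
  obtain ⟨γ₂, hγ₂0, hγ₂1, hγ₂def, hγ₂geo⟩ := key 2 3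
  have hp0 : pts 0 = x₁ := rfl
  have hp1 : pts 1 = y₁ := rfl
  have hp2 : pts 2 = x₂ := rfl
  have hp3 : pts 3 = y₂ := rfl
  refine ⟨γ₁, γ₂, by rw [hγ₁0]; exact hp0, by rw [hγ₁1]; exact hp1, by rw [hγ₂0]; exact hp2, by rw [hγ₂1]; exact hp3,
    by simpa [hp0, hp1] using hγ₁geo, by simpa [hp2, hp3] using hγ₂geo, ?_⟩
  intro t ht
  rw [hγ₁def t, hγ₂def t]
  calc dist (g (ULift.up ((1 - t) • K (pts 0) + t • K (pts 1))))
        (g (ULift.up ((1 - t) • K (pts 2) + t • K (pts 3))))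
      ≤ 1 * dist (ULift.up ((1 - t) • K (pts 0) + t • K (pts 1)) : Z)
          (ULift.up ((1 - t) • K (pts 2) + t • K (pts 3)) : Z) := hg.dist_le_mul _ _
    _ = ‖(1 - t) • (K (pts 0) - K (pts 2)) + t • (K (pts 1) - K (pts 3))‖ := by
        rw [one_mul, ULift.dist_up_up, dist_eq_norm]
        congr 1
        module
    _ ≤ ‖(1 - t) • (K (pts 0) - K (pts 2))‖ + ‖t • (K (pts 1) - K (pts 3))‖ := norm_add_le _ _
    _ ≤ (1 - t) * dist x₁ x₂ + t * dist y₁ y₂ := by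
        rw [norm_smul, norm_smul, Real.norm_eq_abs, Real.norm_eq_abs,
          abs_of_nonneg (by linarith [ht.2]), abs_of_nonneg ht.1,
          ← dist_eq_norm, ← dist_eq_norm, hKK, hKK, hp0, hp1, hp2, hp3]
end

section
/- Every injective metric space is a complete metric space. -/
universe u v w

open BoundedContinuousFunction Filter Topology

/-- Every injective metric space is complete. -/
theorem injective_is_complete (X : Type w) [MetricSpace X]
    (hX : IsInjMetric.{u, v} X) : CompleteSpace X := by
  apply Metric.complete_of_cauchySeq_tendsto
  intro x hx
  obtain ⟨R, hR0, hR⟩ := cauchySeq_bdd hx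
  -- the limits of the distance functions
  have hL : ∀ k : ℕ, ∃ l : ℝ, Tendsto (fun j => dist (x j) (x k)) atTop (𝓝 l) := by
    intro k
    apply cauchySeq_tendsto_of_complete
    rw [Metric.cauchySeq_iff]
    intro ε hε
    obtain ⟨N, hN⟩ := Metric.cauchySeq_iff.1 hx ε hε
    refine ⟨N, fun m hm n hn => ?_⟩
    calc dist (dist (x m) (x k)) (dist (x n) (x k)) = |dist (x m) (x k) - dist (x n) (x k)| :=
          Real.dist_eq _ _
      _ ≤ dist (x m) (x n) := abs_dist_sub_le _ _ _
      _ < ε := hN m hm n hn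
  choose L hLt using hL
  -- Kuratowski-type embedding of the sequence
  have hb : ∀ m : ℕ, ∃ C, ∀ a b : ℕ, dist (dist (x m) (x a)) (dist (x m) (x b)) ≤ C := by
    intro m
    refine ⟨R, fun a b => ?_⟩
    calc dist (dist (x m) (x a)) (dist (x m) (x b)) = |dist (x m) (x a) - dist (x m) (x b)| :=
          Real.dist_eq _ _
      _ ≤ dist (x a) (x b) := by
          have := abs_dist_sub_le (x a) (x b) (x m)
          simpa [dist_comm] using this
      _ ≤ R := (hR a b).le
  let φ : ℕ → (ℕ →ᵇ ℝ) := fun m => ⟨⟨fun k => dist (x m) (x k), continuous_of_discreteTopology⟩, hb m⟩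
  have hLabs : ∀ a b : ℕ, |L a - L b| ≤ dist (x a) (x b) := by
    intro a b
    have ht : Tendsto (fun j => dist (x j) (x a) - dist (x j) (x b)) atTop (𝓝 (L a - L b)) :=
      (hLt a).sub (hLt b)
    have ht' : Tendsto (fun j => |dist (x j) (x a) - dist (x j) (x b)|) atTop (𝓝 |L a - L b|) :=
      ht.abs
    refine le_of_tendsto ht' (Eventually.of_forall fun j => ?_)
    simpa [dist_comm] using abs_dist_sub_le (x a) (x b) (x j)
  have hbL : ∃ C, ∀ a b : ℕ, dist (L a) (L b) ≤ C := by
    refine ⟨R, fun a b => ?_⟩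
    calc dist (L a) (L b) = |L a - L b| := Real.dist_eq _ _
      _ ≤ dist (x a) (x b) := hLabs a b
      _ ≤ R := (hR a b).le
  let ψ : ℕ →ᵇ ℝ := ⟨⟨fun k => L k, continuous_of_discreteTopology⟩, hbL⟩
  -- key distance identity
  have key : ∀ m n : ℕ, dist (φ m) (φ n) = dist (x m) (x n) := by
    intro m n
    apply le_antisymm
    · refine (BoundedContinuousFunction.dist_le dist_nonneg).2 fun k => ?_
      calc dist (φ m k) (φ n k) = |dist (x m) (x k) - dist (x n) (x k)| := Real.dist_eq _ _
        _ ≤ dist (x m) (x n) := abs_dist_sub_le _ _ _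
    · have h0 := @BoundedContinuousFunction.dist_coe_le_dist ℕ ℝ _ _ (φ m) (φ n) n
      have e1 : (φ m) n = dist (x m) (x n) := rfl
      have e2 : (φ n) n = dist (x n) (x n) := rfl
      have h1 : dist ((φ m) n) ((φ n) n) = dist (x m) (x n) := by
        rw [e1, e2, dist_self, Real.dist_eq, sub_zero, abs_of_nonneg dist_nonneg]
      linarith
  -- the spaces Y and Z
  let Y : Type u := ULift.{u} {y : ℕ →ᵇ ℝ // ∃ m, φ m = y}
  let Z : Type v := ULift.{v} {z : ℕ →ᵇ ℝ // z = ψ ∨ ∃ m, φ m = z}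
  let i : Y → Z := fun y => ⟨⟨y.down.1, Or.inr y.down.2⟩⟩
  have hi : Isometry i := Isometry.of_dist_eq fun a b => rfl
  let f : Y → X := fun y => x (Classical.choose y.down.2)
  have hf0 : ∀ (y : Y) (m : ℕ), φ m = y.down.1 → f y = x m := by
    intro y m hm
    have hm' : φ (Classical.choose y.down.2) = y.down.1 := Classical.choose_spec y.down.2
    have : dist (x (Classical.choose y.down.2)) (x m) = 0 := by
      rw [← key]; rw [hm', hm]; simp
    exact eq_of_dist_eq_zero this
  have hfd : ∀ a b : Y, dist (f a) (f b) = dist a b := by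
    intro a b
    have ha : φ (Classical.choose a.down.2) = a.down.1 := Classical.choose_spec a.down.2
    have hb' : φ (Classical.choose b.down.2) = b.down.1 := Classical.choose_spec b.down.2
    calc dist (f a) (f b) = dist (φ (Classical.choose a.down.2)) (φ (Classical.choose b.down.2)) :=
          (key _ _).symm
      _ = dist a.down.1 b.down.1 := by rw [ha, hb']
      _ = dist a b := rfl
  have hf : LipschitzWith 1 f :=
    LipschitzWith.of_dist_le_mul fun a b => by rw [hfd]; simp
  obtain ⟨g, hg, hgi⟩ := hX Y Z i f hi hf
  let zinf : Z := ⟨⟨ψ, Or.inl rfl⟩⟩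
  refine ⟨g zinf, ?_⟩
  rw [Metric.tendsto_atTop]
  intro ε hε
  obtain ⟨N, hN⟩ := Metric.cauchySeq_iff.1 hx (ε / 2) (by linarith)
  refine ⟨N, fun m hm => ?_⟩
  have hφψ : dist (φ m) ψ ≤ ε / 2 := by
    refine (BoundedContinuousFunction.dist_le (by linarith)).2 fun k => ?_
    rw [Real.dist_eq]
    have ht : Tendsto (fun j => |dist (x m) (x k) - dist (x j) (x k)|) atTop
        (𝓝 |dist (x m) (x k) - L k|) := (tendsto_const_nhds.sub (hLt k)).abs
    refine le_of_tendsto ht ?_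
    filter_upwards [eventually_ge_atTop N] with j hj
    calc |dist (x m) (x k) - dist (x j) (x k)| ≤ dist (x m) (x j) := abs_dist_sub_le _ _ _
      _ ≤ ε / 2 := (hN m hm j hj).le
  let ym : Y := ⟨⟨φ m, ⟨m, rfl⟩⟩⟩
  have h1 : g (i ym) = x m := by rw [hgi]; exact hf0 ym m rfl
  have h2 : dist (g (i ym)) (g zinf) ≤ dist (i ym) zinf := by
    have := hg.dist_le_mul (i ym) zinf
    simpa using this
  have h3 : dist (i ym) zinf = dist (φ m) ψ := rfl
  calc dist (x m) (g zinf) = dist (g (i ym)) (g zinf) := by rw [h1]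
    _ ≤ dist (i ym) zinf := h2
    _ = dist (φ m) ψ := h3
    _ ≤ ε / 2 := hφψ
    _ < ε := by linarith
end

section
/- Let ι be a finite type and equip the space ι → ℝ with the supremum metric dist(u, v) = max_{i ∈ ι} |u(i) − v(i)|. Then ι → ℝ is hyperconvex: for every family of points (x_k)_{k ∈ K} in ι → ℝ and nonnegative radii (r_k)_{k ∈ K} with dist(x_k, x_l) ≤ r_k + r_l for all k, l ∈ K, there exists z ∈ (ι → ℝ) with dist(z, x_k) ≤ r_k for all k ∈ K. -/
universe u v

/-- For a finite index type `ι`, the space `ι → ℝ` with the supremum metric is hyperconvex: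
every family of pairwise-intersecting closed balls has a common point. -/
theorem pi_real_hyperconvex (ι : Type u) [Fintype ι] (K : Type v)
    (x : K → ι → ℝ) (r : K → ℝ) (hr : ∀ k, 0 ≤ r k)
    (h : ∀ k l, dist (x k) (x l) ≤ r k + r l) :
    ∃ z : ι → ℝ, ∀ k, dist z (x k) ≤ r k := by
  rcases isEmpty_or_nonempty K with hK | hK
  · exact ⟨0, fun k => (hK.false k).elim⟩
  · have key : ∀ (i : ι) (k l : K), x l i - r l ≤ x k i + r k := by
      intro i k l
      have h1 : dist (x k i) (x l i) ≤ dist (x k) (x l) := dist_le_pi_dist (x k) (x l) i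
      have h2 := (h k l).trans' h1
      rw [Real.dist_eq, abs_le] at h2
      linarith [h2.1, h2.2]
    refine ⟨fun i => ⨅ k, (x k i + r k), fun k => ?_⟩
    rw [dist_pi_le_iff (hr k)]
    intro i
    have hbdd : BddBelow (Set.range fun l => x l i + r l) := by
      refine ⟨x (Classical.arbitrary K) i - r (Classical.arbitrary K), ?_⟩
      rintro _ ⟨l, rfl⟩
      exact key i l (Classical.arbitrary K)
    have h1 : (⨅ l, (x l i + r l)) ≤ x k i + r k := ciInf_le hbdd k
    have h2 : x k i - r k ≤ ⨅ l, (x l i + r l) := le_ciInf fun l => key i l k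
    rw [Real.dist_eq, abs_le]
    constructor <;> linarith
end

section
/- Every hyperconvex metric space X is injective: for all metric spaces Y and Z, every isometric embedding i : Y → Z, and every 1-Lipschitz map f : Y → X, there exists a 1-Lipschitz map g : Z → X with g ∘ i = f. -/
universe u w u₁ u₂

/-- A metric space `X` is hyperconvex if for every family of points `x i` and nonnegative
radii `r i` with `dist (x i) (x j) ≤ r i + r j` for all `i, j`, there is a point `z` with
`dist z (x i) ≤ r i` for all `i`. -/
def Hyperconvex (X : Type w) [MetricSpace X] : Prop :=
  ∀ (ι : Type u) (x : ι → X) (r : ι → ℝ), (∀ i, 0 ≤ r i) →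
    (∀ i j, dist (x i) (x j) ≤ r i + r j) → ∃ z : X, ∀ i, dist z (x i) ≤ r i

/-- Every hyperconvex metric space is injective: 1-Lipschitz maps to it extend along
isometric embeddings. -/
theorem hyperconvex_is_injective (X : Type w) [MetricSpace X]
    (hX : Hyperconvex.{u₂} X)
    (Y : Type u₁) (Z : Type u₂) [MetricSpace Y] [MetricSpace Z]
    (i : Y → Z) (f : Y → X) (hi : Isometry i) (hf : LipschitzWith 1 f) :
    ∃ g : Z → X, LipschitzWith 1 g ∧ ∀ y, g (i y) = f y := by
  classical
  -- graphs of partial 1-Lipschitz extensions of f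
  set S : Set (Set (Z × X)) :=
    {G | (∀ p ∈ G, ∀ q ∈ G, dist p.2 q.2 ≤ dist p.1 q.1) ∧ ∀ y, (i y, f y) ∈ G} with hS
  have h0 : (Set.range fun y => (i y, f y)) ∈ S := by
    constructor
    · rintro _ ⟨a, rfl⟩ _ ⟨b, rfl⟩
      simpa [hi.dist_eq] using hf.dist_le_mul a b
    · intro y; exact ⟨y, rfl⟩
  have hchain : ∀ c ⊆ S, IsChain (· ⊆ ·) c → c.Nonempty →
      ∃ ub ∈ S, ∀ s ∈ c, s ⊆ ub := by
    intro c hcS hc ⟨G₀, hG₀⟩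
    refine ⟨⋃₀ c, ⟨?_, ?_⟩, fun s hs => Set.subset_sUnion_of_mem hs⟩
    · rintro p ⟨A, hA, hpA⟩ q ⟨B, hB, hqB⟩
      rcases hc.total hA hB with h | h
      · exact (hcS hB).1 p (h hpA) q hqB
      · exact (hcS hA).1 p hpA q (h hqB)
    · intro y
      exact ⟨G₀, hG₀, (hcS hG₀).2 y⟩
  obtain ⟨G, -, hGS, hGmax⟩ := zorn_subset_nonempty S hchain _ h0
  -- functionality of G
  have hfun : ∀ z x x', (z, x) ∈ G → (z, x') ∈ G → x = x' := by
    intro z x x' h1 h2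
    have := hGS.1 (z, x) h1 (z, x') h2
    simp only [dist_self] at this
    exact dist_le_zero.1 this
  -- G is total
  have htot : ∀ z : Z, ∃ x : X, (z, x) ∈ G := by
    intro z
    by_contra hz
    push_neg at hz
    -- extend at z using hyperconvexity
    set D : Set Z := {s | ∃ x, (s, x) ∈ G} with hD
    have hval : ∀ s : D, (s.1, Classical.choose s.2) ∈ G := fun s => Classical.choose_spec s.2
    have hside : ∀ s t : D, dist (Classical.choose s.2) (Classical.choose t.2) ≤
        dist z s.1 + dist z t.1 := by
      intro s t
      calc dist (Classical.choose s.2) (Classical.choose t.2) ≤ dist s.1 t.1 :=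
            hGS.1 _ (hval s) _ (hval t)
        _ ≤ dist s.1 z + dist z t.1 := dist_triangle _ _ _
        _ = dist z s.1 + dist z t.1 := by rw [dist_comm s.1 z]
    obtain ⟨w, hw⟩ := hX D (fun s => Classical.choose s.2) (fun s => dist z s.1)
      (fun s => dist_nonneg) hside
    have hG' : insert (z, w) G ∈ S := by
        constructor
        · rintro p (rfl | hp) q (rfl | hq)
          · simp
          · -- p = (z, w), q ∈ G
            have hq' : (q.1, q.2) ∈ G := hq
            set sq : D := ⟨q.1, ⟨q.2, hq'⟩⟩ with hsq
            have heq : q.2 = Classical.choose sq.2 := hfun q.1 _ _ hq' (hval sq)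
            calc dist w q.2 = dist w (Classical.choose sq.2) := by rw [← heq]
              _ ≤ dist z q.1 := hw sq
          · have hp' : (p.1, p.2) ∈ G := hp
            set sp : D := ⟨p.1, ⟨p.2, hp'⟩⟩ with hsp
            have heq : p.2 = Classical.choose sp.2 := hfun p.1 _ _ hp' (hval sp)
            have h1 : dist w p.2 ≤ dist z p.1 := by
              rw [heq]; exact hw sp
            simpa [dist_comm] using h1
          · exact hGS.1 p hp q hq
        · intro y; exact Set.mem_insert_of_mem _ (hGS.2 y)
    have : insert (z, w) G ⊆ G := hGmax hG' (Set.subset_insert _ _)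
    exact hz w (this (Set.mem_insert _ _))
  -- define g
  choose g hg using htot
  refine ⟨g, ?_, ?_⟩
  · apply LipschitzWith.of_dist_le_mul
    intro a b
    simpa using hGS.1 (a, g a) (hg a) (b, g b) (hg b)
  · intro y
    exact hfun (i y) _ _ (hg (i y)) (hGS.2 y)
end

section
/- Let X be a metric space, let l : ℝ → X be a geodesic line, let π : X → ℝ be a nearest-point projection to l, and suppose l is D-strongly contracting with respect to π for some D ≥ 0. Let x, y ∈ X with |π(x) − π(y)| > 5D, and let γ : [0, dist(x,y)] → X be a geodesic from x to y. Then for every t ∈ ℝ lying between π(x) and π(y), the point l(t) lies in the 6D-neighborhood of the image of γ: infDist(l(t), range(γ)) ≤ 6D. -/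
/-- `π : X → ℝ` is a nearest-point projection to the line `l : ℝ → X` if `l (π x)` realizes
the distance from `x` to the range of `l`. -/
def IsNearestPointProj {X : Type*} [MetricSpace X] (l : ℝ → X) (π : X → ℝ) : Prop :=
  ∀ x : X, dist x (l (π x)) = Metric.infDist x (Set.range l)

/-- The line `l` is `D`-strongly contracting with respect to `π` if every closed ball
disjoint from the range of `l` has `π`-image of diameter at most `D`. -/
def StronglyContracting {X : Type*} [MetricSpace X] (l : ℝ → X) (π : X → ℝ) (D : ℝ) : Prop :=
  ∀ (c : X) (ρ : ℝ), Metric.closedBall c ρ ∩ Set.range l = ∅ →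
    Metric.diam (π '' Metric.closedBall c ρ) ≤ D

open Metric Set

namespace SCB

set_option maxHeartbeats 1600000

lemma chain_lemma (L D : ℝ) (hD : 0 < D) (g r : ℝ → ℝ)
    (hdrift : ∀ s ∈ Icc (0:ℝ) L, ∀ s' ∈ Icc (0:ℝ) L, |s' - s| < r s → |g s' - g s| ≤ D)
    (hH : ∀ s ∈ Icc (0:ℝ) L, 6 * D < r s + |g s|)
    (a θ cl : ℝ) (ha : 0 ≤ a) (h1 : a < θ) (h2 : θ ≤ cl) (h3 : cl ≤ L)
    (hmid : ∀ s, a ≤ s → s < θ → 2 * D < r s) :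
    ∃ (M : ℕ) (u w : ℝ), 1 ≤ M ∧ a ≤ u ∧ u < θ ∧ θ ≤ w ∧ w ≤ cl ∧
      |g u - g a| ≤ ((M : ℝ) - 1) * D ∧ |g w - g u| ≤ D ∧
      (2 ≤ M → 15 * D / 8 * ((M : ℝ) - 1) + max (r a - 2 * D) 0 ≤ u - a) ∧
      (∀ c : ℝ, g a ≤ c → c + D < g u →
        15 * D / 8 * ((M : ℝ) - 1) + max (r a - 2 * D) 0 + (4 * D - max |c| |c + D|) ≤ u - a) := by
  classical
  set φ : ℝ := 15 * D / 8 with hφ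
  have hφpos : 0 < φ := by positivity
  set st : ℝ → ℝ := fun s => max (r s - D / 8) φ with hstdef
  have hstφ : ∀ s, φ ≤ st s := fun s => le_max_right _ _
  have hstpos : ∀ s, 0 < st s := fun s => lt_of_lt_of_le hφpos (hstφ s)
  set σ : ℕ → ℝ := fun k => Nat.rec a (fun _ ih => min cl (ih + st ih)) k with hσdef
  have hσ0 : σ 0 = a := rfl
  have hσS : ∀ k, σ (k + 1) = min cl (σ k + st (σ k)) := fun k => rfl
  have hσcl : ∀ k, σ k ≤ cl := by
    intro k; induction k with
    | zero => rw [hσ0]; linarith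
    | succ n ih => rw [hσS]; exact min_le_left _ _
  have hσmono : ∀ k, σ k ≤ σ (k + 1) := by
    intro k; rw [hσS]
    exact le_min (hσcl k) (by nlinarith [hstpos (σ k)])
  have hσmono' : Monotone σ := monotone_nat_of_le_succ hσmono
  have hσa : ∀ k, a ≤ σ k := fun k => hσ0 ▸ hσmono' (Nat.zero_le k)
  have hσIcc : ∀ k, σ k ∈ Icc (0:ℝ) L := fun k => ⟨le_trans ha (hσa k), le_trans (hσcl k) h3⟩
  have hstep_ub : ∀ k, σ (k+1) - σ k ≤ st (σ k) := by
    intro k; rw [hσS]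
    have := min_le_right cl (σ k + st (σ k)); linarith
  -- arrival
  have harr : ∃ k, θ ≤ σ k := by
    by_contra hcon
    push_neg at hcon
    have hfull : ∀ k, σ (k + 1) = σ k + st (σ k) := by
      intro k
      rcases min_cases cl (σ k + st (σ k)) with ⟨hmin, _⟩ | ⟨hmin, _⟩
      · exfalso
        have h5 : σ (k+1) = cl := by rw [hσS, hmin]
        have := hcon (k+1); rw [h5] at this; linarith
      · rw [hσS, hmin]
    have hgrow : ∀ k, a + k * φ ≤ σ k := by
      intro k; induction k with
      | zero => rw [hσ0]; simp
      | succ n ih =>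
        rw [hfull n]; push_cast
        have := hstφ (σ n); nlinarith
    obtain ⟨n, hn⟩ := exists_nat_gt ((θ - a) / φ)
    have h6 : θ - a < n * φ := by
      calc θ - a = (θ - a) / φ * φ := by field_simp
      _ < n * φ := by exact mul_lt_mul_of_pos_right hn hφpos
    have := hgrow n
    have := hcon n
    linarith
  set M := Nat.find harr with hMdef
  have hMspec : θ ≤ σ M := Nat.find_spec harr
  have hMlt : ∀ k < M, σ k < θ := fun k hk => lt_of_not_ge (Nat.find_min harr hk)
  have hM1 : 1 ≤ M := by
    rcases Nat.eq_zero_or_pos M with h | h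
    · exfalso; rw [h, hσ0] at hMspec; linarith
    · exact h
  have hstep_lt : ∀ k < M, st (σ k) < r (σ k) := by
    intro k hk
    have h2D := hmid (σ k) (hσa k) (hMlt k hk)
    apply max_lt
    · linarith
    · rw [hφ]; linarith
  have hdstep : ∀ k < M, |g (σ (k+1)) - g (σ k)| ≤ D := by
    intro k hk
    apply hdrift (σ k) (hσIcc k) (σ (k+1)) (hσIcc (k+1))
    rw [abs_of_nonneg (by linarith [hσmono k])]
    exact lt_of_le_of_lt (hstep_ub k) (hstep_lt k hk)
  have hfullstep : ∀ k, k + 1 < M → σ (k+1) = σ k + st (σ k) := by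
    intro k hk
    rcases min_cases cl (σ k + st (σ k)) with ⟨hmin, _⟩ | ⟨hmin, _⟩
    · exfalso
      have h5 : σ (k+1) = cl := by rw [hσS, hmin]
      have := hMlt (k+1) hk
      rw [h5] at this; linarith
    · rw [hσS, hmin]
  have hcum : ∀ k, k ≤ M - 1 → |g (σ k) - g a| ≤ (k : ℝ) * D := by
    intro k
    induction k with
    | zero => intro _; rw [hσ0]; simp
    | succ n ih =>
      intro hn
      have hn' : n ≤ M - 1 := le_trans (Nat.le_succ n) hn
      have hlt : n < M := by omega
      have hd1 := hdstep n hlt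
      have hd2 := ih hn'
      calc |g (σ (n+1)) - g a| ≤ |g (σ (n+1)) - g (σ n)| + |g (σ n) - g a| := abs_sub_le _ _ _
      _ ≤ D + (n : ℝ) * D := add_le_add hd1 hd2
      _ = ((n+1 : ℕ) : ℝ) * D := by push_cast; ring
  have hcount : ∀ i k, i + k ≤ M - 1 → φ * k ≤ σ (i + k) - σ i := by
    intro i k
    induction k with
    | zero => intro _; simp
    | succ n ih =>
      intro h
      have h' : i + n ≤ M - 1 := by omega
      have hfs : σ (i+n+1) = σ (i+n) + st (σ (i+n)) := hfullstep _ (by omega)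
      have h8 := hstφ (σ (i+n))
      have h9 := ih h'
      have h10 : i + (n+1) = (i + n) + 1 := by omega
      rw [h10, hfs]
      push_cast
      nlinarith
  have hstart : 1 ≤ M - 1 → φ + max (r a - 2*D) 0 ≤ σ 1 - a := by
    intro h
    have hfs : σ 1 = a + st a := by
      have := hfullstep 0 (by omega); rw [hσ0] at this; simpa using this
    rw [hfs]
    have h11 : φ + max (r a - 2*D) 0 ≤ st a := by
      rcases le_or_gt (r a - 2*D) 0 with h' | h'
      · rw [max_eq_right h']; simpa using hstφ a
      · rw [max_eq_left h'.le]
        have := le_max_left (r a - D/8) φ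
        rw [hstdef]; simp only []
        rw [hφ] at *; nlinarith
    linarith
  refine ⟨M, σ (M-1), σ M, hM1, hσa _, hMlt _ (by omega), hMspec, hσcl _, ?_, ?_, ?_, ?_⟩
  · have := hcum (M-1) le_rfl
    have hcast : ((M - 1 : ℕ) : ℝ) = (M : ℝ) - 1 := by
      have : (1:ℕ) ≤ M := hM1
      push_cast [Nat.cast_sub this]; ring
    rwa [hcast] at this
  · have hMM : M - 1 + 1 = M := by omega
    have := hdstep (M-1) (by omega)
    rwa [hMM] at this
  · intro hM2
    have hpc1 : φ * ((M : ℝ) - 1 - 1) ≤ σ (M-1) - σ 1 := by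
      have := hcount 1 (M - 2) (by omega)
      have h12 : 1 + (M - 2) = M - 1 := by omega
      rw [h12] at this
      have hcast : ((M - 2 : ℕ) : ℝ) = (M : ℝ) - 2 := by
        push_cast [Nat.cast_sub (by omega : (2:ℕ) ≤ M)]; ring
      rw [hcast] at this; linarith
    have hpc2 := hstart (by omega)
    linarith
  · intro c hc1 hc2
    have hP0 : g (σ 0) ≤ c := by rw [hσ0]; exact hc1
    set e := Nat.findGreatest (fun m => g (σ m) ≤ c) (M-1) with hedef
    have heP : g (σ e) ≤ c := Nat.findGreatest_spec (P := fun m => g (σ m) ≤ c) (Nat.zero_le _) hP0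
    have heM : e ≤ M - 1 := Nat.findGreatest_le (P := fun m => g (σ m) ≤ c) _
    have heneq : e ≠ M - 1 := by
      intro h
      rw [h] at heP
      linarith
    have he1 : e + 1 ≤ M - 1 := by omega
    have hnP : ¬ (g (σ (e+1)) ≤ c) := Nat.findGreatest_is_greatest (P := fun m => g (σ m) ≤ c) (by omega) he1
    have hgel : c < g (σ (e+1)) := lt_of_not_ge hnP
    have hgeu : g (σ (e+1)) ≤ c + D := by
      have hd := hdstep e (by omega)
      have h13 : g (σ (e+1)) - g (σ e) ≤ D := le_trans (le_abs_self _) hd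
      linarith
    have hene : e + 1 ≠ M - 1 := by
      intro h; rw [h] at hgeu; linarith
    have he2 : e + 1 ≤ M - 2 := by omega
    have habs : |g (σ (e+1))| ≤ max |c| |c + D| := by
      rcases le_or_gt 0 (g (σ (e+1))) with h | h
      · rw [abs_of_nonneg h]
        exact le_trans hgeu (le_trans (le_abs_self _) (le_max_right _ _))
      · rw [abs_of_neg h]
        have h14 : -g (σ (e+1)) < -c := by linarith
        exact le_trans h14.le (le_trans (neg_le_abs c) (le_max_left _ _))
    have hrspec : 6*D - max |c| |c+D| < r (σ (e+1)) := by
      have := hH (σ (e+1)) (hσIcc (e+1))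
      linarith
    -- pieces
    have hpiece1 : φ * ((M:ℝ) - 1 - (e+2)) ≤ σ (M-1) - σ (e+2) := by
      have harg : (e+2) + (M - 1 - (e+2)) ≤ M - 1 := by omega
      have := hcount _ _ harg
      have h15 : e + 2 + (M - 1 - (e+2)) = M - 1 := by omega
      rw [h15] at this
      have hcast : ((M - 1 - (e+2) : ℕ) : ℝ) = (M:ℝ) - 1 - (e+2) := by
        have hle : e + 2 ≤ M - 1 := by omega
        push_cast [Nat.cast_sub hle, Nat.cast_sub hM1]
        ring
      rw [hcast] at this; linarith
    have hpiece2 : φ + (4*D - max |c| |c+D|) ≤ σ (e+2) - σ (e+1) := by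
      have hfs : σ (e+1+1) = σ (e+1) + st (σ (e+1)) := hfullstep (e+1) (by omega)
      have h16 : r (σ (e+1)) - D/8 ≤ st (σ (e+1)) := le_max_left _ _
      have h17 : σ (e+2) = σ (e+1) + st (σ (e+1)) := by
        have : e + 2 = e + 1 + 1 := by omega
        rw [this]; exact hfs
      rw [h17, hφ]
      have := hrspec
      nlinarith
    have hpiece3 : φ * (e:ℝ) ≤ σ (e+1) - σ 1 := by
      have := hcount 1 e (by omega)
      have h18 : 1 + e = e + 1 := by omega
      rw [h18] at this; linarith
    have hpiece4 : φ + max (r a - 2*D) 0 ≤ σ 1 - a := hstart (by omega)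
    have : φ * ((M:ℝ) - 1 - (e+2)) + (φ + (4*D - max |c| |c+D|)) + φ * (e:ℝ) + (φ + max (r a - 2*D) 0) ≤ σ (M-1) - a := by
      linarith
    calc 15 * D / 8 * ((M : ℝ) - 1) + max (r a - 2 * D) 0 + (4 * D - max |c| |c + D|)
        = φ * ((M:ℝ) - 1 - (e+2)) + (φ + (4*D - max |c| |c+D|)) + φ * (e:ℝ) + (φ + max (r a - 2*D) 0) := by rw [hφ]; ring
      _ ≤ σ (M-1) - a := this


/-- Master lemma: x-side is a "cap" (chain starts at `0`), right side has a near anchor `q`. -/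
lemma master_cap_anchor (L D : ℝ) (hD : 0 < D) (g r : ℝ → ℝ)
    (hdrift : ∀ s ∈ Icc (0:ℝ) L, ∀ s' ∈ Icc (0:ℝ) L, |s' - s| < r s → |g s' - g s| ≤ D)
    (hH : ∀ s ∈ Icc (0:ℝ) L, 6 * D < r s + |g s|)
    (hA3 : ∀ s ∈ Icc (0:ℝ) L, ∀ s' ∈ Icc (0:ℝ) L, |s - s'| ≤ r s + |g s - g s'| + r s')
    (q : ℝ) (h0q : 0 < q) (hqL : q ≤ L)
    (hmid : ∀ s, 0 ≤ s → s < q → 2 * D < r s)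
    (hrq : r q ≤ 2 * D) (hgq : 4 * D < g q) (hg0 : g 0 ≤ 0) : False := by
  obtain ⟨M, u, w, hM1, hau, huθ, hθw, hwcl, hdr, hhop, -, hE⟩ :=
    chain_lemma L D hD g r hdrift hH 0 q q le_rfl h0q le_rfl hqL hmid
  have hwq : w = q := le_antisymm hwcl hθw
  rw [hwq] at hhop
  have h0L : (0:ℝ) ∈ Icc (0:ℝ) L := ⟨le_rfl, le_trans h0q.le hqL⟩
  have hqmem : q ∈ Icc (0:ℝ) L := ⟨h0q.le, hqL⟩
  -- drift total
  have hMT : g q - g 0 ≤ (M:ℝ) * D := by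
    have h1 : g q - g u ≤ D := le_trans (le_abs_self _) hhop
    have h2 : g u - g 0 ≤ ((M:ℝ) - 1) * D := le_trans (le_abs_self _) hdr
    linarith
  -- E-count with c = D/2
  have hgu : 3 * D < g u := by
    have : g q - g u ≤ D := le_trans (le_abs_self _) hhop
    linarith
  have hcnt := hE (D/2) (by linarith) (by linarith)
  have hmax : max |D/2| |D/2 + D| = 3*D/2 := by
    rw [abs_of_pos (by linarith), abs_of_pos (by linarith)]
    rw [max_eq_right (by linarith)]
    ring
  rw [hmax] at hcnt
  have hA3q := hA3 0 h0L q hqmem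
  have habs0q : |(0:ℝ) - q| = q := by rw [abs_sub_comm, sub_zero]; exact abs_of_pos h0q
  have habsg : |g 0 - g q| = g q - g 0 := by rw [abs_sub_comm]; apply abs_of_pos; linarith
  rw [habs0q, habsg] at hA3q
  have hmaxr0 : r 0 - 2*D ≤ max (r 0 - 2*D) 0 := le_max_left _ _
  have huq : u ≤ q := huθ.le
  have hXeq : 15*D/8*((M:ℝ)-1) = 15/8*((M:ℝ)*D) - 15*D/8 := by ring
  linarith

/-- Master lemma: both sides have near anchors `p < q`. -/
lemma master_anchor_anchor (L D : ℝ) (hD : 0 < D) (g r : ℝ → ℝ)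
    (hdrift : ∀ s ∈ Icc (0:ℝ) L, ∀ s' ∈ Icc (0:ℝ) L, |s' - s| < r s → |g s' - g s| ≤ D)
    (hH : ∀ s ∈ Icc (0:ℝ) L, 6 * D < r s + |g s|)
    (hA2 : ∀ s ∈ Icc (0:ℝ) L, ∀ s' ∈ Icc (0:ℝ) L, |g s - g s'| ≤ r s + r s' + |s - s'|)
    (hA3 : ∀ s ∈ Icc (0:ℝ) L, ∀ s' ∈ Icc (0:ℝ) L, |s - s'| ≤ r s + |g s - g s'| + r s')
    (hrLip : ∀ s ∈ Icc (0:ℝ) L, ∀ s' ∈ Icc (0:ℝ) L, |r s - r s'| ≤ |s - s'|)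
    (p q : ℝ) (hpmem : p ∈ Icc (0:ℝ) L) (hqmem : q ∈ Icc (0:ℝ) L) (hpq : p ≤ q)
    (hmid : ∀ s, p < s → s < q → 2 * D < r s)
    (hrp : r p ≤ 2 * D) (hgp : g p < -(4*D))
    (hrq : r q ≤ 2 * D) (hgq : 4 * D < g q) : False := by
  -- q - p > 4D
  have hA2pq := hA2 p hpmem q hqmem
  have habsg : |g p - g q| = g q - g p := by rw [abs_sub_comm]; apply abs_of_pos; linarith
  have habspq : |p - q| = q - p := by rw [abs_sub_comm]; exact abs_of_nonneg (by linarith)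
  rw [habsg, habspq] at hA2pq
  have hgap : 4 * D < q - p := by linarith
  set a := p + D with hadef
  clear_value a
  have hamem : a ∈ Icc (0:ℝ) L := ⟨by have := hpmem.1; linarith, by have := hqmem.2; linarith⟩
  have hra : 2 * D < r a := hmid a (by linarith) (by linarith)
  have hga : |g p - g a| ≤ D := by
    have := hdrift a hamem p hpmem (by
      rw [show |p - a| = D by rw [hadef]; rw [abs_sub_comm]; simp [abs_of_pos hD]]
      linarith)
    exact this
  have hgaub : g a < -(3*D) := by
    have : g a - g p ≤ D := le_trans (le_abs_self _) (by rw [abs_sub_comm] at hga; exact hga)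
    linarith
  obtain ⟨M, u, w, hM1, hau, huθ, hθw, hwcl, hdr, hhop, -, hE⟩ :=
    chain_lemma L D hD g r hdrift hH a q q (hamem.1) (by linarith) le_rfl hqmem.2
      (fun s hs hs' => hmid s (by linarith) hs')
  have hwq : w = q := le_antisymm hwcl hθw
  rw [hwq] at hhop
  have hMT : g q - g a ≤ (M:ℝ) * D := by
    have h1 : g q - g u ≤ D := le_trans (le_abs_self _) hhop
    have h2 : g u - g a ≤ ((M:ℝ) - 1) * D := le_trans (le_abs_self _) hdr
    linarith
  have hgu : 3 * D < g u := by
    have : g q - g u ≤ D := le_trans (le_abs_self _) hhop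
    linarith
  have hcnt := hE (D/2) (by linarith) (by linarith)
  have hmax : max |D/2| |D/2 + D| = 3*D/2 := by
    rw [abs_of_pos (by linarith), abs_of_pos (by linarith)]
    rw [max_eq_right (by linarith)]
    ring
  rw [hmax] at hcnt
  have hA3aq := hA3 a hamem q hqmem
  have habsaq : |a - q| = q - a := by rw [abs_sub_comm]; exact abs_of_nonneg (by linarith)
  have habsg2 : |g a - g q| = g q - g a := by rw [abs_sub_comm]; apply abs_of_pos; linarith
  rw [habsaq, habsg2] at hA3aq
  have hralip : r a ≤ 3 * D := by
    have := hrLip a hamem p hpmem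
    rw [show |a - p| = D by rw [hadef]; simp [abs_of_pos hD]] at this
    have := le_trans (le_abs_self _) this
    linarith
  have hmaxra : (0:ℝ) ≤ max (r a - 2*D) 0 := le_max_right _ _
  have hXeq : 15*D/8*((M:ℝ)-1) = 15/8*((M:ℝ)*D) - 15*D/8 := by ring
  linarith

/-- Master lemma: both sides are caps. -/
lemma master_cap_cap (L D : ℝ) (hD : 0 < D) (g r : ℝ → ℝ)
    (hdrift : ∀ s ∈ Icc (0:ℝ) L, ∀ s' ∈ Icc (0:ℝ) L, |s' - s| < r s → |g s' - g s| ≤ D)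
    (hH : ∀ s ∈ Icc (0:ℝ) L, 6 * D < r s + |g s|)
    (hA3 : ∀ s ∈ Icc (0:ℝ) L, ∀ s' ∈ Icc (0:ℝ) L, |s - s'| ≤ r s + |g s - g s'| + r s')
    (hL : 0 ≤ L)
    (hr0 : 2 * D < r 0) (hrL : 2 * D < r L)
    (hmid : ∀ s, 0 < s → s < L → 2 * D < r s)
    (hg0 : g 0 ≤ 0) (hgL : 0 ≤ g L) (hsep : 5 * D < g L - g 0) : False := by
  have h0mem : (0:ℝ) ∈ Icc (0:ℝ) L := ⟨le_rfl, hL⟩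
  have hLmem : L ∈ Icc (0:ℝ) L := ⟨hL, le_rfl⟩
  set t₁ := L - (r L - D/8) with ht₁def
  clear_value t₁
  rcases le_or_gt t₁ 0 with ht₁0 | ht₁0
  · -- x inside the y-window
    rw [ht₁def] at ht₁0
    have hd : |(0:ℝ) - L| < r L := by
      rw [abs_sub_comm, sub_zero, abs_of_nonneg hL]; linarith
    have h4 := hdrift L hLmem 0 h0mem hd
    rw [abs_sub_comm] at h4
    have : g L - g 0 ≤ D := le_trans (le_abs_self _) h4
    linarith
  · have ht₁L : t₁ < L := by rw [ht₁def]; nlinarith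
    have ht₁mem : t₁ ∈ Icc (0:ℝ) L := ⟨ht₁0.le, ht₁L.le⟩
    have hpin1 : |g t₁ - g L| ≤ D := by
      have := hdrift L hLmem t₁ ht₁mem (by
        rw [show |t₁ - L| = r L - D/8 by rw [ht₁def]; rw [abs_sub_comm]; rw [abs_of_nonneg (by linarith)]; ring]
        linarith)
      exact this
    have hrt₁2 : 2 * D < r t₁ := hmid t₁ ht₁0 ht₁L
    have hrt₁H : 5 * D - g L < r t₁ := by
      have hh := hH t₁ ht₁mem
      have : |g t₁| ≤ g L + D := by
        have h1 := le_trans (le_abs_self _) hpin1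
        have h2 := le_trans (neg_le_abs _) hpin1
        rw [abs_le]; constructor <;> nlinarith [abs_nonneg (g L), abs_of_nonneg hgL]
      linarith
    set ρ := max (2*D) (5*D - g L) with hρdef
    clear_value ρ
    have hρrt₁ : ρ < r t₁ := by rw [hρdef]; exact max_lt hrt₁2 hrt₁H
    set θ := t₁ - (r t₁ - D/8) with hθdef
    clear_value θ
    have hθt₁ : θ < t₁ := by rw [hθdef]; linarith
    rcases le_or_gt θ 0 with hθ0 | hθ0
    · -- 0 in second window layer
      have hd : |(0:ℝ) - t₁| < r t₁ := by
        rw [abs_sub_comm, sub_zero, abs_of_nonneg ht₁0.le]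
        rw [hθdef] at hθ0; linarith
      have h5 := hdrift t₁ ht₁mem 0 h0mem hd
      rw [abs_sub_comm] at h5
      have h6 : g t₁ - g 0 ≤ D := le_trans (le_abs_self _) h5
      have h7 : g L - g t₁ ≤ D := by
        have := le_trans (neg_le_abs _) hpin1; linarith
      linarith
    · -- main chain
      obtain ⟨M, u, w, hM1, hau, huθ, hθw, hwcl, hdr, hhop, hWeak, hE⟩ :=
        chain_lemma L D hD g r hdrift hH 0 θ L le_rfl hθ0 (by linarith) le_rfl
          (fun s hs hs' => by
            rcases eq_or_lt_of_le hs with h | h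
            · rw [← h]; exact hr0
            · exact hmid s h (by linarith))
      -- zone pin for w
      have hwmem : w ∈ Icc (0:ℝ) L := ⟨by linarith, hwcl⟩
      have hzonew : |g w - g L| ≤ 2 * D := by
        rcases le_or_gt w t₁ with hwt | hwt
        · have hd : |w - t₁| < r t₁ := by
            rw [abs_sub_comm, abs_of_nonneg (by linarith)]
            rw [hθdef] at hθw; nlinarith
          have h5 := hdrift t₁ ht₁mem w hwmem hd
          calc |g w - g L| ≤ |g w - g t₁| + |g t₁ - g L| := abs_sub_le _ _ _
            _ ≤ D + D := add_le_add h5 hpin1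
            _ = 2 * D := by ring
        · have hd : |w - L| < r L := by
            rw [abs_sub_comm, abs_of_nonneg (by linarith)]
            rw [ht₁def] at hwt; nlinarith
          have h5 := hdrift L hLmem w hwmem hd
          have := le_trans (le_abs_self _) h5
          calc |g w - g L| ≤ D := h5
            _ ≤ 2 * D := by linarith
      set v := g u with hvdef
      clear_value v
      have hvw : |g w - v| ≤ D := hhop
      have hvL : |v - g L| ≤ 3 * D := by
        calc |v - g L| ≤ |v - g w| + |g w - g L| := abs_sub_le _ _ _
          _ ≤ D + 2 * D := add_le_add (by rw [abs_sub_comm]; exact hvw) hzonew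
          _ = 3 * D := by ring
      have hMT : g L - g 0 - 3 * D ≤ ((M:ℝ) - 1) * D := by
        have h1 : v - g 0 ≤ ((M:ℝ)-1) * D := le_trans (le_abs_self _) hdr
        have h2 : g L - v ≤ 3 * D := by
          have := neg_le_abs (v - g L); linarith [hvL]
        linarith
      have hM3 : (3:ℝ) < (M:ℝ) := by
        have h3 : 2 * D < ((M:ℝ) - 1) * D := by linarith
        by_contra hcon
        push_neg at hcon
        have : ((M:ℝ) - 1) * D ≤ 2 * D :=
          mul_le_mul_of_nonneg_right (by linarith) hD.le
        linarith
      have hM2 : 2 ≤ M := by exact_mod_cast (by linarith : (2:ℝ) ≤ (M:ℝ))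
      -- F bound
      have hF : r L + ρ - D/4 < L - u := by
        have h5a : L - t₁ = r L - D/8 := by rw [ht₁def]; ring
        have h5b : t₁ - θ = r t₁ - D/8 := by rw [hθdef]; ring
        linarith
      -- A3 global
      have hA3g := hA3 0 h0mem L hLmem
      have habs1 : |(0:ℝ) - L| = L := by rw [abs_sub_comm, sub_zero, abs_of_nonneg hL]
      have habs2 : |g 0 - g L| = g L - g 0 := by rw [abs_sub_comm]; apply abs_of_pos; linarith
      rw [habs1, habs2] at hA3g
      have hmaxr0 : r 0 - 2*D ≤ max (r 0 - 2*D) 0 := le_max_left _ _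
      have hXeq : 15*D/8*((M:ℝ)-1) = 15/8*(((M:ℝ)-1)*D) := by ring
      -- case analysis on E
      rcases le_or_gt (g L) (3*D/2) with hcase | hcase
      · -- case A : ρ ≥ 7D/2, no E needed
        have hρ : 7*D/2 ≤ ρ := by rw [hρdef]; exact le_trans (by linarith) (le_max_right (2*D) (5*D - g L))
        have hcnt := hWeak hM2
        linarith
      · rcases lt_or_ge v D with hv | hv
        · -- case B : c = v - 3D/2
          have hvlb : g L - 3*D ≤ v := by
            have := le_trans (neg_le_abs _) hvL; linarith
          have hcnt := hE (v - 3*D/2) (by linarith) (by linarith)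
          have hmax : max |v - 3*D/2| |v - 3*D/2 + D| = 3*D/2 - v := by
            have h8 : |v - 3*D/2| = 3*D/2 - v := by rw [abs_of_neg (by linarith)]; ring
            have h9 : |v - 3*D/2 + D| ≤ 3*D/2 - v := by
              rw [abs_le]; constructor <;> linarith
            rw [h8, max_eq_left h9]
          rw [hmax] at hcnt
          have hρ2 : 5*D - g L ≤ ρ := by rw [hρdef]; exact le_max_right _ _
          linarith
        · rcases le_or_gt (g L) (9*D/2) with hcase2 | hcase2
          · -- case C : c = -D/2
            have hg0' : g 0 ≤ -(D/2) := by linarith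
            have hcnt := hE (-(D/2)) hg0' (by linarith)
            have hmax : max |(-(D/2))| |(-(D/2)) + D| = D/2 := by
              rw [abs_neg, abs_of_pos (by linarith), show -(D/2) + D = D/2 by ring,
                abs_of_pos (by linarith), max_self]
            rw [hmax] at hcnt
            have hρ2 : 2*D ≤ ρ := by rw [hρdef]; exact le_max_left _ _
            linarith
          · -- case D : c = D/2
            have hvlb : g L - 3*D ≤ v := by
              have := le_trans (neg_le_abs _) hvL; linarith
            have hcnt := hE (D/2) (by linarith) (by linarith)
            have hmax : max |D/2| |D/2 + D| = 3*D/2 := by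
              rw [abs_of_pos (by linarith), abs_of_pos (by linarith)]
              rw [max_eq_right (by linarith)]; ring
            rw [hmax] at hcnt
            have hρ2 : 2*D ≤ ρ := by rw [hρdef]; exact le_max_left _ _
            linarith


/-- the degenerate case `D = 0`. -/
lemma master_zero (L : ℝ) (hL : 0 ≤ L) (g r : ℝ → ℝ)
    (hrpos : ∀ s ∈ Icc (0:ℝ) L, 0 ≤ r s)
    (hrLip : ∀ s ∈ Icc (0:ℝ) L, ∀ s' ∈ Icc (0:ℝ) L, |r s - r s'| ≤ |s - s'|)
    (hdrift : ∀ s ∈ Icc (0:ℝ) L, ∀ s' ∈ Icc (0:ℝ) L, |s' - s| < r s → g s' = g s)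
    (hA2 : ∀ s ∈ Icc (0:ℝ) L, ∀ s' ∈ Icc (0:ℝ) L, |g s - g s'| ≤ r s + r s' + |s - s'|)
    (p q : ℝ) (hpmem : p ∈ Icc (0:ℝ) L) (hqmem : q ∈ Icc (0:ℝ) L) (hpq : p ≤ q)
    (hmid : ∀ s, p < s → s < q → 0 < r s)
    (hpd : (r p ≤ 0 ∧ g p < 0) ∨ (p = 0 ∧ 0 < r 0))
    (hqd : (r q ≤ 0 ∧ 0 < g q) ∨ (q = L ∧ 0 < r L))
    (hg0 : g 0 ≤ 0) (hgL : 0 ≤ g L) (hsep : 0 < g L - g 0) : False := by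
  -- first : p < q
  have hpltq : p < q := by
    rcases eq_or_lt_of_le hpq with h | h
    · exfalso
      rcases hpd with ⟨_, hgp⟩ | ⟨hp0, _⟩
      · rcases hqd with ⟨_, hgq⟩ | ⟨hqL', _⟩
        · rw [h] at hgp; linarith
        · rw [h, hqL'] at hgp; linarith
      · rcases hqd with ⟨_, hgq⟩ | ⟨hqL', _⟩
        · rw [← h, hp0] at hgq; linarith
        · rw [hp0] at h; rw [← h] at hqL'; rw [← hqL'] at hsep; linarith
    · exact h
  have hmemo : ∀ s, p ≤ s → s ≤ q → s ∈ Icc (0:ℝ) L :=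
    fun s h1 h2 => ⟨le_trans hpmem.1 h1, le_trans h2 hqmem.2⟩
  -- local constancy on (p,q)
  have hconst : ∀ s₁, p < s₁ → s₁ < q → ∀ s₂, s₁ ≤ s₂ → s₂ < q → g s₂ = g s₁ := by
    intro s₁ hs₁p hs₁q s₂ hs₁₂ hs₂q
    set A := {s : ℝ | s ∈ Icc s₁ s₂ ∧ g s = g s₁} with hA
    have hAne : A.Nonempty := ⟨s₁, ⟨le_rfl, hs₁₂⟩, rfl⟩
    have hAbdd : BddAbove A := ⟨s₂, fun z hz => hz.1.2⟩
    set ss := sSup A with hss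
    have hssmem : s₁ ≤ ss ∧ ss ≤ s₂ :=
      ⟨le_csSup hAbdd ⟨⟨le_rfl, hs₁₂⟩, rfl⟩, csSup_le hAne fun z hz => hz.1.2⟩
    have hssIcc : ss ∈ Icc (0:ℝ) L := hmemo ss (le_trans hs₁p.le hssmem.1) (le_trans hssmem.2 hs₂q.le)
    have hrss : 0 < r ss := hmid ss (lt_of_lt_of_le hs₁p hssmem.1) (lt_of_le_of_lt hssmem.2 hs₂q)
    -- g ss = g s₁
    have hgss : g ss = g s₁ := by
      rcases eq_or_lt_of_le hssmem.1 with h | h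
      · rw [← h]
      · obtain ⟨z, hzA, hzlt⟩ := exists_lt_of_lt_csSup hAne (by
          show ss - min (r ss) (ss - s₁) / 2 < sSup A
          rw [← hss]
          have : 0 < min (r ss) (ss - s₁) := lt_min hrss (by linarith)
          linarith)
        have hzss : z ≤ ss := le_csSup hAbdd hzA
        have hzIcc : z ∈ Icc (0:ℝ) L := hmemo z (le_trans hs₁p.le hzA.1.1) (le_trans hzA.1.2 hs₂q.le)
        have : g z = g ss := by
          apply hdrift ss hssIcc z hzIcc
          rw [abs_sub_comm, abs_of_nonneg (by linarith)]
          have h6 : min (r ss) (ss - s₁) ≤ r ss := min_le_left _ _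
          linarith
        rw [← this, hzA.2]
    -- ss = s₂
    rcases eq_or_lt_of_le hssmem.2 with h | h
    · rw [← h]; exact hgss
    · exfalso
      set s' := min s₂ (ss + r ss / 2) with hs'
      have hs'gt : ss < s' := by
        apply lt_min h; linarith
      have hs'le : s' ≤ s₂ := min_le_left _ _
      have hs'Icc : s' ∈ Icc (0:ℝ) L := hmemo s' (le_trans hs₁p.le (le_trans hssmem.1 hs'gt.le)) (le_trans hs'le hs₂q.le)
      have : g s' = g ss := by
        apply hdrift ss hssIcc s' hs'Icc
        rw [abs_of_nonneg (by linarith)]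
        have : s' ≤ ss + r ss / 2 := min_le_right _ _
        linarith
      have hs'A : s' ∈ A := ⟨⟨le_trans hssmem.1 hs'gt.le, hs'le⟩, by rw [this, hgss]⟩
      have := le_csSup hAbdd hs'A
      rw [← hss] at this
      linarith
  -- the constant value
  set m := (p + q) / 2 with hm
  have hmp : p < m := by rw [hm]; linarith
  have hmq : m < q := by rw [hm]; linarith
  set c := g m with hc
  -- value of c from the p side
  have hcp : c ≤ 0 ∧ (((r p ≤ 0 ∧ g p < 0) → c < 0)) := by
    rcases hpd with ⟨hrp, hgp⟩ | ⟨hp0, hr0⟩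
    · -- anchor p : c = g p
      have hrp0 : r p = 0 := le_antisymm hrp (hrpos p hpmem)
      have hcgp : c = g p := by
        by_contra hne
        have hpos : 0 < |c - g p| := by
          rcases lt_or_gt_of_ne hne with h | h
          · rw [abs_of_neg (by linarith)]; linarith
          · rw [abs_of_pos (by linarith)]; linarith
        set ε := |c - g p| / 3 with hε
        have hεpos : 0 < ε := by rw [hε]; linarith
        set s := min m (p + ε) with hsdef
        have hsp : p < s := lt_min hmp (by linarith)
        have hsm : s ≤ m := min_le_left _ _
        have hsq : s < q := lt_of_le_of_lt hsm hmq
        have hsIcc : s ∈ Icc (0:ℝ) L := hmemo s hsp.le hsq.le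
        have hgs : g m = g s := hconst s hsp hsq m hsm hmq
        have hA2ps := hA2 p hpmem s hsIcc
        have hrs : r s ≤ s - p := by
          have := hrLip s hsIcc p hpmem
          have h7 := le_trans (le_abs_self _) this
          rw [abs_of_nonneg (by linarith), hrp0] at h7
          linarith
        have hsps : s - p ≤ ε := by
          have : s ≤ p + ε := min_le_right _ _
          linarith
        rw [hrp0] at hA2ps
        have habsps : |p - s| = s - p := by
          rw [abs_sub_comm]; exact abs_of_nonneg (by linarith)
        rw [habsps] at hA2ps
        have h8 : |g p - g s| ≤ 2 * ε := by linarith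
        have h9 : |c - g p| ≤ |c - g s| + |g s - g p| := abs_sub_le _ _ _
        have h10 : |c - g s| = 0 := by rw [hc, hgs]; simp
        rw [abs_sub_comm] at h8
        rw [h10] at h9
        linarith [h9, h8]
      constructor
      · rw [hcgp]; linarith
      · intro _; rw [hcgp]; exact hgp
    · -- cap p : c = g 0
      have hq0 : 0 < q := by rw [← hp0]; exact hpltq
      set s := min m (r 0 / 2) with hsdef
      have hsp : 0 < s := lt_min (by rw [← hp0]; exact hmp) (by linarith)
      have hsm : s ≤ m := min_le_left _ _
      have hsq : s < q := lt_of_le_of_lt hsm hmq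
      have hsIcc : s ∈ Icc (0:ℝ) L := hmemo s (by rw [hp0]; exact hsp.le) hsq.le
      have h0Icc : (0:ℝ) ∈ Icc (0:ℝ) L := ⟨le_rfl, hL⟩
      have hgs : g m = g s := hconst s (by rw [hp0]; exact hsp) hsq m hsm hmq
      have hg0s : g s = g 0 := by
        apply hdrift 0 h0Icc s hsIcc
        rw [sub_zero, abs_of_nonneg hsp.le]
        have : s ≤ r 0 / 2 := min_le_right _ _
        linarith
      have : c = g 0 := by rw [hc, hgs, hg0s]
      constructor
      · rw [this]; exact hg0
      · rintro ⟨h1, -⟩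
        exfalso
        rw [hp0] at h1
        have := hrpos 0 h0Icc
        linarith
  -- value of c from the q side, and the contradiction
  rcases hqd with ⟨hrq, hgq⟩ | ⟨hqL', hrL⟩
  · -- anchor q : c = g q > 0
    have hrq0 : r q = 0 := le_antisymm hrq (hrpos q hqmem)
    have hcgq : c = g q := by
      by_contra hne
      have hpos : 0 < |c - g q| := by
        rcases lt_or_gt_of_ne hne with h | h
        · rw [abs_of_neg (by linarith)]; linarith
        · rw [abs_of_pos (by linarith)]; linarith
      set ε := |c - g q| / 3 with hε
      have hεpos : 0 < ε := by rw [hε]; linarith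
      set s := max m (q - ε) with hsdef
      have hsq : s < q := max_lt hmq (by linarith)
      have hsm : m ≤ s := le_max_left _ _
      have hsp : p < s := lt_of_lt_of_le hmp hsm
      have hsIcc : s ∈ Icc (0:ℝ) L := hmemo s hsp.le hsq.le
      have hgs : g s = g m := hconst m hmp hmq s hsm hsq
      have hA2qs := hA2 q hqmem s hsIcc
      have hrs : r s ≤ q - s := by
        have := hrLip s hsIcc q hqmem
        have h7 := le_trans (le_abs_self _) this
        have habssq : |s - q| = q - s := by
          rw [abs_sub_comm]; exact abs_of_nonneg (by linarith)
        rw [habssq, hrq0] at h7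
        linarith
      have hsps : q - s ≤ ε := by
        have : q - ε ≤ s := le_max_right _ _
        linarith
      rw [hrq0] at hA2qs
      rw [abs_of_nonneg (by linarith : (0:ℝ) ≤ q - s)] at hA2qs
      have h8 : |g q - g s| ≤ 2 * ε := by linarith
      have h9 : |c - g q| ≤ |c - g s| + |g s - g q| := abs_sub_le _ _ _
      have h10 : |c - g s| = 0 := by rw [hc, hgs]; simp
      rw [abs_sub_comm] at h8
      rw [h10] at h9
      linarith [h9, h8]
    have := hcp.1
    rw [hcgq] at this
    linarith
  · -- cap q : c = g L
    have hpL : p < L := by rw [← hqL']; exact hpltq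
    set s := max m (L - r L / 2) with hsdef
    have hsq : s < L := max_lt (by rw [← hqL']; exact hmq) (by linarith)
    have hsm : m ≤ s := le_max_left _ _
    have hsp : p < s := lt_of_lt_of_le hmp hsm
    have hsIcc : s ∈ Icc (0:ℝ) L := hmemo s hsp.le (by rw [hqL']; exact hsq.le)
    have hLIcc : L ∈ Icc (0:ℝ) L := ⟨hL, le_rfl⟩
    have hgs : g s = g m := hconst m hmp hmq s hsm (by rw [hqL']; exact hsq)
    have hgLs : g s = g L := by
      apply hdrift L hLIcc s hsIcc
      rw [abs_sub_comm, abs_of_nonneg (by linarith)]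
      have : L - r L / 2 ≤ s := le_max_right _ _
      linarith
    have hcL : c = g L := by rw [hc, ← hgs, hgLs]
    -- p side
    rcases hpd with ⟨hrp, hgp⟩ | ⟨hp0, hr0⟩
    · have := (hcp.2 ⟨hrp, hgp⟩)
      rw [hcL] at this
      linarith
    · -- both caps : c = g 0 = g L
      have h1 := hcp.1
      -- reconstruct c = g 0
      -- from the cap-p branch we only kept c ≤ 0; need equality. Redo:
      have hq0 : 0 < q := by rw [← hp0]; exact hpltq
      set s₀ := min m (r 0 / 2) with hs₀def
      have hsp0 : 0 < s₀ := lt_min (by rw [← hp0]; exact hmp) (by linarith)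
      have hsm0 : s₀ ≤ m := min_le_left _ _
      have hsq0 : s₀ < q := lt_of_le_of_lt hsm0 hmq
      have hs₀Icc : s₀ ∈ Icc (0:ℝ) L := hmemo s₀ (by rw [hp0]; exact hsp0.le) hsq0.le
      have h0Icc : (0:ℝ) ∈ Icc (0:ℝ) L := ⟨le_rfl, hL⟩
      have hgs0 : g m = g s₀ := hconst s₀ (by rw [hp0]; exact hsp0) hsq0 m hsm0 hmq
      have hg0s : g s₀ = g 0 := by
        apply hdrift 0 h0Icc s₀ hs₀Icc
        rw [sub_zero, abs_of_nonneg hsp0.le]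
        have : s₀ ≤ r 0 / 2 := min_le_right _ _
        linarith
      have hc0 : c = g 0 := by rw [hc, hgs0, hg0s]
      rw [hcL] at hc0
      linarith


/-- The purely real-variable heart of the bottleneck theorem. -/
theorem abstract_bottleneck (L D : ℝ) (hD : 0 ≤ D) (hL : 0 ≤ L) (g r : ℝ → ℝ)
    (hrpos : ∀ s ∈ Icc (0:ℝ) L, 0 ≤ r s)
    (hrLip : ∀ s ∈ Icc (0:ℝ) L, ∀ s' ∈ Icc (0:ℝ) L, |r s - r s'| ≤ |s - s'|)
    (hdrift : ∀ s ∈ Icc (0:ℝ) L, ∀ s' ∈ Icc (0:ℝ) L, |s' - s| < r s → |g s' - g s| ≤ D)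
    (hA2 : ∀ s ∈ Icc (0:ℝ) L, ∀ s' ∈ Icc (0:ℝ) L, |g s - g s'| ≤ r s + r s' + |s - s'|)
    (hA3 : ∀ s ∈ Icc (0:ℝ) L, ∀ s' ∈ Icc (0:ℝ) L, |s - s'| ≤ r s + |g s - g s'| + r s')
    (hH : ∀ s ∈ Icc (0:ℝ) L, 6 * D < r s + |g s|)
    (hg0 : g 0 ≤ 0) (hgL : 0 ≤ g L) (hsep : 5 * D < g L - g 0) : False := by
  have h0mem : (0:ℝ) ∈ Icc (0:ℝ) L := ⟨le_rfl, hL⟩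
  have hLmem : L ∈ Icc (0:ℝ) L := ⟨hL, le_rfl⟩
  -- the last "low" point with g ≤ 0
  set Slow : Set ℝ := {s | s ∈ Icc (0:ℝ) L ∧ r s ≤ 2*D ∧ g s ≤ 0} with hSlow
  set p := sSup (insert 0 Slow) with hpdef
  have hSbdd : BddAbove (insert 0 Slow) := by
    refine ⟨L, ?_⟩
    rintro z (rfl | hz)
    · exact hL
    · exact hz.1.2
  have hSne : (insert 0 Slow).Nonempty := ⟨0, mem_insert _ _⟩
  have hp0 : 0 ≤ p := le_csSup hSbdd (mem_insert _ _)
  have hpL : p ≤ L := csSup_le hSne (by rintro z (rfl | hz); exacts [hL, hz.1.2])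
  have hpmem : p ∈ Icc (0:ℝ) L := ⟨hp0, hpL⟩
  have hpapprox : ∀ ε, 0 < ε → (0 ∈ Slow ∨ 0 < p) → ∃ s ∈ Slow, p - ε < s ∧ s ≤ p := by
    intro ε hε hcase
    rcases hcase with h0S | hppos
    · obtain ⟨z, hz, hlt⟩ := exists_lt_of_lt_csSup hSne (by linarith : p - ε < p)
      have hzp : z ≤ p := le_csSup hSbdd hz
      rcases hz with rfl | hz
      · exact ⟨0, h0S, hlt, hzp⟩
      · exact ⟨z, hz, hlt, hzp⟩
    · set ε' := min ε p with hε'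
      have hε'pos : 0 < ε' := lt_min hε hppos
      obtain ⟨z, hz, hlt⟩ := exists_lt_of_lt_csSup hSne (by
        have : ε' ≤ ε := min_le_left _ _
        linarith : p - ε' < p)
      have hzp : z ≤ p := le_csSup hSbdd hz
      have hε'p : ε' ≤ p := min_le_right _ _
      rcases hz with rfl | hz
      · exfalso; linarith
      · refine ⟨z, hz, ?_, hzp⟩
        have : ε' ≤ ε := min_le_left _ _
        linarith
  have hpanchor : (0 ∈ Slow ∨ 0 < p) → r p ≤ 2*D ∧ g p < -(4*D) := by
    intro hcase
    have hrp : r p ≤ 2*D := by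
      by_contra hcon
      push_neg at hcon
      obtain ⟨s, hs, hs1, hs2⟩ := hpapprox (r p - 2*D) (by linarith) hcase
      have := hrLip p hpmem s hs.1
      have h1 := le_trans (le_abs_self _) this
      rw [abs_of_nonneg (by linarith : (0:ℝ) ≤ p - s)] at h1
      have := hs.2.1
      linarith
    have hgple : g p ≤ 4*D := by
      by_contra hcon
      push_neg at hcon
      obtain ⟨s, hs, hs1, hs2⟩ := hpapprox (g p - 4*D) (by linarith) hcase
      have := hA2 p hpmem s hs.1
      have h1 := le_trans (le_abs_self _) this
      rw [abs_of_nonneg (by linarith : (0:ℝ) ≤ p - s)] at h1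
      have h2 := hs.2.1
      have h3 := hs.2.2
      linarith
    have habs : 4*D < |g p| := by
      have := hH p hpmem
      linarith
    refine ⟨hrp, ?_⟩
    rcases abs_cases (g p) with ⟨he, _⟩ | ⟨he, _⟩
    · rw [he] at habs; linarith
    · rw [he] at habs; linarith
  -- the first "high" point after p with g ≥ 0
  set Shigh : Set ℝ := {s | s ∈ Icc (0:ℝ) L ∧ p ≤ s ∧ r s ≤ 2*D ∧ 0 ≤ g s} with hShigh
  set q := sInf (insert L Shigh) with hqdef
  have hTbdd : BddBelow (insert L Shigh) := by
    refine ⟨p, ?_⟩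
    rintro z (rfl | hz)
    · exact hpL
    · exact hz.2.1
  have hTne : (insert L Shigh).Nonempty := ⟨L, mem_insert _ _⟩
  have hqL : q ≤ L := csInf_le hTbdd (mem_insert _ _)
  have hpq : p ≤ q := le_csInf hTne (by rintro z (rfl | hz); exacts [hpL, hz.2.1])
  have hq0 : 0 ≤ q := le_trans hp0 hpq
  have hqmem : q ∈ Icc (0:ℝ) L := ⟨hq0, hqL⟩
  have hqapprox : ∀ ε, 0 < ε → (L ∈ Shigh ∨ q < L) → ∃ s ∈ Shigh, s < q + ε ∧ q ≤ s := by
    intro ε hε hcase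
    rcases hcase with hLS | hqlt
    · obtain ⟨z, hz, hlt⟩ := exists_lt_of_csInf_lt hTne (by linarith : q < q + ε)
      have hzq : q ≤ z := csInf_le hTbdd hz
      rcases hz with rfl | hz
      · exact ⟨z, hLS, hlt, hzq⟩
      · exact ⟨z, hz, hlt, hzq⟩
    · set ε' := min ε (L - q) with hε'
      have hε'pos : 0 < ε' := lt_min hε (by linarith)
      obtain ⟨z, hz, hlt⟩ := exists_lt_of_csInf_lt hTne (by linarith : q < q + ε')
      have hzq : q ≤ z := csInf_le hTbdd hz
      have h1 : ε' ≤ ε := min_le_left _ _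
      have h2 : ε' ≤ L - q := min_le_right _ _
      rcases hz with rfl | hz
      · exfalso; linarith
      · exact ⟨z, hz, by linarith, hzq⟩
  have hqanchor : (L ∈ Shigh ∨ q < L) → r q ≤ 2*D ∧ 4*D < g q := by
    intro hcase
    have hrq : r q ≤ 2*D := by
      by_contra hcon
      push_neg at hcon
      obtain ⟨s, hs, hs1, hs2⟩ := hqapprox (r q - 2*D) (by linarith) hcase
      have := hrLip q hqmem s hs.1
      have h1 := le_trans (le_abs_self _) this
      rw [abs_of_nonpos (by linarith : q - s ≤ 0)] at h1
      have := hs.2.2.1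
      linarith
    have hgqge : -(4*D) ≤ g q := by
      by_contra hcon
      push_neg at hcon
      obtain ⟨s, hs, hs1, hs2⟩ := hqapprox (-(4*D) - g q) (by linarith) hcase
      have := hA2 q hqmem s hs.1
      have h1 := le_trans (neg_le_abs _) this
      rw [abs_of_nonpos (by linarith : q - s ≤ 0)] at h1
      have h2 := hs.2.2.1
      have h3 := hs.2.2.2
      linarith
    have habs : 4*D < |g q| := by
      have := hH q hqmem
      linarith
    refine ⟨hrq, ?_⟩
    rcases abs_cases (g q) with ⟨he, _⟩ | ⟨he, _⟩
    · rw [he] at habs; linarith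
    · rw [he] at habs; linarith
  -- in between r is large
  have hmid : ∀ s, p < s → s < q → 2*D < r s := by
    intro s hps hsq
    by_contra hcon
    push_neg at hcon
    have hsmem : s ∈ Icc (0:ℝ) L := ⟨by linarith, by linarith [hqL]⟩
    have habs : 4*D < |g s| := by have := hH s hsmem; linarith
    rcases le_or_gt (g s) 0 with hgs | hgs
    · have hsS : s ∈ Slow := ⟨hsmem, hcon, hgs⟩
      have : s ≤ p := le_csSup hSbdd (mem_insert_of_mem _ hsS)
      linarith
    · have hsS : s ∈ Shigh := ⟨hsmem, by linarith, hcon, hgs.le⟩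
      have : q ≤ s := csInf_le hTbdd (mem_insert_of_mem _ hsS)
      linarith
  -- dichotomies
  have hpd : (r p ≤ 2*D ∧ g p < -(4*D)) ∨ (p = 0 ∧ 2*D < r 0) := by
    by_cases hcase : 0 ∈ Slow ∨ 0 < p
    · exact Or.inl (hpanchor hcase)
    · push_neg at hcase
      obtain ⟨h0S, hple⟩ := hcase
      have hp00 : p = 0 := le_antisymm hple hp0
      right
      refine ⟨hp00, ?_⟩
      by_contra hcon
      push_neg at hcon
      exact h0S ⟨h0mem, hcon, hg0⟩
  have hqd : (r q ≤ 2*D ∧ 4*D < g q) ∨ (q = L ∧ 2*D < r L) := by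
    by_cases hcase : L ∈ Shigh ∨ q < L
    · exact Or.inl (hqanchor hcase)
    · push_neg at hcase
      obtain ⟨hLS, hqge⟩ := hcase
      have hqLL : q = L := le_antisymm hqL hqge
      right
      refine ⟨hqLL, ?_⟩
      by_contra hcon
      push_neg at hcon
      exact hLS ⟨hLmem, hpL, hcon, hgL⟩
  -- dispatch
  rcases eq_or_lt_of_le hD with hD0 | hDpos
  · -- D = 0
    have hdrift0 : ∀ s ∈ Icc (0:ℝ) L, ∀ s' ∈ Icc (0:ℝ) L, |s' - s| < r s → g s' = g s := by
      intro s hs s' hs' hlt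
      have := hdrift s hs s' hs' hlt
      rw [← hD0] at this
      have h1 := abs_nonneg (g s' - g s)
      have : |g s' - g s| = 0 := le_antisymm (by linarith) h1
      linarith [abs_eq_zero.mp this]
    apply master_zero L hL g r hrpos hrLip hdrift0 hA2 p q hpmem hqmem hpq
    · intro s h1 h2
      have := hmid s h1 h2; rw [← hD0] at this; linarith
    · rcases hpd with ⟨h1, h2⟩ | ⟨h1, h2⟩
      · left; constructor
        · rw [← hD0] at h1; linarith
        · rw [← hD0] at h2; linarith
      · right; constructor
        · exact h1
        · rw [← hD0] at h2; linarith
    · rcases hqd with ⟨h1, h2⟩ | ⟨h1, h2⟩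
      · left; constructor
        · rw [← hD0] at h1; linarith
        · rw [← hD0] at h2; linarith
      · right; constructor
        · exact h1
        · rw [← hD0] at h2; linarith
    · exact hg0
    · exact hgL
    · rw [← hD0] at hsep; linarith
  · -- D > 0
    rcases hpd with hpa | hpc
    · rcases hqd with hqa | hqc
      · exact master_anchor_anchor L D hDpos g r hdrift hH hA2 hA3 hrLip p q hpmem hqmem hpq
          hmid hpa.1 hpa.2 hqa.1 hqa.2
      · -- p anchor, q cap : mirror
        have hpltL : p < L := by
          rcases eq_or_lt_of_le hpL with h | h
          · exfalso
            have := hpa.2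
            rw [h] at this
            have := hH L hLmem
            rw [abs_of_nonneg hgL] at this
            nlinarith [hpa.1, hgL]
          · exact h
        apply master_cap_anchor L D hDpos (fun s => -g (L - s)) (fun s => r (L - s))
        · intro s hs s' hs' hlt
          have hm1 : L - s ∈ Icc (0:ℝ) L := ⟨by linarith [hs.2], by linarith [hs.1]⟩
          have hm2 : L - s' ∈ Icc (0:ℝ) L := ⟨by linarith [hs'.2], by linarith [hs'.1]⟩
          have := hdrift (L - s) hm1 (L - s') hm2 (by
            rw [show L - s' - (L - s) = -(s' - s) by ring, abs_neg]; exact hlt)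
          rw [show -g (L - s') - -g (L - s) = -(g (L - s') - g (L - s)) by ring, abs_neg]
          exact this
        · intro s hs
          have hm1 : L - s ∈ Icc (0:ℝ) L := ⟨by linarith [hs.2], by linarith [hs.1]⟩
          have := hH (L - s) hm1
          rw [abs_neg]
          exact this
        · intro s hs s' hs'
          have hm1 : L - s ∈ Icc (0:ℝ) L := ⟨by linarith [hs.2], by linarith [hs.1]⟩
          have hm2 : L - s' ∈ Icc (0:ℝ) L := ⟨by linarith [hs'.2], by linarith [hs'.1]⟩
          have := hA3 (L - s) hm1 (L - s') hm2
          rw [show L - s - (L - s') = -(s - s') by ring, abs_neg] at this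
          rw [show -g (L - s) - -g (L - s') = -(g (L - s) - g (L - s')) by ring, abs_neg]
          exact this
        · exact sub_pos.mpr hpltL
        · linarith
        · intro s hs1 hs2
          rcases eq_or_lt_of_le hs1 with h | h
          · rw [← h]; simpa using hqc.2
          · have h5 : p < L - s := by linarith
            have h6 : L - s < L := by linarith
            have h7 : L - s < q := by rw [hqc.1]; exact h6
            exact hmid (L - s) h5 h7
        · rw [show L - (L - p) = p by ring]; exact hpa.1
        · rw [show L - (L - p) = p by ring]; linarith [hpa.2]
        · simpa using hgL
    · rcases hqd with hqa | hqc
      · -- p cap, q anchor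
        have h0q : 0 < q := by
          rcases eq_or_lt_of_le hq0 with h | h
          · exfalso
            have := hqa.2
            rw [← h] at this
            linarith [hg0]
          · exact h
        apply master_cap_anchor L D hDpos g r hdrift hH hA3 q h0q hqL
        · intro s hs1 hs2
          rcases eq_or_lt_of_le hs1 with h | h
          · rw [← h]; exact hpc.2
          · exact hmid s (by rw [hpc.1]; exact h) hs2
        · exact hqa.1
        · exact hqa.2
        · exact hg0
      · -- both caps
        apply master_cap_cap L D hDpos g r hdrift hH hA3 hL hpc.2 hqc.2
        · intro s hs1 hs2
          apply hmid s (by rw [hpc.1]; exact hs1) (by rw [hqc.1]; exact hs2)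
        · exact hg0
        · exact hgL
        · exact hsep


/-- pointwise triangle bound for projections. -/
lemma proj_dist_le {X : Type*} [MetricSpace X] (l : ℝ → X) (hl : Isometry l) (π : X → ℝ)
    (hπ : IsNearestPointProj l π) (z w : X) :
    |π z - π w| ≤ Metric.infDist z (Set.range l) + dist z w + Metric.infDist w (Set.range l) := by
  have h1 : dist (l (π z)) (l (π w)) = |π z - π w| := by
    rw [hl.dist_eq, Real.dist_eq]
  calc |π z - π w| = dist (l (π z)) (l (π w)) := h1.symm
    _ ≤ dist (l (π z)) z + dist z w + dist w (l (π w)) := dist_triangle4 _ _ _ _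
    _ = Metric.infDist z (Set.range l) + dist z w + Metric.infDist w (Set.range l) := by
        rw [dist_comm (l (π z)) z, hπ z, hπ w]

lemma proj_dist_ge {X : Type*} [MetricSpace X] (l : ℝ → X) (hl : Isometry l) (π : X → ℝ)
    (hπ : IsNearestPointProj l π) (z w : X) :
    dist z w ≤ Metric.infDist z (Set.range l) + |π z - π w| + Metric.infDist w (Set.range l) := by
  have h1 : dist (l (π z)) (l (π w)) = |π z - π w| := by
    rw [hl.dist_eq, Real.dist_eq]
  calc dist z w ≤ dist z (l (π z)) + dist (l (π z)) (l (π w)) + dist (l (π w)) w := dist_triangle4 _ _ _ _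
    _ = Metric.infDist z (Set.range l) + |π z - π w| + Metric.infDist w (Set.range l) := by
        rw [hπ z, h1, dist_comm (l (π w)) w, hπ w]

/-- window lemma from strong contraction. -/
lemma proj_window {X : Type*} [MetricSpace X] (l : ℝ → X) (hl : Isometry l) (π : X → ℝ)
    (hπ : IsNearestPointProj l π) (D : ℝ) (hsc : StronglyContracting l π D) (z w : X)
    (h : dist z w < Metric.infDist z (Set.range l)) : |π z - π w| ≤ D := by
  have hball : Metric.closedBall z (dist z w) ∩ Set.range l = ∅ := by
    apply eq_empty_iff_forall_notMem.2
    rintro u ⟨hu1, hu2⟩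
    rw [Metric.mem_closedBall] at hu1
    have h3 : Metric.infDist z (Set.range l) ≤ dist z u := Metric.infDist_le_dist_of_mem hu2
    rw [dist_comm] at h3
    linarith
  have hdiam := hsc z (dist z w) hball
  have hbdd : Bornology.IsBounded (π '' Metric.closedBall z (dist z w)) := by
    rw [Metric.isBounded_iff]
    refine ⟨2 * Metric.infDist z (Set.range l) + 4 * dist z w, ?_⟩
    rintro _ ⟨u, hu, rfl⟩ _ ⟨v, hv, rfl⟩
    rw [Metric.mem_closedBall] at hu hv
    rw [Real.dist_eq]
    have h4 := proj_dist_le l hl π hπ u v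
    have h5 : Metric.infDist u (Set.range l) ≤ Metric.infDist z (Set.range l) + dist u z :=
      Metric.infDist_le_infDist_add_dist
    have h6 : Metric.infDist v (Set.range l) ≤ Metric.infDist z (Set.range l) + dist v z :=
      Metric.infDist_le_infDist_add_dist
    have h7 : dist u v ≤ dist u z + dist z v := dist_triangle _ _ _
    have h8 : dist z v = dist v z := dist_comm _ _
    linarith
  have hz : z ∈ Metric.closedBall z (dist z w) := Metric.mem_closedBall_self dist_nonneg
  have hw : w ∈ Metric.closedBall z (dist z w) := by
    rw [Metric.mem_closedBall, dist_comm]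
  calc |π z - π w| = dist (π z) (π w) := (Real.dist_eq _ _).symm
    _ ≤ Metric.diam (π '' Metric.closedBall z (dist z w)) :=
        Metric.dist_le_diam_of_mem hbdd (mem_image_of_mem π hz) (mem_image_of_mem π hw)
    _ ≤ D := hdiam

/-- the theorem, assuming `π x ≤ t ≤ π y`. -/
theorem aux {X : Type*} [MetricSpace X]
    (l : ℝ → X) (hl : Isometry l) (π : X → ℝ) (hπ : IsNearestPointProj l π)
    (D : ℝ) (hD : 0 ≤ D) (hsc : StronglyContracting l π D)
    (x y : X) (hfar : 5 * D < π y - π x)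
    (γ : ℝ → X) (hγ0 : γ 0 = x) (hγ1 : γ (dist x y) = y)
    (hγ : ∀ s ∈ Set.Icc (0 : ℝ) (dist x y), ∀ u ∈ Set.Icc (0 : ℝ) (dist x y),
      dist (γ s) (γ u) = |s - u|)
    (t : ℝ) (h1 : π x ≤ t) (h2 : t ≤ π y) :
    Metric.infDist (l t) (γ '' Set.Icc (0 : ℝ) (dist x y)) ≤ 6 * D := by
  by_contra hcon
  push_neg at hcon
  set L := dist x y with hLdef
  have hL : 0 ≤ L := dist_nonneg
  set g : ℝ → ℝ := fun s => π (γ s) - t with hg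
  set r : ℝ → ℝ := fun s => Metric.infDist (γ s) (Set.range l) with hr
  have hrpos : ∀ s ∈ Icc (0:ℝ) L, 0 ≤ r s := fun s _ => Metric.infDist_nonneg
  have hrLip : ∀ s ∈ Icc (0:ℝ) L, ∀ s' ∈ Icc (0:ℝ) L, |r s - r s'| ≤ |s - s'| := by
    intro s hs s' hs'
    have hd : dist (γ s) (γ s') = |s - s'| := hγ s hs s' hs'
    rw [abs_le]
    constructor
    · have := Metric.infDist_le_infDist_add_dist (x := γ s') (y := γ s) (s := Set.range l)
      rw [dist_comm] at this
      rw [hr]; simp only []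
      linarith [this, hd ▸ le_refl (dist (γ s) (γ s'))]
    · have := Metric.infDist_le_infDist_add_dist (x := γ s) (y := γ s') (s := Set.range l)
      rw [hr]; simp only []
      linarith [this, hd ▸ le_refl (dist (γ s) (γ s'))]
  have hdrift : ∀ s ∈ Icc (0:ℝ) L, ∀ s' ∈ Icc (0:ℝ) L, |s' - s| < r s → |g s' - g s| ≤ D := by
    intro s hs s' hs' hlt
    have hd : dist (γ s) (γ s') = |s' - s| := by rw [hγ s hs s' hs', abs_sub_comm]
    have hwin := proj_window l hl π hπ D hsc (γ s) (γ s') (by rw [hd]; exact hlt)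
    have : |g s' - g s| = |π (γ s) - π (γ s')| := by
      rw [hg]; simp only []
      rw [show π (γ s') - t - (π (γ s) - t) = -(π (γ s) - π (γ s')) by ring, abs_neg]
    rw [this]
    exact hwin
  have hA2 : ∀ s ∈ Icc (0:ℝ) L, ∀ s' ∈ Icc (0:ℝ) L, |g s - g s'| ≤ r s + r s' + |s - s'| := by
    intro s hs s' hs'
    have hd : dist (γ s) (γ s') = |s - s'| := hγ s hs s' hs'
    have := proj_dist_le l hl π hπ (γ s) (γ s')
    rw [hd] at this
    have heq : |g s - g s'| = |π (γ s) - π (γ s')| := by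
      rw [hg]; simp only []
      rw [show π (γ s) - t - (π (γ s') - t) = π (γ s) - π (γ s') by ring]
    rw [heq]
    show |π (γ s) - π (γ s')| ≤ Metric.infDist (γ s) (Set.range l) + Metric.infDist (γ s') (Set.range l) + |s - s'|
    linarith [this]
  have hA3 : ∀ s ∈ Icc (0:ℝ) L, ∀ s' ∈ Icc (0:ℝ) L, |s - s'| ≤ r s + |g s - g s'| + r s' := by
    intro s hs s' hs'
    have hd : dist (γ s) (γ s') = |s - s'| := hγ s hs s' hs'
    have := proj_dist_ge l hl π hπ (γ s) (γ s')
    rw [hd] at this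
    have heq : |g s - g s'| = |π (γ s) - π (γ s')| := by
      rw [hg]; simp only []
      rw [show π (γ s) - t - (π (γ s') - t) = π (γ s) - π (γ s') by ring]
    rw [heq]
    show |s - s'| ≤ Metric.infDist (γ s) (Set.range l) + |π (γ s) - π (γ s')| + Metric.infDist (γ s') (Set.range l)
    exact this
  have hH : ∀ s ∈ Icc (0:ℝ) L, 6 * D < r s + |g s| := by
    intro s hs
    have h3 : Metric.infDist (l t) (γ '' Icc 0 L) ≤ dist (l t) (γ s) :=
      Metric.infDist_le_dist_of_mem (mem_image_of_mem γ hs)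
    have h4 : dist (l t) (γ s) ≤ |g s| + r s := by
      calc dist (l t) (γ s) ≤ dist (l t) (l (π (γ s))) + dist (l (π (γ s))) (γ s) :=
            dist_triangle _ _ _
        _ = |t - π (γ s)| + r s := by
            rw [hl.dist_eq, Real.dist_eq, dist_comm, hπ (γ s)]
        _ = |g s| + r s := by
            rw [hg]; simp only []
            rw [show t - π (γ s) = -(π (γ s) - t) by ring, abs_neg]
    have h5 : 6 * D < dist (l t) (γ s) := lt_of_lt_of_le hcon h3
    linarith
  have hg0 : g 0 ≤ 0 := by rw [hg]; simp only []; rw [hγ0]; linarith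
  have hgL : 0 ≤ g L := by rw [hg]; simp only []; rw [hγ1]; linarith
  have hsep : 5 * D < g L - g 0 := by
    rw [hg]; simp only []; rw [hγ0, hγ1]; linarith
  exact abstract_bottleneck L D hD hL g r hrpos hrLip hdrift hA2 hA3 hH hg0 hgL hsep


end SCB

set_option maxHeartbeats 1600000 in
/-- If `l` is `D`-strongly contracting and `x, y` project more than `5D` apart along `l`,
then every point of `l` between `π x` and `π y` lies in the `6D`-neighbourhood of any
geodesic from `x` to `y`. -/
theorem strongly_contracting_bottleneck (X : Type*) [MetricSpace X]
    (l : ℝ → X) (hl : Isometry l) (π : X → ℝ) (hπ : IsNearestPointProj l π)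
    (D : ℝ) (hD : 0 ≤ D) (hsc : StronglyContracting l π D)
    (x y : X) (hfar : 5 * D < |π x - π y|)
    (γ : ℝ → X) (hγ0 : γ 0 = x) (hγ1 : γ (dist x y) = y)
    (hγ : ∀ s ∈ Set.Icc (0 : ℝ) (dist x y), ∀ t ∈ Set.Icc (0 : ℝ) (dist x y),
      dist (γ s) (γ t) = |s - t|)
    (t : ℝ) (ht : t ∈ Set.uIcc (π x) (π y)) :
    Metric.infDist (l t) (γ '' Set.Icc (0 : ℝ) (dist x y)) ≤ 6 * D := by
  rcases le_total (π x) (π y) with hxy | hyx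
  · rw [Set.uIcc_of_le hxy] at ht
    have hfar' : 5 * D < π y - π x := by
      rwa [abs_of_nonpos (by linarith : π x - π y ≤ 0), neg_sub] at hfar
    exact SCB.aux l hl π hπ D hD hsc x y hfar' γ hγ0 hγ1 hγ t ht.1 ht.2
  · rw [Set.uIcc_of_ge hyx] at ht
    -- mirror through s ↦ -s on the line
    set l' : ℝ → X := fun s => l (-s) with hl'def
    set π' : X → ℝ := fun z => -(π z) with hπ'def
    have hneg : Isometry (fun s : ℝ => -s) := Isometry.of_dist_eq fun a b => dist_neg_neg a b
    have hl' : Isometry l' := hl.comp hneg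
    have hrange : Set.range l' = Set.range l := by
      have : l' = l ∘ (fun s : ℝ => -s) := rfl
      rw [this]
      exact neg_surjective.range_comp l
    have hπ' : IsNearestPointProj l' π' := by
      intro z
      have h3 : l' (π' z) = l (π z) := by
        rw [hl'def, hπ'def]; simp
      rw [h3, hrange]
      exact hπ z
    have hsc' : StronglyContracting l' π' D := by
      intro c ρ hball
      rw [hrange] at hball
      have h4 := hsc c ρ hball
      have h5 : π' '' Metric.closedBall c ρ = (fun u : ℝ => -u) '' (π '' Metric.closedBall c ρ) := by
        rw [Set.image_image]
      rw [h5, hneg.diam_image]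
      exact h4
    have hfar' : 5 * D < π' y - π' x := by
      show 5 * D < -(π y) - -(π x)
      rw [abs_of_nonneg (by linarith : 0 ≤ π x - π y)] at hfar
      linarith
    have h6 := SCB.aux l' hl' π' hπ' D hD hsc' x y hfar' γ hγ0 hγ1 hγ (-t)
      (by show -(π x) ≤ -t; linarith [ht.2])
      (by show -t ≤ -(π y); linarith [ht.1])
    have h7 : l' (-t) = l t := by rw [hl'def]; simp
    rwa [h7] at h6
end

section
/- For every Morse gauge M : [1,∞) × [0,∞) → [0,∞) there exists a constant D ≥ 0, depending only on M, such that the following holds: if X is an injective metric space, l : ℝ → X is a geodesic line that is M-Morse, and π : X → ℝ is a nearest-point projection to l, then l is D-strongly contracting with respect to π, i.e., every closed ball B ⊆ X disjoint from the range of l satisfies diam(π(B)) ≤ D. -/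
universe u v w

/-- The line `l` is `M`-Morse if every `(q, Q)`-quasi-geodesic with endpoints on the range
of `l` stays within `M q Q` of the range of `l`. -/
def IsMorseLine {X : Type*} [MetricSpace X] (l : ℝ → X) (M : ℝ → ℝ → ℝ) : Prop :=
  ∀ q Q : ℝ, 1 ≤ q → 0 ≤ Q → ∀ (a b : ℝ) (β : ℝ → X),
    (∀ s ∈ Set.Icc a b, ∀ t ∈ Set.Icc a b,
      (1 / q) * |s - t| - Q ≤ dist (β s) (β t) ∧ dist (β s) (β t) ≤ q * |s - t| + Q) →
    β a ∈ Set.range l → β b ∈ Set.range l →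
    ∀ t ∈ Set.Icc a b, Metric.infDist (β t) (Set.range l) ≤ M q Q




namespace SZAux

variable {X : Type w} [MetricSpace X]

def finDist {k : ℕ} (p : Fin k → X) (ε : ℝ) (i j : Fin k) : ℝ :=
  if i = j then 0 else dist (p i) (p j) + ε

def optDist {k : ℕ} (p : Fin k → X) (β : Fin k → ℝ) (ε : ℝ) :
    Option (Fin k) → Option (Fin k) → ℝ
  | none, none => 0
  | none, some i => β i + ε
  | some i, none => β i + ε
  | some i, some j => finDist p ε i j

section OptDist

variable {k : ℕ} {p : Fin k → X} {β : Fin k → ℝ} {ε : ℝ}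

theorem finDist_nonneg (hε : 0 < ε) (i j : Fin k) : 0 ≤ finDist p ε i j := by
  unfold finDist; split_ifs
  · exact le_refl 0
  · positivity

theorem finDist_comm (i j : Fin k) : finDist p ε i j = finDist p ε j i := by
  unfold finDist
  rcases eq_or_ne i j with h | h
  · simp [h]
  · rw [if_neg h, if_neg (Ne.symm h), dist_comm]

theorem finDist_triangle (hε : 0 < ε) (i j m : Fin k) :
    finDist p ε i m ≤ finDist p ε i j + finDist p ε j m := by
  unfold finDist
  rcases eq_or_ne i m with him | him
  · rw [if_pos him]
    have := finDist_nonneg (p := p) hε i j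
    have := finDist_nonneg (p := p) hε j m
    unfold finDist at *
    positivity
  · rw [if_neg him]
    rcases eq_or_ne i j with hij | hij
    · subst hij; rw [if_pos rfl, if_neg him]; linarith
    · rcases eq_or_ne j m with hjm | hjm
      · subst hjm; rw [if_neg hij, if_pos rfl]; linarith
      · rw [if_neg hij, if_neg hjm]
        have := dist_triangle (p i) (p j) (p m)
        linarith

theorem optDist_nonneg (hε : 0 < ε) (hβ0 : ∀ i, 0 ≤ β i) :
    ∀ a b, 0 ≤ optDist p β ε a b := by
  intro a b
  rcases a with _ | i <;> rcases b with _ | j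
  · exact le_refl 0
  · have := hβ0 j; show (0:ℝ) ≤ β j + ε; linarith
  · have := hβ0 i; show (0:ℝ) ≤ β i + ε; linarith
  · exact finDist_nonneg hε i j

theorem optDist_comm : ∀ a b, optDist p β ε a b = optDist p β ε b a := by
  intro a b
  rcases a with _ | i <;> rcases b with _ | j <;> try rfl
  exact finDist_comm i j

theorem optDist_triangle (hε : 0 < ε) (hβ0 : ∀ i, 0 ≤ β i)
    (hβ1 : ∀ i j, dist (p i) (p j) ≤ β i + β j)
    (hβ2 : ∀ i j, β i ≤ β j + dist (p j) (p i)) :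
    ∀ a b c, optDist p β ε a c ≤ optDist p β ε a b + optDist p β ε b c := by
  intro a b c
  rcases a with _ | i <;> rcases b with _ | j <;> rcases c with _ | m
  · show (0:ℝ) ≤ 0 + 0; norm_num
  · show β m + ε ≤ 0 + (β m + ε); norm_num
  · show (0:ℝ) ≤ (β j + ε) + (β j + ε)
    have := hβ0 j; linarith
  · show β m + ε ≤ (β j + ε) + finDist p ε j m
    unfold finDist
    rcases eq_or_ne j m with h | h
    · subst h; rw [if_pos rfl]; norm_num
    · rw [if_neg h]; have := hβ2 m j; linarith
  · show β i + ε ≤ (β i + ε) + 0; norm_num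
  · show finDist p ε i m ≤ (β i + ε) + (β m + ε)
    unfold finDist
    rcases eq_or_ne i m with h | h
    · rw [if_pos h]; have := hβ0 i; have := hβ0 m; linarith
    · rw [if_neg h]; have := hβ1 i m; linarith
  · show β i + ε ≤ finDist p ε i j + (β j + ε)
    unfold finDist
    rcases eq_or_ne i j with h | h
    · subst h; rw [if_pos rfl]; norm_num
    · rw [if_neg h]; have := hβ2 i j; rw [dist_comm (p j) (p i)] at this; linarith
  · exact finDist_triangle hε i j m

theorem finDist_eq_zero (hε : 0 < ε) {i j : Fin k} (h : finDist p ε i j = 0) : i = j := by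
  by_contra hne
  unfold finDist at h
  rw [if_neg hne] at h
  have := dist_nonneg (x := p i) (y := p j)
  linarith

theorem optDist_eq_zero (hε : 0 < ε) (hβ0 : ∀ i, 0 ≤ β i) :
    ∀ a b, optDist p β ε a b = 0 → a = b := by
  intro a b h
  rcases a with _ | i <;> rcases b with _ | j
  · rfl
  · exfalso; have := hβ0 j; change β j + ε = 0 at h; linarith
  · exfalso; have := hβ0 i; change β i + ε = 0 at h; linarith
  · exact congrArg _ (finDist_eq_zero hε h)

end OptDist

/-- Hyperconvexity (with ε slack) from injectivity. -/
theorem exists_hyperconvex_point (hX : IsInjMetric.{u, v, w} X) {k : ℕ} (hk : 0 < k)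
    (p : Fin k → X) (α : Fin k → ℝ) (hpair : ∀ i j, dist (p i) (p j) ≤ α i + α j)
    {ε : ℝ} (hε : 0 < ε) : ∃ z : X, ∀ i, dist z (p i) ≤ α i + ε := by
  haveI : Nonempty (Fin k) := ⟨⟨0, hk⟩⟩
  -- lipschitz-ize the radii
  set β : Fin k → ℝ := fun i => ⨅ j : Fin k, (α j + dist (p i) (p j)) with hβdef
  have hα0 : ∀ i, 0 ≤ α i := by
    intro i; have := hpair i i; simp at this; linarith
  have hβle : ∀ i, β i ≤ α i := by
    intro i
    have : β i ≤ α i + dist (p i) (p i) := ciInf_le ⟨0, by rintro y ⟨j, rfl⟩; have := hα0 j; positivity⟩ i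
    simpa using this
  have hβmem : ∀ i, ∃ j, β i = α j + dist (p i) (p j) := by
    intro i
    obtain ⟨j, hj⟩ := exists_eq_ciInf_of_finite (f := fun j : Fin k => α j + dist (p i) (p j))
    exact ⟨j, hj.symm⟩
  have hβ0 : ∀ i, 0 ≤ β i := by
    intro i
    obtain ⟨j, hj⟩ := hβmem i
    rw [hj]; have := hα0 j; positivity
  have hβ1 : ∀ i j, dist (p i) (p j) ≤ β i + β j := by
    intro i j
    obtain ⟨a, ha⟩ := hβmem i
    obtain ⟨b, hb⟩ := hβmem j
    rw [ha, hb]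
    have h1 := hpair a b
    have h2 := dist_triangle (p i) (p a) (p b)
    have h3 := dist_triangle (p i) (p b) (p j)
    rw [dist_comm (p b) (p j)] at h3
    linarith
  have hβ2 : ∀ i j, β i ≤ β j + dist (p j) (p i) := by
    intro i j
    obtain ⟨b, hb⟩ := hβmem j
    have : β i ≤ α b + dist (p i) (p b) := ciInf_le ⟨0, by rintro y ⟨a, rfl⟩; have := hα0 a; positivity⟩ b
    have h2 := dist_triangle (p i) (p j) (p b)
    rw [hb]
    rw [dist_comm (p i) (p j)] at h2
    linarith
  -- the metric spaces
  letI instY : MetricSpace (ULift.{u} (Fin k)) :=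
    { dist := fun a b => finDist p ε a.down b.down
      dist_self := fun a => by simp [finDist]
      dist_comm := fun a b => finDist_comm a.down b.down
      dist_triangle := fun a b c => finDist_triangle hε a.down b.down c.down
      eq_of_dist_eq_zero := by
        intro a b h
        have := finDist_eq_zero hε (p := p) h
        cases a; cases b; simpa using this
      edist_dist := fun a b => rfl }
  letI instZ : MetricSpace (ULift.{v} (Option (Fin k))) :=
    { dist := fun a b => optDist p β ε a.down b.down
      dist_self := fun a => by rcases a with ⟨_ | i⟩ <;> simp [optDist, finDist]
      dist_comm := fun a b => optDist_comm a.down b.down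
      dist_triangle := fun a b c => optDist_triangle hε hβ0 hβ1 hβ2 a.down b.down c.down
      eq_of_dist_eq_zero := by
        intro a b h
        have := optDist_eq_zero hε hβ0 a.down b.down h
        cases a; cases b; simpa using this
      edist_dist := fun a b => rfl }
  obtain ⟨g, hg, hgi⟩ := hX (ULift.{u} (Fin k)) (ULift.{v} (Option (Fin k)))
    (fun y => ⟨some y.down⟩) (fun y => p y.down)
    (Isometry.of_dist_eq fun a b => rfl)
    (LipschitzWith.of_dist_le_mul (by
      intro a b
      show dist (p a.down) (p b.down) ≤ 1 * finDist p ε a.down b.down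
      rw [one_mul]
      unfold finDist
      rcases eq_or_ne a.down b.down with h | h
      · rw [if_pos h, h, dist_self]
      · rw [if_neg h]; linarith))
  refine ⟨g ⟨none⟩, fun i => ?_⟩
  have h1 : dist (g ⟨none⟩) (g ⟨some i⟩) ≤ 1 * dist (⟨none⟩ : ULift.{v} (Option (Fin k))) ⟨some i⟩ :=
    hg.dist_le_mul _ _
  have h2 : g ⟨some i⟩ = p i := hgi ⟨i⟩
  have h3 : dist (⟨none⟩ : ULift.{v} (Option (Fin k))) ⟨some i⟩ = β i + ε := rfl
  rw [h2, h3, one_mul] at h1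
  have := hβle i
  linarith

end SZAux

namespace SZAux

variable {X : Type w} [MetricSpace X]

/-- Inductive construction of chains of points via hyperconvexity. -/
theorem chain_exists (hX : IsInjMetric.{u, v, w} X) {k : ℕ} (hk : 0 < k)
    (p : ℕ → Fin k → X) (α : ℕ → Fin k → ℝ) (start : X) (n : ℕ) (step : ℝ)
    (hstep : 0 ≤ step) {ε : ℝ} (hε : 0 < ε)
    (h0 : ∀ i, dist start (p 0 i) ≤ α 0 i)
    (hpair : ∀ j, j ≤ n → ∀ i i', dist (p j i) (p j i') ≤ α j i + α j i')
    (hmono : ∀ j, j + 1 ≤ n → ∀ i, α j i + dist (p j i) (p (j+1) i) ≤ α (j+1) i + step) :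
    ∃ V : ℕ → X, V 0 = start ∧
      (∀ j, j + 1 ≤ n → dist (V j) (V (j+1)) ≤ step + ε) ∧
      (∀ j, j ≤ n → ∀ i, dist (V j) (p j i) ≤ α j i + ε) := by
  set ε' : ℝ := ε / (n + 1) with hε'def
  have hε' : 0 < ε' := by positivity
  have hε'le : ∀ j : ℕ, j ≤ n + 1 → (j : ℝ) * ε' ≤ ε := by
    intro j hj
    have : (j : ℝ) ≤ (n : ℝ) + 1 := by exact_mod_cast hj
    calc (j : ℝ) * ε' ≤ ((n:ℝ)+1) * ε' := by
          apply mul_le_mul_of_nonneg_right this hε'.le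
      _ = ε := by rw [hε'def]; field_simp
  -- existence of next point
  have next_exists : ∀ (j : ℕ) (v : X), ∃ w : X,
      (j + 1 ≤ n → (∀ i, dist v (p j i) ≤ α j i + (j : ℝ) * ε') →
        (dist v w ≤ step + ((j:ℝ)+1) * ε' ∧
         ∀ i, dist w (p (j+1) i) ≤ α (j+1) i + ((j:ℝ)+1) * ε')) := by
    intro j v
    by_cases hjn : j + 1 ≤ n
    · by_cases hv : ∀ i, dist v (p j i) ≤ α j i + (j:ℝ) * ε'
      · -- use hyperconvexity with anchors v and p (j+1) i
        have hk' : 0 < k + 1 := Nat.succ_pos k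
        set P : Fin (k+1) → X := Fin.cons v (fun i => p (j+1) i) with hP
        set A : Fin (k+1) → ℝ :=
          Fin.cons (step + (j:ℝ) * ε') (fun i => α (j+1) i + (j:ℝ) * ε') with hA
        have hpair' : ∀ a b, dist (P a) (P b) ≤ A a + A b := by
          intro a b
          refine Fin.cases ?_ ?_ a
          · refine Fin.cases ?_ ?_ b
            · simp only [hP, hA, Fin.cons_zero, dist_self]
              have h0' : (0:ℝ) ≤ (j:ℝ) * ε' := by positivity
              linarith
            · intro i
              simp only [hP, hA, Fin.cons_zero, Fin.cons_succ]
              have h1 := hv i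
              have h2 := hmono j hjn i
              have h3 := dist_triangle v (p j i) (p (j+1) i)
              have h0' : (0:ℝ) ≤ (j:ℝ) * ε' := by positivity
              linarith
          · intro i
            refine Fin.cases ?_ ?_ b
            · simp only [hP, hA, Fin.cons_zero, Fin.cons_succ]
              rw [dist_comm]
              have h1 := hv i
              have h2 := hmono j hjn i
              have h3 := dist_triangle v (p j i) (p (j+1) i)
              have h0' : (0:ℝ) ≤ (j:ℝ) * ε' := by positivity
              linarith
            · intro i'
              simp only [hP, hA, Fin.cons_succ]
              have := hpair (j+1) hjn i i'
              have : dist (p (j+1) i) (p (j+1) i') ≤ α (j+1) i + α (j+1) i' := this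
              have hj0 : (0:ℝ) ≤ (j:ℝ) * ε' := by positivity
              linarith
        obtain ⟨w, hw⟩ := exists_hyperconvex_point hX hk' P A hpair' hε'
        refine ⟨w, fun _ _ => ⟨?_, ?_⟩⟩
        · have := hw 0
          simp only [hP, hA, Fin.cons_zero] at this
          rw [dist_comm]
          linarith
        · intro i
          have := hw i.succ
          simp only [hP, hA, Fin.cons_succ] at this
          linarith
      · exact ⟨v, fun _ h => absurd h hv⟩
    · exact ⟨v, fun h => absurd h hjn⟩
  -- build the sequence
  obtain ⟨V, hV0, hVs⟩ : ∃ V : ℕ → X, V 0 = start ∧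
      ∀ j, V (j+1) = Classical.choose (next_exists j (V j)) :=
    ⟨fun j => Nat.rec start (fun j ih => Classical.choose (next_exists j ih)) j, rfl, fun j => rfl⟩
  have inv : ∀ j, j ≤ n → ∀ i, dist (V j) (p j i) ≤ α j i + (j:ℝ) * ε' := by
    intro j
    induction j with
    | zero => intro _ i; rw [hV0]; simpa using h0 i
    | succ j ih =>
      intro hj i
      have hj' : j ≤ n := Nat.le_of_succ_le hj
      have hinv := ih hj'
      have hspec := Classical.choose_spec (next_exists j (V j)) hj hinv
      rw [hVs j]
      push_cast
      exact hspec.2 i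
  refine ⟨V, hV0, ?_, ?_⟩
  · intro j hj
    have hinv := inv j (Nat.le_of_succ_le hj)
    have hspec := Classical.choose_spec (next_exists j (V j)) hj hinv
    rw [hVs j]
    have h1 := hspec.1
    have h2 : ((j:ℝ)+1) * ε' ≤ ε := by
      have := hε'le (j+1) (by omega)
      push_cast at this
      linarith
    linarith
  · intro j hj i
    have h1 := inv j hj i
    have h2 : (j:ℝ) * ε' ≤ ε := hε'le j (by omega)
    linarith

end SZAux



namespace SZAux

/-- floor comparison helper -/
theorem floor_dist_bounds (u v : ℝ) (hu : 0 ≤ u) (hv : 0 ≤ v) :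
    |((⌊u⌋₊ : ℝ)) - (⌊v⌋₊ : ℝ)| ≤ |u - v| + 1 ∧ |u - v| - 1 ≤ |((⌊u⌋₊ : ℝ)) - (⌊v⌋₊ : ℝ)| := by
  rcases le_total u v with h | h
  · have h1 : (⌊u⌋₊ : ℕ) ≤ ⌊v⌋₊ := Nat.floor_le_floor h
    have h1' : ((⌊u⌋₊ : ℝ)) ≤ (⌊v⌋₊ : ℝ) := by exact_mod_cast h1
    have h2 : (⌊u⌋₊:ℝ) ≤ u := Nat.floor_le hu
    have h3 : u < ⌊u⌋₊ + 1 := Nat.lt_floor_add_one u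
    have h4 : (⌊v⌋₊:ℝ) ≤ v := Nat.floor_le hv
    have h5 : v < ⌊v⌋₊ + 1 := Nat.lt_floor_add_one v
    rw [abs_sub_comm, abs_of_nonneg (by linarith), abs_sub_comm u v, abs_of_nonneg (by linarith)]
    constructor <;> linarith
  · have h1 : (⌊v⌋₊ : ℕ) ≤ ⌊u⌋₊ := Nat.floor_le_floor h
    have h1' : ((⌊v⌋₊ : ℝ)) ≤ (⌊u⌋₊ : ℝ) := by exact_mod_cast h1
    have h2 : (⌊u⌋₊:ℝ) ≤ u := Nat.floor_le hu
    have h3 : u < ⌊u⌋₊ + 1 := Nat.lt_floor_add_one u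
    have h4 : (⌊v⌋₊:ℝ) ≤ v := Nat.floor_le hv
    have h5 : v < ⌊v⌋₊ + 1 := Nat.lt_floor_add_one v
    rw [abs_of_nonneg (by linarith), abs_of_nonneg (by linarith)]
    constructor <;> linarith

variable {X : Type w} [MetricSpace X]

set_option maxHeartbeats 2000000 in
/-- Key lemma: for a Morse geodesic line in an injective space, the distance from any
point to `l s` grows linearly in `|s - π z|`. -/
theorem star_lemma (hX : IsInjMetric.{u, v, w} X) {M : ℝ → ℝ → ℝ} {l : ℝ → X} {π : X → ℝ}
    (hl : Isometry l) (hproj : IsNearestPointProj l π) (hM : IsMorseLine l M) (z : X) (s : ℝ) :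
    Metric.infDist z (Set.range l) + |s - π z| ≤ dist z (l s) + (2 * max (M 1 4) 0 + 4) := by
  set m₁ : ℝ := max (M 1 4) 0 with hm₁def
  have hm₁ : 0 ≤ m₁ := le_max_right _ _
  set r : ℝ := Metric.infDist z (Set.range l) with hrdef
  have hr : dist z (l (π z)) = r := hproj z
  set L : ℝ := |s - π z| with hLdef
  set Dz : ℝ := dist z (l s) with hDzdef
  have hlls : dist (l (π z)) (l s) = L := by
    rw [hl.dist_eq, Real.dist_eq, abs_sub_comm]
  have h1 : r ≤ Dz := Metric.infDist_le_dist_of_mem ⟨s, rfl⟩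
  have h2 : Dz ≤ r + L := by
    have := dist_triangle z (l (π z)) (l s)
    rw [hr, hlls] at this
    exact this
  have h3 : L ≤ r + Dz := by
    have := dist_triangle (l (π z)) z (l s)
    rw [dist_comm (l (π z)) z, hr, hlls] at this
    exact this
  by_cases hLK : L ≤ 2 * m₁ + 4
  · linarith
  push_neg at hLK
  have hL4 : 4 < L := by linarith
  set g : ℝ := (r + Dz - L) / 2 with hgdef
  set t₀ : ℝ := (r - Dz + L) / 2 with ht₀def
  have hg0 : 0 ≤ g := by rw [hgdef]; linarith
  have ht₀0 : 0 ≤ t₀ := by rw [ht₀def]; linarith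
  have ht₀L : t₀ ≤ L / 2 := by rw [ht₀def]; linarith
  have hDzeq : Dz = L + g - t₀ := by rw [hgdef, ht₀def]; ring
  have hrgt : r = g + t₀ := by rw [hgdef, ht₀def]; ring
  set n : ℕ := ⌊L⌋₊ with hndef
  have hnL : (n : ℝ) ≤ L := Nat.floor_le (by linarith)
  have hnL2 : L < (n : ℝ) + 1 := Nat.lt_floor_add_one L
  set ε₀ : ℝ := 1 / ((n : ℝ) + 1) with hε₀def
  have hε₀ : 0 < ε₀ := by positivity
  have hε₀1 : ε₀ ≤ 1 := by
    rw [hε₀def]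
    rw [div_le_one (by positivity)]
    have : (0:ℝ) ≤ n := Nat.cast_nonneg n
    linarith
  -- chain construction
  obtain ⟨V, hV0, hVcons, hVanch⟩ := chain_exists hX (k := 2) (by norm_num)
    (fun _ => ![l s, z]) (fun j => ![L - j, g + |(j : ℝ) - t₀|]) (l (π z)) n 1 (by norm_num) hε₀
    (by
      intro i
      fin_cases i
      · simpa [hlls] using le_refl L
      · show dist (l (π z)) z ≤ g + |(0:ℕ) - t₀|
        rw [dist_comm, hr]
        push_cast
        rw [zero_sub, abs_neg, abs_of_nonneg ht₀0]
        linarith)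
    (by
      intro j hj i i'
      have hjL : (j : ℝ) ≤ L := le_trans (by exact_mod_cast hj) hnL
      fin_cases i <;> fin_cases i'
      · simpa using by linarith
      · show dist (l s) z ≤ (L - j) + (g + |(j:ℝ) - t₀|)
        rw [dist_comm, ← hDzdef]
        have h5 : (j:ℝ) - t₀ ≤ |(j:ℝ) - t₀| := le_abs_self _
        linarith
      · show dist z (l s) ≤ (g + |(j:ℝ) - t₀|) + (L - j)
        rw [← hDzdef]
        have h5 : (j:ℝ) - t₀ ≤ |(j:ℝ) - t₀| := le_abs_self _
        linarith
      · show dist z z ≤ (g + |(j:ℝ) - t₀|) + (g + |(j:ℝ) - t₀|)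
        rw [dist_self]
        have := abs_nonneg ((j:ℝ) - t₀)
        linarith)
    (by
      intro j hj i
      fin_cases i
      · show (L - j) + dist (l s) (l s) ≤ (L - ((j:ℕ)+1:ℕ)) + 1
        rw [dist_self]
        push_cast
        linarith
      · show (g + |(j:ℝ) - t₀|) + dist z z ≤ (g + |((j:ℕ)+1:ℕ) - t₀|) + 1
        rw [dist_self]
        have := abs_sub_abs_le_abs_sub ((j:ℝ) - t₀) (((j:ℝ)+1) - t₀)
        have h' : |((j:ℝ) - t₀) - (((j:ℝ)+1) - t₀)| = 1 := by
          rw [show ((j:ℝ) - t₀) - (((j:ℝ)+1) - t₀) = -1 by ring]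
          norm_num
        push_cast
        linarith)
  -- anchors: dist (V j) (l s) ≤ L - j + ε₀ ; dist (V j) z ≤ g + |j - t₀| + ε₀
  have hVls : ∀ j, j ≤ n → dist (V j) (l s) ≤ L - j + ε₀ := by
    intro j hj
    have := hVanch j hj 0
    simpa using this
  have hVz : ∀ j, j ≤ n → dist (V j) z ≤ g + |(j:ℝ) - t₀| + ε₀ := by
    intro j hj
    have := hVanch j hj 1
    simpa using this
  -- upper bound along chain
  have upper : ∀ i j : ℕ, i ≤ j → j ≤ n → dist (V i) (V j) ≤ ((j:ℝ) - i) * (1 + ε₀) := by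
    intro i j hij hjn
    induction j, hij using Nat.le_induction with
    | base => simp
    | succ j hij ih =>
      have h1 := hVcons j (by omega)
      have h2 := ih (by omega)
      have h3 := dist_triangle (V i) (V j) (V (j+1))
      have hij' : (i:ℝ) ≤ j := by exact_mod_cast hij
      push_cast
      push_cast at h2
      nlinarith [hε₀.le]
  -- the extended chain
  set W : ℕ → X := fun j => if j ≤ n then V j else l s with hWdef
  have hW0 : W 0 = l (π z) := by
    rw [hWdef]; simp only [if_pos (Nat.zero_le n)]; exact hV0
  have hWls_ub : ∀ j, j ≤ n + 1 → dist (W j) (l s) ≤ L - j + 1 + ε₀ := by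
    intro j hj
    by_cases h : j ≤ n
    · simp only [hWdef, if_pos h]
      have := hVls j h
      linarith
    · simp only [hWdef, if_neg h]
      have hj' : j = n + 1 := by omega
      rw [dist_self, hj']
      push_cast
      linarith
  have hWstart_ub : ∀ j, j ≤ n + 1 → dist (W 0) (W j) ≤ (j:ℝ) + 1 := by
    intro j hj
    by_cases h : j ≤ n
    · simp only [hWdef, if_pos (Nat.zero_le n), if_pos h]
      have := upper 0 j (Nat.zero_le j) h
      have hjn' : (j:ℝ) ≤ n := by exact_mod_cast h
      have hna : (0:ℝ) ≤ (j:ℝ) := Nat.cast_nonneg j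
      have : dist (V 0) (V j) ≤ ((j:ℝ)) * (1 + ε₀) := by simpa using this
      have hle : (j:ℝ) * ε₀ ≤ 1 := by
        rw [hε₀def, mul_one_div, div_le_one (by positivity)]
        linarith
      nlinarith
    · simp only [hWdef, if_pos (Nat.zero_le n), if_neg h]
      have hj' : j = n + 1 := by omega
      rw [hV0, hlls, hj']
      push_cast
      linarith
  have hWls_lb : ∀ j, j ≤ n + 1 → L - j - 1 ≤ dist (W j) (l s) := by
    intro j hj
    have h1 := hWstart_ub j hj
    have h2 := dist_triangle (W 0) (W j) (l s)
    rw [hW0] at h1 h2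
    rw [hlls] at h2
    linarith
  have hWub : ∀ i j : ℕ, i ≤ j → j ≤ n + 1 → dist (W i) (W j) ≤ ((j:ℝ) - i) + 2 := by
    intro i j hij hj
    by_cases h : j ≤ n
    · simp only [hWdef, if_pos h, if_pos (le_trans hij h)]
      have := upper i j hij h
      have h2 : ((j:ℝ) - i) * ε₀ ≤ 1 := by
        have : ((j:ℝ) - i) ≤ (n:ℝ) + 1 := by
          have : (j:ℝ) ≤ n := by exact_mod_cast h
          have : (0:ℝ) ≤ i := Nat.cast_nonneg i
          linarith
        calc ((j:ℝ) - i) * ε₀ ≤ ((n:ℝ)+1) * ε₀ := by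
              apply mul_le_mul_of_nonneg_right this hε₀.le
          _ = 1 := by rw [hε₀def]; field_simp
      nlinarith
    · have hj' : j = n + 1 := by omega
      subst hj'
      by_cases hi : i ≤ n
      · have h1 : dist (W i) (l s) ≤ L - i + 1 + ε₀ := hWls_ub i (by omega)
        have h2 : W (n+1) = l s := by simp only [hWdef, if_neg (by omega : ¬ n+1 ≤ n)]
        rw [h2]
        have : L ≤ (n:ℝ) + 1 := by linarith
        push_cast
        linarith
      · have hi' : i = n + 1 := by omega
        subst hi'
        rw [dist_self]
        push_cast
        linarith
  have hWlb : ∀ i j : ℕ, i ≤ j → j ≤ n + 1 → ((j:ℝ) - i) - 3 ≤ dist (W i) (W j) := by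
    intro i j hij hj
    have h1 := hWls_lb i (le_trans hij hj)
    have h2 := hWls_ub j hj
    have h3 := dist_triangle (W i) (W j) (l s)
    have h4 := dist_triangle (W i) (l s) (W j)
    rw [dist_comm (l s) (W j)] at h4
    have hij' : (i:ℝ) ≤ j := by exact_mod_cast hij
    linarith
  -- β and the Morse property
  set β : ℝ → X := fun u => W ⌊u⌋₊ with hβdef
  have hquasi : ∀ u ∈ Set.Icc (0:ℝ) ((n:ℝ)+1), ∀ t ∈ Set.Icc (0:ℝ) ((n:ℝ)+1),
      (1/(1:ℝ)) * |u - t| - 4 ≤ dist (β u) (β t) ∧ dist (β u) (β t) ≤ 1 * |u - t| + 4 := by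
    intro u hu t ht
    have hfu : (⌊u⌋₊ : ℕ) ≤ n + 1 := by
      have : (⌊u⌋₊:ℝ) ≤ u := Nat.floor_le hu.1
      have : (⌊u⌋₊:ℝ) ≤ (n:ℝ)+1 := le_trans this hu.2
      exact_mod_cast this
    have hft : (⌊t⌋₊ : ℕ) ≤ n + 1 := by
      have : (⌊t⌋₊:ℝ) ≤ t := Nat.floor_le ht.1
      have : (⌊t⌋₊:ℝ) ≤ (n:ℝ)+1 := le_trans this ht.2
      exact_mod_cast this
    obtain ⟨hfd1, hfd2⟩ := floor_dist_bounds u t hu.1 ht.1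
    rcases le_total (⌊u⌋₊ : ℕ) (⌊t⌋₊ : ℕ) with h | h
    · have hub := hWub _ _ h hft
      have hlb := hWlb _ _ h hft
      have habs : |((⌊u⌋₊:ℝ)) - (⌊t⌋₊:ℝ)| = (⌊t⌋₊:ℝ) - (⌊u⌋₊:ℝ) := by
        have hc : ((⌊u⌋₊:ℕ):ℝ) ≤ ((⌊t⌋₊:ℕ):ℝ) := by exact_mod_cast h
        rw [abs_sub_comm, abs_of_nonneg (by linarith)]
      constructor
      · rw [one_div_one, one_mul]
        show |u - t| - 4 ≤ dist (β u) (β t)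
        rw [hβdef]
        simp only
        have := hWlb _ _ h hft
        rw [habs] at hfd2
        linarith
      · rw [one_mul]
        rw [hβdef]
        simp only
        rw [habs] at hfd1
        linarith
    · have hub := hWub _ _ h hfu
      have hlb := hWlb _ _ h hfu
      have habs : |((⌊u⌋₊:ℝ)) - (⌊t⌋₊:ℝ)| = (⌊u⌋₊:ℝ) - (⌊t⌋₊:ℝ) := by
        apply abs_of_nonneg
        have : (⌊t⌋₊:ℝ) ≤ (⌊u⌋₊:ℝ) := by exact_mod_cast h
        linarith
      constructor
      · rw [one_div_one, one_mul]
        rw [hβdef]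
        simp only
        rw [dist_comm]
        rw [habs] at hfd2
        linarith
      · rw [one_mul]
        rw [hβdef]
        simp only
        rw [dist_comm]
        rw [habs] at hfd1
        linarith
  have hends0 : β 0 ∈ Set.range l := by
    rw [hβdef]
    simp only [Nat.floor_zero]
    rw [hW0]
    exact ⟨π z, rfl⟩
  have hends1 : β ((n:ℝ)+1) ∈ Set.range l := by
    rw [hβdef]
    simp only
    have : ⌊((n:ℝ)+1)⌋₊ = n + 1 := by
      rw [show ((n:ℝ)+1) = ((n+1:ℕ):ℝ) by push_cast; ring]
      exact Nat.floor_natCast _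
    rw [this, hWdef]
    simp only [if_neg (by omega : ¬ n+1 ≤ n)]
    exact ⟨s, rfl⟩
  have hmorse := hM 1 4 le_rfl (by norm_num) 0 ((n:ℝ)+1) β hquasi hends0 hends1
  -- apply at the apex
  set j' : ℕ := ⌈t₀⌉₊ with hj'def
  have hj'1 : (j' : ℝ) < t₀ + 1 := Nat.ceil_lt_add_one ht₀0
  have hj'2 : t₀ ≤ (j' : ℝ) := Nat.le_ceil t₀
  have hj'n : j' ≤ n := by
    have : (j':ℝ) < (n:ℝ) := by linarith
    exact_mod_cast this.le
  have hmem : ((j':ℕ):ℝ) ∈ Set.Icc (0:ℝ) ((n:ℝ)+1) := by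
    constructor
    · exact Nat.cast_nonneg j'
    · have : (j':ℝ) ≤ (n:ℝ) := by exact_mod_cast hj'n
      linarith
  have hap := hmorse ((j':ℕ):ℝ) hmem
  have hβj : β ((j':ℕ):ℝ) = V j' := by
    rw [hβdef]
    simp only [Nat.floor_natCast]
    rw [hWdef]
    simp only [if_pos hj'n]
  rw [hβj] at hap
  have hVjz : dist (V j') z ≤ g + 1 + ε₀ := by
    have := hVz j' hj'n
    have habs : |(j':ℝ) - t₀| ≤ 1 := by
      rw [abs_of_nonneg (by linarith)]
      linarith
    linarith
  have hfinal : r ≤ (max (M 1 4) 0) + (g + 1 + ε₀) := by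
    have h5 : Metric.infDist z (Set.range l) ≤
        Metric.infDist (V j') (Set.range l) + dist z (V j') :=
      Metric.infDist_le_infDist_add_dist
    rw [← hrdef] at h5
    rw [dist_comm z (V j')] at h5
    have h6 : M 1 4 ≤ max (M 1 4) 0 := le_max_left _ _
    linarith
  rw [← hm₁def] at hfinal
  have : t₀ ≤ m₁ + 2 := by
    rw [hrgt] at hfinal
    linarith
  rw [hDzeq, hrgt]
  linarith

end SZAux

namespace SZAux


section Stair

variable {P : ℝ}

/-- staircase horizontal coordinate -/
noncomputable def stφ (P t : ℝ) : ℝ := max 0 (min (t - P/4) P)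
/-- staircase vertical coordinate -/
noncomputable def stψ (P t : ℝ) : ℝ := min (min t (3*P/2 - t)) (P/4)

theorem stair_seg1 (hP : 0 < P) {t : ℝ} (h0 : 0 ≤ t) (h1 : t ≤ P/4) :
    stφ P t = 0 ∧ stψ P t = t := by
  constructor
  · apply max_eq_left
    have : min (t - P/4) P ≤ t - P/4 := min_le_left _ _
    linarith
  · rw [stψ, min_eq_left, min_eq_left] <;> [linarith; skip]
    rw [min_le_iff]; left; linarith

theorem stair_seg2 (hP : 0 < P) {t : ℝ} (h0 : P/4 ≤ t) (h1 : t ≤ 3*P/2 - P/4) :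
    stφ P t = t - P/4 ∧ stψ P t = P/4 := by
  constructor
  · rw [stφ, min_eq_left (by linarith), max_eq_right (by linarith)]
  · rw [stψ, min_eq_right]
    rw [le_min_iff]
    constructor <;> linarith

theorem stair_seg3 (hP : 0 < P) {t : ℝ} (h0 : 3*P/2 - P/4 ≤ t) (h1 : t ≤ 3*P/2) :
    stφ P t = P ∧ stψ P t = 3*P/2 - t := by
  constructor
  · rw [stφ, min_eq_right (by linarith), max_eq_right (by linarith)]
  · rw [stψ, min_eq_right (by linarith : 3*P/2 - t ≤ t), min_eq_left (by linarith)]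

theorem stair_range (hP : 0 < P) {t : ℝ} (h0 : 0 ≤ t) (h1 : t ≤ 3*P/2) :
    0 ≤ stφ P t ∧ stφ P t ≤ P ∧ 0 ≤ stψ P t ∧ stψ P t ≤ P/4 := by
  rcases le_total t (P/4) with h | h
  · obtain ⟨e1, e2⟩ := stair_seg1 hP h0 h
    rw [e1, e2]
    refine ⟨le_refl 0, hP.le, h0, h⟩
  · rcases le_total t (3*P/2 - P/4) with h' | h'
    · obtain ⟨e1, e2⟩ := stair_seg2 hP h h'
      rw [e1, e2]
      refine ⟨by linarith, by linarith, by linarith, le_refl _⟩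
    · obtain ⟨e1, e2⟩ := stair_seg3 hP h' h1
      rw [e1, e2]
      refine ⟨hP.le, le_refl _, by linarith, by linarith⟩

theorem stair_lip (hP : 0 < P) {s t : ℝ} (h0 : 0 ≤ s) (hst : s ≤ t) (h1 : t ≤ 3*P/2) :
    |stφ P t - stφ P s| + |stψ P t - stψ P s| ≤ t - s := by
  rcases le_total t (P/4) with ht | ht
  · obtain ⟨e1, e2⟩ := stair_seg1 hP h0 (le_trans hst ht)
    obtain ⟨f1, f2⟩ := stair_seg1 hP (le_trans h0 hst) ht
    rw [e1, e2, f1, f2]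
    rw [sub_zero, abs_zero, abs_of_nonneg (by linarith)]
    linarith
  · rcases le_total t (3*P/2 - P/4) with ht' | ht'
    · rcases le_total s (P/4) with hs | hs
      · obtain ⟨e1, e2⟩ := stair_seg1 hP h0 hs
        obtain ⟨f1, f2⟩ := stair_seg2 hP ht ht'
        rw [e1, e2, f1, f2, sub_zero, abs_of_nonneg (by linarith), abs_of_nonneg (by linarith)]
        linarith
      · obtain ⟨e1, e2⟩ := stair_seg2 hP hs (le_trans hst ht')
        obtain ⟨f1, f2⟩ := stair_seg2 hP ht ht'
        rw [e1, e2, f1, f2]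
        rw [show t - P/4 - (s - P/4) = t - s by ring, abs_of_nonneg (by linarith), sub_self,
          abs_zero]
        linarith
    · rcases le_total s (P/4) with hs | hs
      · obtain ⟨e1, e2⟩ := stair_seg1 hP h0 hs
        obtain ⟨f1, f2⟩ := stair_seg3 hP ht' h1
        rw [e1, e2, f1, f2, sub_zero, abs_of_nonneg hP.le]
        rcases abs_cases (3*P/2 - t - s) with ⟨h', h''⟩ | ⟨h', h''⟩ <;> rw [h'] <;> linarith
      · rcases le_total s (3*P/2 - P/4) with hs' | hs'
        · obtain ⟨e1, e2⟩ := stair_seg2 hP hs hs'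
          obtain ⟨f1, f2⟩ := stair_seg3 hP ht' h1
          rw [e1, e2, f1, f2, abs_of_nonneg (by linarith), abs_of_nonpos (by linarith)]
          linarith
        · obtain ⟨e1, e2⟩ := stair_seg3 hP hs' (le_trans hst h1)
          obtain ⟨f1, f2⟩ := stair_seg3 hP (le_trans hs' hst) h1
          rw [e1, e2, f1, f2, sub_self, abs_zero, abs_of_nonpos (by linarith)]
          linarith

theorem stair_prog (hP : 0 < P) {s t : ℝ} (h0 : 0 ≤ s) (hst : s ≤ t) (h1 : t ≤ 3*P/2) :
    (t - s)/2 ≤ |stφ P t - stφ P s| + |stψ P t - stψ P s| := by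
  rcases le_total t (P/4) with ht | ht
  · obtain ⟨e1, e2⟩ := stair_seg1 hP h0 (le_trans hst ht)
    obtain ⟨f1, f2⟩ := stair_seg1 hP (le_trans h0 hst) ht
    rw [e1, e2, f1, f2, sub_zero, abs_zero, abs_of_nonneg (by linarith)]
    linarith
  · rcases le_total t (3*P/2 - P/4) with ht' | ht'
    · rcases le_total s (P/4) with hs | hs
      · obtain ⟨e1, e2⟩ := stair_seg1 hP h0 hs
        obtain ⟨f1, f2⟩ := stair_seg2 hP ht ht'
        rw [e1, e2, f1, f2, sub_zero, abs_of_nonneg (by linarith), abs_of_nonneg (by linarith)]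
        linarith
      · obtain ⟨e1, e2⟩ := stair_seg2 hP hs (le_trans hst ht')
        obtain ⟨f1, f2⟩ := stair_seg2 hP ht ht'
        rw [e1, e2, f1, f2, show t - P/4 - (s - P/4) = t - s by ring,
          abs_of_nonneg (by linarith), sub_self, abs_zero]
        linarith
    · rcases le_total s (P/4) with hs | hs
      · obtain ⟨e1, e2⟩ := stair_seg1 hP h0 hs
        obtain ⟨f1, f2⟩ := stair_seg3 hP ht' h1
        rw [e1, e2, f1, f2, sub_zero, abs_of_nonneg hP.le]
        have := abs_nonneg (3*P/2 - t - s)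
        linarith
      · rcases le_total s (3*P/2 - P/4) with hs' | hs'
        · obtain ⟨e1, e2⟩ := stair_seg2 hP hs hs'
          obtain ⟨f1, f2⟩ := stair_seg3 hP ht' h1
          rw [e1, e2, f1, f2, abs_of_nonneg (by linarith), abs_of_nonpos (by linarith)]
          linarith
        · obtain ⟨e1, e2⟩ := stair_seg3 hP hs' (le_trans hst h1)
          obtain ⟨f1, f2⟩ := stair_seg3 hP (le_trans hs' hst) h1
          rw [e1, e2, f1, f2, sub_self, abs_zero, abs_of_nonpos (by linarith)]
          linarith

theorem stair_zero (hP : 0 < P) : stφ P 0 = 0 ∧ stψ P 0 = 0 :=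
  stair_seg1 hP le_rfl (by linarith)

theorem stair_end (hP : 0 < P) : stφ P (3*P/2) = P ∧ stψ P (3*P/2) = 0 := by
  obtain ⟨e1, e2⟩ := stair_seg3 hP (by linarith) le_rfl
  rw [e1, e2]
  constructor
  · rfl
  · ring

theorem stair_top (hP : 0 < P) {t : ℝ} (h0 : P/4 ≤ t) (h1 : t ≤ 3*P/2 - P/4) :
    stψ P t = P/4 := (stair_seg2 hP h0 h1).2

end Stair

end SZAux

namespace SZAux

variable {X : Type w} [MetricSpace X]

set_option maxHeartbeats 4000000 in
/-- Core bound: one-sided projection bound for a point `x` at distance from `c` at most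
`infDist c (range l)`. -/
theorem core_bound (hX : IsInjMetric.{u, v, w} X) {M : ℝ → ℝ → ℝ} {l : ℝ → X} {π : X → ℝ}
    (hl : Isometry l) (hproj : IsNearestPointProj l π) (hM : IsMorseLine l M)
    (c x : X) (hcx : dist c x ≤ Metric.infDist c (Set.range l)) :
    π x - π c ≤ 4 * max (M 4 (2*(2*max (M 1 4) 0 + 4) + 8)) 0
      + 10 * (2*max (M 1 4) 0 + 4) + 100 := by
  have hstar := fun (z : X) (s : ℝ) => star_lemma hX hl hproj hM z s
  set mm1 : ℝ := max (M 1 4) 0 with hmm1def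
  have hmm1 : 0 ≤ mm1 := le_max_right _ _
  set KK : ℝ := 2*mm1 + 4 with hKKdef
  have hKK4 : 4 ≤ KK := by rw [hKKdef]; linarith
  set QQ : ℝ := 2*KK + 8 with hQQdef
  set mm2 : ℝ := max (M 4 QQ) 0 with hmm2def
  have hmm2 : 0 ≤ mm2 := le_max_right _ _
  by_contra hcon
  push_neg at hcon
  set pc : ℝ := π c with hpcdef
  set px : ℝ := π x with hpxdef
  set P : ℝ := px - pc with hPdef
  have hDP : 4*mm2 + 10*KK + 100 < P := hcon
  have hP0 : 0 < P := by linarith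
  have hPK : 10*KK < P := by linarith
  have hP100 : 100 < P := by linarith
  set R : ℝ := Metric.infDist c (Set.range l) with hRdef
  set r : ℝ := Metric.infDist x (Set.range l) with hrdef
  have hdc : dist c (l pc) = R := by rw [hpcdef, hRdef]; exact hproj c
  have hdx : dist x (l px) = r := by rw [hpxdef, hrdef]; exact hproj x
  have hstarc : ∀ s, R + |s - pc| ≤ dist c (l s) + KK := by
    intro s
    have h := hstar c s
    rw [← hRdef, ← hpcdef] at h
    exact h
  have hstarx : ∀ s, r + |s - px| ≤ dist x (l s) + KK := by
    intro s
    have h := hstar x s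
    rw [← hrdef, ← hpxdef] at h
    exact h
  have hcxR : dist c x ≤ R := by rw [hRdef]; exact hcx
  have hdlpcpx : dist (l pc) (l px) = P := by
    rw [hl.dist_eq, Real.dist_eq, abs_sub_comm, show px - pc = P from hPdef.symm,
      abs_of_pos hP0]
  have hpxeq : pc + P = px := by rw [hPdef]; ring
  -- basic bounds
  have hrlow : P - KK ≤ r := by
    have h1 := hstarc px
    have h2 : |px - pc| = P := by rw [show px - pc = P from hPdef.symm, abs_of_pos hP0]
    have h3 : dist c (l px) ≤ dist c x + r := by
      have h4 := dist_triangle c x (l px)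
      rw [hdx] at h4
      exact h4
    rw [h2] at h1
    linarith
  have hRlow : P / 4 ≤ R := by
    have h1 := dist_triangle (l pc) c (l px)
    rw [hdlpcpx, dist_comm (l pc) c, hdc] at h1
    have h2 := dist_triangle c x (l px)
    rw [hdx] at h2
    have h3 : r ≤ dist c x + R := by
      have h4 : r ≤ dist x (l pc) := by
        rw [hrdef]
        exact Metric.infDist_le_dist_of_mem ⟨pc, rfl⟩
      have h5 := dist_triangle x c (l pc)
      rw [dist_comm x c, hdc] at h5
      linarith
    linarith
  set θ : ℝ := P / 4 with hθdef
  have hθ0 : 0 < θ := by rw [hθdef]; linarith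
  have hθr : θ ≤ r := by rw [hθdef]; linarith
  have hθR : θ ≤ R := by rw [hθdef]; linarith
  have hθP : P = 4*θ := by rw [hθdef]; ring
  set T : ℝ := 3 * P / 2 with hTdef
  have hT1 : 1 ≤ T := by rw [hTdef]; linarith
  set n : ℕ := ⌈T⌉₊ with hndef
  have hnT : T ≤ (n : ℝ) := Nat.le_ceil T
  have hnT2 : (n : ℝ) < T + 1 := Nat.ceil_lt_add_one (by linarith)
  have hn0 : (0:ℝ) < (n:ℝ) := by linarith
  set τ : ℝ := T / n with hτdef
  have hτ0 : 0 < τ := by rw [hτdef]; positivity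
  have hτ1 : τ ≤ 1 := by rw [hτdef, div_le_one hn0]; linarith
  have hτh : 1/2 ≤ τ := by
    rw [hτdef, le_div_iff₀ hn0]
    linarith
  have htnT : (n : ℝ) * τ = T := by
    rw [hτdef]
    field_simp
  set ε₀ : ℝ := 1 / ((n:ℝ) + 1) with hε₀def
  have hε₀ : 0 < ε₀ := by rw [hε₀def]; positivity
  have hε₀1 : ε₀ ≤ 1 := by
    rw [hε₀def, div_le_one (by positivity)]
    linarith
  have hmemt : ∀ j : ℕ, j ≤ n → 0 ≤ (j:ℝ)*τ ∧ (j:ℝ)*τ ≤ 3*P/2 := by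
    intro j hj
    constructor
    · positivity
    · have h1 : (j:ℝ) ≤ n := by exact_mod_cast hj
      have h2 := mul_le_mul_of_nonneg_right h1 hτ0.le
      rw [htnT, hTdef] at h2
      linarith
  set F : ℕ → ℝ := fun j => stφ P ((j:ℝ)*τ) with hFdef
  set S : ℕ → ℝ := fun j => stψ P ((j:ℝ)*τ) with hSdef
  have hFS : ∀ j : ℕ, j ≤ n → 0 ≤ F j ∧ F j ≤ P ∧ 0 ≤ S j ∧ S j ≤ θ := by
    intro j hj
    obtain ⟨h1, h2⟩ := hmemt j hj
    rw [hFdef, hSdef, hθdef]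
    exact stair_range hP0 h1 h2
  have hF0 : F 0 = 0 ∧ S 0 = 0 := by
    rw [hFdef, hSdef]
    simp only [Nat.cast_zero, zero_mul]
    exact stair_zero hP0
  have hFn : F n = P ∧ S n = 0 := by
    rw [hFdef, hSdef]
    simp only [htnT, hTdef]
    exact stair_end hP0
  have hdistlc : ∀ j : ℕ, j ≤ n → dist (l (pc + F j)) c ≤ R + F j := by
    intro j hj
    obtain ⟨hf0, hfP, hs0, hsθ⟩ := hFS j hj
    have h1 := dist_triangle (l (pc + F j)) (l pc) c
    have h2 : dist (l (pc + F j)) (l pc) = F j := by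
      rw [hl.dist_eq, Real.dist_eq, add_sub_cancel_left, abs_of_nonneg hf0]
    rw [h2, dist_comm (l pc) c, hdc] at h1
    linarith
  have hdistlx : ∀ j : ℕ, j ≤ n → dist (l (pc + F j)) x ≤ r + (P - F j) := by
    intro j hj
    obtain ⟨hf0, hfP, hs0, hsθ⟩ := hFS j hj
    have h1 := dist_triangle (l (pc + F j)) (l px) x
    have h2 : dist (l (pc + F j)) (l px) = P - F j := by
      rw [hl.dist_eq, Real.dist_eq,
        show pc + F j - px = -(P - F j) by rw [hPdef]; ring, abs_neg,
        abs_of_nonneg (by linarith)]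
    rw [h2, dist_comm (l px) x, hdx] at h1
    linarith
  -- the chain
  obtain ⟨V, hV0, hVcons, hVanch⟩ := chain_exists hX (k := 3) (by norm_num)
    (fun j => ![l (pc + F j), c, x])
    (fun j => ![S j, R - S j + F j, r - S j + (P - F j)])
    (l pc) n τ hτ0.le hε₀
    (by
      intro i
      fin_cases i
      · show dist (l pc) (l (pc + F 0)) ≤ S 0
        rw [hF0.1, hF0.2, add_zero, dist_self]
      · show dist (l pc) c ≤ R - S 0 + F 0
        rw [hF0.1, hF0.2, dist_comm, hdc]
        linarith []
      · show dist (l pc) x ≤ r - S 0 + (P - F 0)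
        rw [hF0.1, hF0.2]
        have h1 := dist_triangle (l pc) (l px) x
        rw [dist_comm (l px) x, hdx, hdlpcpx] at h1
        linarith [h1])
    (by
      intro j hj i i'
      obtain ⟨hf0, hfP, hs0, hsθ⟩ := hFS j hj
      have hlc := hdistlc j hj
      have hlx := hdistlx j hj
      fin_cases i <;> fin_cases i'
      · show dist (l (pc + F j)) (l (pc + F j)) ≤ S j + S j
        rw [dist_self]; linarith [hs0]
      · show dist (l (pc + F j)) c ≤ S j + (R - S j + F j)
        linarith [hlc]
      · show dist (l (pc + F j)) x ≤ S j + (r - S j + (P - F j))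
        linarith [hlx]
      · show dist c (l (pc + F j)) ≤ (R - S j + F j) + S j
        rw [dist_comm]; linarith [hlc]
      · show dist c c ≤ (R - S j + F j) + (R - S j + F j)
        rw [dist_self]; linarith [hsθ, hθR, hf0]
      · show dist c x ≤ (R - S j + F j) + (r - S j + (P - F j))
        linarith [hcxR, hsθ, hθr, hθ0, hθP, hf0, hfP]
      · show dist x (l (pc + F j)) ≤ (r - S j + (P - F j)) + S j
        rw [dist_comm]; linarith [hlx]
      · show dist x c ≤ (r - S j + (P - F j)) + (R - S j + F j)
        rw [dist_comm]
        linarith [hcxR, hsθ, hθr, hθ0, hθP, hf0, hfP]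
      · show dist x x ≤ (r - S j + (P - F j)) + (r - S j + (P - F j))
        rw [dist_self]; linarith [hsθ, hθr, hfP])
    (by
      intro j hj i
      obtain ⟨ht0, htT⟩ := hmemt j (by omega)
      have hstep : ((j:ℝ)*τ) ≤ (((j+1:ℕ)):ℝ)*τ := by
        push_cast
        have hle : (j:ℝ) ≤ (j:ℝ)+1 := by linarith []
        exact mul_le_mul_of_nonneg_right hle hτ0.le
      have htT' : (((j+1:ℕ)):ℝ)*τ ≤ 3*P/2 := (hmemt (j+1) hj).2
      have hlip := stair_lip hP0 ht0 hstep htT'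
      have heq : ((((j+1:ℕ))):ℝ)*τ - ((j:ℝ))*τ = τ := by push_cast; ring
      rw [heq] at hlip
      have hlipτ : |F (j+1) - F j| + |S (j+1) - S j| ≤ τ := hlip
      have ha1 : F j - F (j+1) ≤ |F (j+1) - F j| := by
        rw [abs_sub_comm]; exact le_abs_self _
      have ha2 : F (j+1) - F j ≤ |F (j+1) - F j| := le_abs_self _
      have ha3 : S j - S (j+1) ≤ |S (j+1) - S j| := by
        rw [abs_sub_comm]; exact le_abs_self _
      have ha4 : S (j+1) - S j ≤ |S (j+1) - S j| := le_abs_self _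
      have habs0 : (0:ℝ) ≤ |F (j+1) - F j| := abs_nonneg _
      have habs0' : (0:ℝ) ≤ |S (j+1) - S j| := abs_nonneg _
      fin_cases i
      · show S j + dist (l (pc + F j)) (l (pc + F (j+1))) ≤ S (j+1) + τ
        have hd : dist (l (pc + F j)) (l (pc + F (j+1))) = |F (j+1) - F j| := by
          rw [hl.dist_eq, Real.dist_eq,
            show pc + F j - (pc + F (j+1)) = -(F (j+1) - F j) by ring, abs_neg]
        rw [hd]
        linarith [hlipτ, ha3]
      · show (R - S j + F j) + dist c c ≤ (R - S (j+1) + F (j+1)) + τ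
        rw [dist_self]
        linarith [hlipτ, ha1, ha4]
      · show (r - S j + (P - F j)) + dist x x ≤ (r - S (j+1) + (P - F (j+1))) + τ
        rw [dist_self]
        linarith [hlipτ, ha2, ha4])
  -- specialize anchors
  have hC1 : ∀ j, j ≤ n → dist (V j) (l (pc + F j)) ≤ S j + ε₀ := by
    intro j hj
    have := hVanch j hj 0
    simpa using this
  have hC2 : ∀ j, j ≤ n → dist (V j) c ≤ R - S j + F j + ε₀ := by
    intro j hj
    have := hVanch j hj 1
    simpa using this
  have hC3 : ∀ j, j ≤ n → dist (V j) x ≤ r - S j + (P - F j) + ε₀ := by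
    intro j hj
    have := hVanch j hj 2
    simpa using this
  have hH : ∀ j, j ≤ n → Metric.infDist (V j) (Set.range l) ≤ S j + ε₀ := by
    intro j hj
    exact le_trans (Metric.infDist_le_dist_of_mem ⟨pc + F j, rfl⟩) (hC1 j hj)
  have hprojV : ∀ j : ℕ, dist (V j) (l (π (V j))) = Metric.infDist (V j) (Set.range l) :=
    fun j => hproj (V j)
  -- pins
  have pinR : ∀ j, j ≤ n → |π (V j) - pc| ≤ F j +
      (Metric.infDist (V j) (Set.range l) - S j + KK + ε₀) := by
    intro j hj
    have h1 := hstarc (π (V j))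
    have h2 := dist_triangle c (V j) (l (π (V j)))
    rw [hprojV j] at h2
    rw [dist_comm c (V j)] at h2
    have h3 := hC2 j hj
    linarith [h1, h2, h3]
  have pinL : ∀ j, j ≤ n → |π (V j) - px| ≤ (P - F j) +
      (Metric.infDist (V j) (Set.range l) - S j + KK + ε₀) := by
    intro j hj
    have h1 := hstarx (π (V j))
    have h2 := dist_triangle x (V j) (l (π (V j)))
    rw [hprojV j] at h2
    rw [dist_comm x (V j)] at h2
    have h3 := hC3 j hj
    linarith [h1, h2, h3]
  have pinabs : ∀ j, j ≤ n → |π (V j) - (pc + F j)| ≤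
      Metric.infDist (V j) (Set.range l) - S j + KK + ε₀ := by
    intro j hj
    have h1 := pinR j hj
    have h2 := pinL j hj
    have h1' := (abs_le.1 h1).2
    have h2' := (abs_le.1 h2).1
    rw [abs_le]
    constructor
    · linarith [h2', hpxeq]
    · linarith [h1']
  have hE0 : ∀ j, j ≤ n → 0 ≤ Metric.infDist (V j) (Set.range l) - S j + KK + ε₀ :=
    fun j hj => le_trans (abs_nonneg _) (pinabs j hj)
  -- lower bounds on pairs
  have Vlb1 : ∀ i, i ≤ n → ∀ j, j ≤ n →
      |F j - F i| + S i - S j - (2*KK + 2*ε₀) ≤ dist (V i) (V j) := by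
    intro i hi j hj
    have h1 := hstar (V i) (pc + F j)
    have h2 : |F j - F i| ≤ |pc + F j - π (V i)| + |π (V i) - (pc + F i)| := by
      have h := abs_add_le (pc + F j - π (V i)) (π (V i) - (pc + F i))
      rw [show pc + F j - π (V i) + (π (V i) - (pc + F i)) = F j - F i by ring] at h
      exact h
    have h3 := pinabs i hi
    have h4 := dist_triangle (V i) (V j) (l (pc + F j))
    have h5 := hC1 j hj
    linarith [h1, h2, h3, h4, h5]
  have Vlb2 : ∀ i, i ≤ n → ∀ j, j ≤ n →
      |F j - F i| + |S j - S i| - (2*KK + 2) ≤ dist (V i) (V j) := by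
    intro i hi j hj
    rcases le_total (S i) (S j) with h | h
    · have h1 := Vlb1 j hj i hi
      rw [dist_comm (V j) (V i), abs_sub_comm (F i) (F j)] at h1
      rw [abs_of_nonneg (by linarith [h] : (0:ℝ) ≤ S j - S i)]
      linarith [h1, hε₀1]
    · have h1 := Vlb1 i hi j hj
      rw [abs_of_nonpos (by linarith [h] : S j - S i ≤ 0)]
      linarith [h1, hε₀1]
  have Vlb3 : ∀ i j : ℕ, i ≤ j → j ≤ n →
      ((j:ℝ) - i)*τ/2 - (2*KK + 2) ≤ dist (V i) (V j) := by
    intro i j hij hj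
    obtain ⟨hi0, hiT⟩ := hmemt i (le_trans hij hj)
    obtain ⟨hj0, hjT⟩ := hmemt j hj
    have hstep : (i:ℝ)*τ ≤ (j:ℝ)*τ := by
      have hle : (i:ℝ) ≤ j := by exact_mod_cast hij
      exact mul_le_mul_of_nonneg_right hle hτ0.le
    have hprog := stair_prog hP0 hi0 hstep hjT
    have h1 := Vlb2 i (le_trans hij hj) j hj
    have heq : ((j:ℝ)*τ - (i:ℝ)*τ) = ((j:ℝ) - i)*τ := by ring
    rw [heq] at hprog
    have hFeq : stφ P ((j:ℝ)*τ) - stφ P ((i:ℝ)*τ) = F j - F i := by rw [hFdef]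
    have hSeq : stψ P ((j:ℝ)*τ) - stψ P ((i:ℝ)*τ) = S j - S i := by rw [hSdef]
    rw [hFeq, hSeq] at hprog
    have ha : |F j - F i| = |F j - F i| := rfl
    have hb1 : F j - F i ≤ |F j - F i| := le_abs_self _
    have hb2 : S j - S i ≤ |S j - S i| := le_abs_self _
    linarith [hprog, h1, hb1, hb2]
  -- upper bound along chain
  have upperV : ∀ i j : ℕ, i ≤ j → j ≤ n → dist (V i) (V j) ≤ ((j:ℝ) - i) * (τ + ε₀) := by
    intro i j hij hjn
    induction j, hij using Nat.le_induction with
    | base => simp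
    | succ j hij ih =>
      have h1 := hVcons j (by omega)
      have h2 := ih (by omega)
      have h3 := dist_triangle (V i) (V j) (V (j+1))
      have hij' : (i:ℝ) ≤ j := by exact_mod_cast hij
      push_cast
      push_cast at h2
      have hexp : ((j:ℝ)+1-i)*(τ+ε₀) = ((j:ℝ)-i)*(τ+ε₀) + (τ+ε₀) := by ring
      linarith [h1, h2, h3, hexp]
  have hVnpx : dist (V n) (l px) ≤ ε₀ := by
    have h := hC1 n le_rfl
    rw [hFn.1, hFn.2, hpxeq] at h
    linarith
  -- extended chain
  set W : ℕ → X := fun j => if j ≤ n then V j else l px with hWdef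
  have hWV : ∀ j, j ≤ n → W j = V j := by
    intro j hj
    simp only [hWdef, if_pos hj]
  have hWn1 : W (n+1) = l px := by
    simp only [hWdef, if_neg (by omega : ¬ n+1 ≤ n)]
  have hW0 : W 0 = l pc := by rw [hWV 0 (Nat.zero_le n), hV0]
  have hsum1 : ((n:ℝ)+1) * ε₀ = 1 := by
    rw [hε₀def]
    field_simp
  have Wub : ∀ i j : ℕ, i ≤ j → j ≤ n + 1 → dist (W i) (W j) ≤ ((j:ℝ) - i) + 2 := by
    intro i j hij hj
    by_cases h : j ≤ n
    · rw [hWV i (le_trans hij h), hWV j h]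
      have h1 := upperV i j hij h
      have h2 : ((j:ℝ) - i) * ε₀ ≤ 1 := by
        have hji : ((j:ℝ) - i) ≤ (n:ℝ) + 1 := by
          have : (j:ℝ) ≤ n := by exact_mod_cast h
          have : (0:ℝ) ≤ i := Nat.cast_nonneg i
          linarith
        calc ((j:ℝ) - i) * ε₀ ≤ ((n:ℝ)+1) * ε₀ :=
              mul_le_mul_of_nonneg_right hji hε₀.le
          _ = 1 := hsum1
      have h0 : (0:ℝ) ≤ (j:ℝ) - i := by
        have : (i:ℝ) ≤ j := by exact_mod_cast hij
        linarith [this]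
      have hmul : ((j:ℝ)-i)*τ ≤ ((j:ℝ)-i) := mul_le_of_le_one_right h0 hτ1
      have hexp : ((j:ℝ)-i)*(τ+ε₀) = ((j:ℝ)-i)*τ + ((j:ℝ)-i)*ε₀ := by ring
      linarith [h1, h2, hmul, hexp]
    · have hj' : j = n + 1 := by omega
      subst hj'
      rw [hWn1]
      by_cases hi : i ≤ n
      · rw [hWV i hi]
        have h1 := upperV i n hi le_rfl
        have h2 := dist_triangle (V i) (V n) (l px)
        have h3 : ((n:ℝ) - i) * ε₀ ≤ 1 := by
          have hji : ((n:ℝ) - i) ≤ (n:ℝ) + 1 := by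
            have : (0:ℝ) ≤ i := Nat.cast_nonneg i
            linarith
          calc ((n:ℝ) - i) * ε₀ ≤ ((n:ℝ)+1) * ε₀ :=
                mul_le_mul_of_nonneg_right hji hε₀.le
            _ = 1 := hsum1
        have h0 : (0:ℝ) ≤ (n:ℝ) - i := by
          have : (i:ℝ) ≤ n := by exact_mod_cast hi
          linarith [this]
        have hmul : ((n:ℝ)-i)*τ ≤ ((n:ℝ)-i) := mul_le_of_le_one_right h0 hτ1
        have hexp : ((n:ℝ)-i)*(τ+ε₀) = ((n:ℝ)-i)*τ + ((n:ℝ)-i)*ε₀ := by ring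
        push_cast
        linarith [h1, h2, h3, hmul, hexp, hVnpx, hε₀1]
      · have hi' : i = n + 1 := by omega
        subst hi'
        rw [hWn1, dist_self]
        push_cast
        linarith []
  have Wlb : ∀ i j : ℕ, i ≤ j → j ≤ n + 1 →
      ((j:ℝ) - i)/4 - (2*KK + 6) ≤ dist (W i) (W j) := by
    intro i j hij hj
    by_cases h : j ≤ n
    · rw [hWV i (le_trans hij h), hWV j h]
      have h1 := Vlb3 i j hij h
      have h0 : (0:ℝ) ≤ (j:ℝ) - i := by
        have hle : (i:ℝ) ≤ j := by exact_mod_cast hij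
        linarith
      have hmul : ((j:ℝ)-i)*(1/2) ≤ ((j:ℝ)-i)*τ := mul_le_mul_of_nonneg_left hτh h0
      linarith [h1, hmul, hKK4]
    · have hj' : j = n + 1 := by omega
      subst hj'
      rw [hWn1]
      by_cases hi : i ≤ n
      · rw [hWV i hi]
        have h1 := Vlb3 i n hi le_rfl
        have h2 := dist_triangle (V i) (l px) (V n)
        rw [dist_comm (l px) (V n)] at h2
        have h0 : (0:ℝ) ≤ (n:ℝ) - i := by
          have hle : (i:ℝ) ≤ n := by exact_mod_cast hi
          linarith
        have hmul : ((n:ℝ)-i)*(1/2) ≤ ((n:ℝ)-i)*τ := mul_le_mul_of_nonneg_left hτh h0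
        push_cast
        linarith [h1, h2, hmul, hVnpx, hε₀1, hKK4]
      · have hi' : i = n + 1 := by omega
        subst hi'
        rw [hWn1, dist_self]
        push_cast
        linarith [hKK4]
  -- the quasi-geodesic
  set β : ℝ → X := fun u => W ⌊u⌋₊ with hβdef
  have hQQ8 : (16:ℝ) ≤ QQ := by rw [hQQdef]; linarith
  have hquasi : ∀ u ∈ Set.Icc (0:ℝ) ((n:ℝ)+1), ∀ t ∈ Set.Icc (0:ℝ) ((n:ℝ)+1),
      (1/(4:ℝ)) * |u - t| - QQ ≤ dist (β u) (β t) ∧ dist (β u) (β t) ≤ 4 * |u - t| + QQ := by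
    intro u hu t ht
    have hfu : (⌊u⌋₊ : ℕ) ≤ n + 1 := by
      have h1 : (⌊u⌋₊:ℝ) ≤ u := Nat.floor_le hu.1
      have h2 : (⌊u⌋₊:ℝ) ≤ (n:ℝ)+1 := le_trans h1 hu.2
      exact_mod_cast h2
    have hft : (⌊t⌋₊ : ℕ) ≤ n + 1 := by
      have h1 : (⌊t⌋₊:ℝ) ≤ t := Nat.floor_le ht.1
      have h2 : (⌊t⌋₊:ℝ) ≤ (n:ℝ)+1 := le_trans h1 ht.2
      exact_mod_cast h2
    obtain ⟨hfd1, hfd2⟩ := floor_dist_bounds u t hu.1 ht.1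
    have habs0 : (0:ℝ) ≤ |u - t| := abs_nonneg _
    rcases le_total (⌊u⌋₊ : ℕ) (⌊t⌋₊ : ℕ) with h | h
    · have hub := Wub _ _ h hft
      have hlb := Wlb _ _ h hft
      have habs : |((⌊u⌋₊:ℝ)) - (⌊t⌋₊:ℝ)| = (⌊t⌋₊:ℝ) - (⌊u⌋₊:ℝ) := by
        have hc : ((⌊u⌋₊:ℕ):ℝ) ≤ ((⌊t⌋₊:ℕ):ℝ) := by exact_mod_cast h
        rw [abs_sub_comm, abs_of_nonneg (by linarith)]
      rw [habs] at hfd1 hfd2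
      constructor
      · show (1/(4:ℝ)) * |u - t| - QQ ≤ dist (W ⌊u⌋₊) (W ⌊t⌋₊)
        linarith [hub, hlb, hfd1, hfd2, hQQ8, hQQdef, habs0]
      · show dist (W ⌊u⌋₊) (W ⌊t⌋₊) ≤ 4 * |u - t| + QQ
        linarith [hub, hlb, hfd1, hfd2, hQQ8, hQQdef, habs0]
    · have hub := Wub _ _ h hfu
      have hlb := Wlb _ _ h hfu
      have habs : |((⌊u⌋₊:ℝ)) - (⌊t⌋₊:ℝ)| = (⌊u⌋₊:ℝ) - (⌊t⌋₊:ℝ) := by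
        have hc : ((⌊t⌋₊:ℕ):ℝ) ≤ ((⌊u⌋₊:ℕ):ℝ) := by exact_mod_cast h
        rw [abs_of_nonneg (by linarith)]
      rw [habs] at hfd1 hfd2
      rw [show dist (β u) (β t) = dist (W ⌊t⌋₊) (W ⌊u⌋₊) from dist_comm _ _]
      constructor
      · linarith [hub, hlb, hfd1, hfd2, hQQ8, hQQdef, habs0]
      · linarith [hub, hlb, hfd1, hfd2, hQQ8, hQQdef, habs0]
  have hends0 : β 0 ∈ Set.range l := by
    show W ⌊(0:ℝ)⌋₊ ∈ Set.range l
    rw [Nat.floor_zero, hW0]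
    exact ⟨pc, rfl⟩
  have hends1 : β ((n:ℝ)+1) ∈ Set.range l := by
    show W ⌊((n:ℝ)+1)⌋₊ ∈ Set.range l
    rw [show ((n:ℝ)+1) = ((n+1:ℕ):ℝ) by push_cast; ring, Nat.floor_natCast, hWn1]
    exact ⟨px, rfl⟩
  have hmorse := hM 4 QQ (by norm_num) (by linarith) 0 ((n:ℝ)+1) β hquasi hends0 hends1
  -- the apex
  set j' : ℕ := ⌈θ/τ⌉₊ with hj'def
  have hθτ0 : 0 ≤ θ/τ := by positivity
  have hj'a : θ/τ ≤ (j':ℝ) := Nat.le_ceil _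
  have hj'b : (j':ℝ) < θ/τ + 1 := Nat.ceil_lt_add_one hθτ0
  have ht1 : θ ≤ (j':ℝ)*τ := by
    have := mul_le_mul_of_nonneg_right hj'a hτ0.le
    rw [div_mul_cancel₀ θ (ne_of_gt hτ0)] at this
    exact this
  have ht2 : (j':ℝ)*τ ≤ θ + 1 := by
    have := mul_le_mul_of_nonneg_right hj'b.le hτ0.le
    rw [add_mul, div_mul_cancel₀ θ (ne_of_gt hτ0), one_mul] at this
    linarith
  have ht3 : (j':ℝ)*τ ≤ 3*P/2 - P/4 := by
    rw [hθdef] at ht2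
    linarith
  have hψj' : S j' = θ := by
    rw [hSdef, hθdef]
    exact stair_top hP0 (by rw [hθdef] at ht1; exact ht1) ht3
  have hj'n : j' ≤ n := by
    have h1 : (j':ℝ)*τ < (n:ℝ)*τ := by
      rw [htnT, hTdef]
      rw [hθdef] at ht2
      linarith [ht2, hP100]
    have h2 : (j':ℝ) < (n:ℝ) := lt_of_mul_lt_mul_right h1 hτ0.le
    have h3 : j' < n := by exact_mod_cast h2
    exact h3.le
  have hmem : ((j':ℕ):ℝ) ∈ Set.Icc (0:ℝ) ((n:ℝ)+1) := by
    constructor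
    · exact Nat.cast_nonneg j'
    · have : (j':ℝ) ≤ (n:ℝ) := by exact_mod_cast hj'n
      linarith
  have hap := hmorse ((j':ℕ):ℝ) hmem
  have hβj : β ((j':ℕ):ℝ) = V j' := by
    show W ⌊((j':ℕ):ℝ)⌋₊ = V j'
    rw [Nat.floor_natCast]
    exact hWV j' hj'n
  rw [hβj] at hap
  have hlow := hE0 j' hj'n
  rw [hψj'] at hlow
  have hm2 : M 4 QQ ≤ mm2 := le_max_left _ _
  rw [hθdef] at hlow
  linarith [hap, hlow, hm2, hDP, hε₀1, hmm2, hKK4]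

end SZAux

namespace SZAux

variable {X : Type w} [MetricSpace X]

theorem morse_flip {M : ℝ → ℝ → ℝ} {l : ℝ → X} {π : X → ℝ}
    (hl : Isometry l) (hproj : IsNearestPointProj l π) (hM : IsMorseLine l M) :
    Isometry (fun t => l (-t)) ∧ IsNearestPointProj (fun t => l (-t)) (fun z => -(π z)) ∧
      IsMorseLine (fun t => l (-t)) M ∧ Set.range (fun t => l (-t)) = Set.range l := by
  have hrange : Set.range (fun t => l (-t)) = Set.range l := by
    ext z
    constructor
    · rintro ⟨t, rfl⟩
      exact ⟨-t, rfl⟩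
    · rintro ⟨t, rfl⟩
      exact ⟨-t, by simp⟩
  refine ⟨?_, ?_, ?_, hrange⟩
  · exact Isometry.of_dist_eq fun a b => by
      show dist (l (-a)) (l (-b)) = dist a b
      rw [hl.dist_eq, dist_neg_neg]
  · intro z
    show dist z (l (-(-(π z)))) = Metric.infDist z (Set.range (fun t => l (-t)))
    rw [neg_neg, hrange]
    exact hproj z
  · intro q Q hq hQ a b β hβ ha hb t ht
    rw [hrange] at ha hb
    rw [hrange]
    exact hM q Q hq hQ a b β hβ ha hb t ht

theorem both_sides_bound (hX : IsInjMetric.{u, v, w} X) {M : ℝ → ℝ → ℝ} {l : ℝ → X} {π : X → ℝ}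
    (hl : Isometry l) (hproj : IsNearestPointProj l π) (hM : IsMorseLine l M)
    (c x : X) (hcx : dist c x ≤ Metric.infDist c (Set.range l)) :
    |π x - π c| ≤ 4 * max (M 4 (2*(2*max (M 1 4) 0 + 4) + 8)) 0
      + 10 * (2*max (M 1 4) 0 + 4) + 100 := by
  obtain ⟨hl', hproj', hM', hrange⟩ := morse_flip hl hproj hM
  have h1 := core_bound hX hl hproj hM c x hcx
  have h2 := core_bound hX hl' hproj' hM' c x (by rwa [hrange])
  simp only [neg_sub_neg] at h2
  rw [abs_le]
  constructor <;> linarith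

end SZAux



/-- Sisto–Zalloum: in an injective metric space, every `M`-Morse geodesic line is
`D`-strongly contracting, where `D` depends only on the Morse gauge `M`. -/
theorem morse_implies_strongly_contracting_in_injective (M : ℝ → ℝ → ℝ) :
    ∃ D : ℝ, 0 ≤ D ∧
      ∀ (X : Type w) [MetricSpace X], IsInjMetric.{u, v} X →
        ∀ l : ℝ → X, Isometry l →
          ∀ π : X → ℝ, IsNearestPointProj l π →
            IsMorseLine l M → StronglyContracting l π D := by
  set D' : ℝ := 4 * max (M 4 (2*(2*max (M 1 4) 0 + 4) + 8)) 0
      + 10 * (2*max (M 1 4) 0 + 4) + 100 with hD'def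
  have hD'0 : 0 ≤ D' := by
    have h1 : (0:ℝ) ≤ max (M 1 4) 0 := le_max_right _ _
    have h2 : (0:ℝ) ≤ max (M 4 (2*(2*max (M 1 4) 0 + 4) + 8)) 0 := le_max_right _ _
    rw [hD'def]
    linarith
  refine ⟨2 * D', by linarith, ?_⟩
  intro X _inst hX l hl π hproj hM c ρ hdisj
  have hne : (Set.range l).Nonempty := ⟨l 0, 0, rfl⟩
  have hρR : ρ ≤ Metric.infDist c (Set.range l) := by
    by_contra hlt
    push_neg at hlt
    rw [Metric.infDist_lt_iff hne] at hlt
    obtain ⟨y, hy, hylt⟩ := hlt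
    have hmem : y ∈ Metric.closedBall c ρ ∩ Set.range l := by
      refine ⟨?_, hy⟩
      rw [Metric.mem_closedBall, dist_comm]
      exact hylt.le
    rw [hdisj] at hmem
    exact Set.notMem_empty y hmem
  apply Metric.diam_le_of_forall_dist_le (by linarith)
  rintro a ⟨u, hu, rfl⟩ b ⟨v, hv, rfl⟩
  have hcu : dist c u ≤ Metric.infDist c (Set.range l) := by
    rw [Metric.mem_closedBall] at hu
    rw [dist_comm]
    linarith
  have hcv : dist c v ≤ Metric.infDist c (Set.range l) := by
    rw [Metric.mem_closedBall] at hv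
    rw [dist_comm]
    linarith
  have h1 := SZAux.both_sides_bound hX hl hproj hM c u hcu
  have h2 := SZAux.both_sides_bound hX hl hproj hM c v hcv
  rw [← hD'def] at h1 h2
  rw [Real.dist_eq]
  have h3 : |π u - π v| ≤ |π u - π c| + |π v - π c| := by
    have := abs_add_le (π u - π c) (π c - π v)
    rw [show π u - π c + (π c - π v) = π u - π v by ring] at this
    rw [abs_sub_comm (π v) (π c)]
    linarith [this, abs_sub_comm (π c) (π v)]
  linarith [h1, h2, h3]
end

section
/- For every D ≥ 0 there exists a Morse gauge M : [1,∞) × [0,∞) → [0,∞), depending only on D, such that the following holds: if X is a geodesic metric space, l : ℝ → X is a geodesic line, π : X → ℝ is a nearest-point projection to l, and l is D-strongly contracting with respect to π, then l is M-Morse: for all q ≥ 1, Q ≥ 0, every (q,Q)-quasi-geodesic β with both endpoints in the range of l satisfies infDist(β(t), range(l)) ≤ M(q,Q) for all t in its domain. -/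
universe w

/-- A metric space is geodesic if any two points are joined by an isometric embedding of
the interval `[0, dist x y]`. -/
def IsGeodesicSpace (X : Type*) [MetricSpace X] : Prop :=
  ∀ x y : X, ∃ γ : ℝ → X, γ 0 = x ∧ γ (dist x y) = y ∧
    ∀ s ∈ Set.Icc (0 : ℝ) (dist x y), ∀ t ∈ Set.Icc (0 : ℝ) (dist x y),
      dist (γ s) (γ t) = |s - t|

/-- Triangle-type inequality for a nearest point projection. -/
lemma proj_dist_le {X : Type*} [MetricSpace X] {l : ℝ → X} (hl : Isometry l)
    {π : X → ℝ} (hπ : IsNearestPointProj l π) (x c : X) :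
    dist (π x) (π c) ≤ Metric.infDist x (Set.range l) + dist x c
      + Metric.infDist c (Set.range l) := by
  have h1 : dist (π x) (π c) = dist (l (π x)) (l (π c)) := (hl.dist_eq _ _).symm
  rw [h1]
  calc dist (l (π x)) (l (π c)) ≤ dist (l (π x)) x + dist x c + dist c (l (π c)) :=
        dist_triangle4 _ _ _ _
    _ = _ := by rw [dist_comm (l (π x)) x, hπ x, hπ c]

/-- The projection image of a closed ball is bounded. -/
lemma proj_ball_bounded {X : Type*} [MetricSpace X] {l : ℝ → X} (hl : Isometry l)
    {π : X → ℝ} (hπ : IsNearestPointProj l π) (c : X) (ρ : ℝ) :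
    Bornology.IsBounded (π '' Metric.closedBall c ρ) := by
  apply (Metric.isBounded_closedBall
    (x := π c) (r := 2 * Metric.infDist c (Set.range l) + 2 * ρ)).subset
  rintro - ⟨x, hx, rfl⟩
  rw [Metric.mem_closedBall] at hx ⊢
  have h1 := proj_dist_le hl hπ x c
  have h2 : Metric.infDist x (Set.range l) ≤ Metric.infDist c (Set.range l) + dist x c :=
    Metric.infDist_le_infDist_add_dist
  linarith

/-- Key step: if `c` is at distance `> R` from the line and `dist c x ≤ R`, then the
projections of `c` and `x` are `D`-close. -/
lemma proj_step {X : Type*} [MetricSpace X] {l : ℝ → X} (hl : Isometry l)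
    {π : X → ℝ} (hπ : IsNearestPointProj l π) {D : ℝ}
    (hSC : StronglyContracting l π D) {c x : X} {R : ℝ} (hR : 0 ≤ R)
    (hc : R < Metric.infDist c (Set.range l)) (hx : dist c x ≤ R) :
    dist (π c) (π x) ≤ D := by
  have hdisj : Metric.closedBall c R ∩ Set.range l = ∅ := by
    rw [Set.eq_empty_iff_forall_notMem]
    rintro z ⟨hz1, hz2⟩
    have := Metric.infDist_le_dist_of_mem (x := c) hz2
    rw [Metric.mem_closedBall, dist_comm] at hz1
    linarith
  have hdiam := hSC c R hdisj
  have hb := proj_ball_bounded hl hπ c R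
  have hcm : π c ∈ π '' Metric.closedBall c R :=
    ⟨c, Metric.mem_closedBall_self hR, rfl⟩
  have hxm : π x ∈ π '' Metric.closedBall c R :=
    ⟨x, by rwa [Metric.mem_closedBall, dist_comm], rfl⟩
  exact (Metric.dist_le_diam_of_mem hb hcm hxm).trans hdiam

set_option maxHeartbeats 2000000 in
/-- In a geodesic metric space, every `D`-strongly contracting geodesic line is `M`-Morse
for a Morse gauge `M` depending only on `D`. -/
theorem strongly_contracting_implies_morse (D : ℝ) (hD : 0 ≤ D) :
    ∃ M : ℝ → ℝ → ℝ, (∀ q Q : ℝ, 1 ≤ q → 0 ≤ Q → 0 ≤ M q Q) ∧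
      ∀ (X : Type w) [MetricSpace X], IsGeodesicSpace X →
        ∀ l : ℝ → X, Isometry l →
          ∀ π : X → ℝ, IsNearestPointProj l π →
            StronglyContracting l π D → IsMorseLine l M := by
  set E : ℝ := D + 1 with hE
  have hE1 : 1 ≤ E := by rw [hE]; linarith
  clear_value E
  refine ⟨fun q Q => q * (2 * q * (6 * (Q + 2 * E * q ^ 2) + 3 * Q))
      + (Q + 2 * E * q ^ 2) + 2 * Q, ?_, ?_⟩
  · intro q Q hq hQ
    show (0 : ℝ) ≤ q * (2 * q * (6 * (Q + 2 * E * q ^ 2) + 3 * Q)) + (Q + 2 * E * q ^ 2) + 2 * Q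
    have hq0 : (0 : ℝ) < q := lt_of_lt_of_le one_pos hq
    have h1 : 0 ≤ Q + 2 * E * q ^ 2 := by nlinarith [sq_nonneg q]
    have h2 : 0 ≤ 2 * q * (6 * (Q + 2 * E * q ^ 2) + 3 * Q) := by nlinarith
    have h3 : 0 ≤ q * (2 * q * (6 * (Q + 2 * E * q ^ 2) + 3 * Q)) :=
      mul_nonneg (le_of_lt hq0) h2
    linarith
  intro X _ _hgeo l hl π hπ hSC q Q hq hQ a b β hβ ha hb t0 ht0
  have hSC' : StronglyContracting l π E := fun c ρ hρ => (hSC c ρ hρ).trans (by rw [hE]; linarith)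
  have hq0 : (0 : ℝ) < q := lt_of_lt_of_le one_pos hq
  show Metric.infDist (β t0) (Set.range l)
    ≤ q * (2 * q * (6 * (Q + 2 * E * q ^ 2) + 3 * Q)) + (Q + 2 * E * q ^ 2) + 2 * Q
  set R : ℝ := Q + 2 * E * q ^ 2 with hR
  set L : ℝ := 2 * q * (6 * R + 3 * Q) with hL
  have hR0 : 0 ≤ R := by rw [hR]; nlinarith [sq_nonneg q]
  set h : ℝ := 2 * E * q with hh
  have hh0 : 0 < h := by rw [hh]; nlinarith
  have hhR : q * h + Q = R := by rw [hh, hR]; ring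
  clear_value R L h
  have hab : a ≤ b := le_trans ht0.1 ht0.2
  have haI : a ∈ Set.Icc a b := ⟨le_refl a, hab⟩
  have hbI : b ∈ Set.Icc a b := ⟨hab, le_refl b⟩
  -- the two boundary parameters
  set S1 : Set ℝ := {s | s ∈ Set.Icc a t0 ∧ Metric.infDist (β s) (Set.range l) ≤ R} with hS1
  set S2 : Set ℝ := {s | s ∈ Set.Icc t0 b ∧ Metric.infDist (β s) (Set.range l) ≤ R} with hS2
  have haS1 : a ∈ S1 := ⟨⟨le_refl a, ht0.1⟩, by rw [Metric.infDist_zero_of_mem ha]; exact hR0⟩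
  have hbS2 : b ∈ S2 := ⟨⟨ht0.2, le_refl b⟩, by rw [Metric.infDist_zero_of_mem hb]; exact hR0⟩
  have hS1ne : S1.Nonempty := ⟨a, haS1⟩
  have hS2ne : S2.Nonempty := ⟨b, hbS2⟩
  have hS1bdd : BddAbove S1 := ⟨t0, fun s hs => hs.1.2⟩
  have hS2bdd : BddBelow S2 := ⟨t0, fun s hs => hs.1.1⟩
  set s1 : ℝ := sSup S1 with hs1def
  set s2 : ℝ := sInf S2 with hs2def
  have has1 : a ≤ s1 := le_csSup hS1bdd haS1
  have hs1t : s1 ≤ t0 := csSup_le hS1ne (fun s hs => hs.1.2)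
  have hts2 : t0 ≤ s2 := le_csInf hS2ne (fun s hs => hs.1.1)
  have hs2b : s2 ≤ b := csInf_le hS2bdd hbS2
  have hs1I : s1 ∈ Set.Icc a b := ⟨has1, le_trans hs1t (le_trans hts2 hs2b)⟩
  have hs2I : s2 ∈ Set.Icc a b := ⟨le_trans has1 (le_trans hs1t hts2), hs2b⟩
  -- near-boundary estimates
  have hA1 : Metric.infDist (β s1) (Set.range l) ≤ R + Q := by
    apply le_of_forall_pos_le_add
    intro ε hε
    obtain ⟨s, hsS, hs⟩ := exists_lt_of_lt_csSup hS1ne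
      (show s1 - ε / q < s1 by have : 0 < ε / q := div_pos hε hq0; linarith)
    have hsle : s ≤ s1 := le_csSup hS1bdd hsS
    have hsI : s ∈ Set.Icc a b := ⟨hsS.1.1, le_trans hsS.1.2 (le_trans hts2 hs2b)⟩
    have hdist : dist (β s1) (β s) ≤ q * |s1 - s| + Q := (hβ s1 hs1I s hsI).2
    have habs : |s1 - s| ≤ ε / q := by rw [abs_of_nonneg (by linarith)]; linarith
    have h2 : Metric.infDist (β s1) (Set.range l)
        ≤ Metric.infDist (β s) (Set.range l) + dist (β s1) (β s) :=
      Metric.infDist_le_infDist_add_dist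
    have h3 : q * |s1 - s| ≤ ε := by
      calc q * |s1 - s| ≤ q * (ε / q) := by nlinarith
        _ = ε := by field_simp
    have := hsS.2
    linarith
  have hA2 : Metric.infDist (β s2) (Set.range l) ≤ R + Q := by
    apply le_of_forall_pos_le_add
    intro ε hε
    obtain ⟨s, hsS, hs⟩ := exists_lt_of_csInf_lt hS2ne
      (show s2 < s2 + ε / q by have : 0 < ε / q := div_pos hε hq0; linarith)
    have hsle : s2 ≤ s := csInf_le hS2bdd hsS
    have hsI : s ∈ Set.Icc a b := ⟨le_trans (le_trans has1 hs1t) hsS.1.1, hsS.1.2⟩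
    have hdist : dist (β s2) (β s) ≤ q * |s2 - s| + Q := (hβ s2 hs2I s hsI).2
    have habs : |s2 - s| ≤ ε / q := by rw [abs_of_nonpos (by linarith), neg_sub]; linarith
    have h2 : Metric.infDist (β s2) (Set.range l)
        ≤ Metric.infDist (β s) (Set.range l) + dist (β s2) (β s) :=
      Metric.infDist_le_infDist_add_dist
    have h3 : q * |s2 - s| ≤ ε := by
      calc q * |s2 - s| ≤ q * (ε / q) := by nlinarith
        _ = ε := by field_simp
    have := hsS.2
    linarith
  -- interior points are far from the line
  have hfar : ∀ s : ℝ, s1 < s → s < s2 → R < Metric.infDist (β s) (Set.range l) := by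
    intro s hls hrs
    by_contra hcon
    push_neg at hcon
    rcases le_total s t0 with hst | hts
    · have : s ∈ S1 := ⟨⟨le_trans has1 (le_of_lt hls), hst⟩, hcon⟩
      exact absurd (le_csSup hS1bdd this) (not_le.mpr hls)
    · have : s ∈ S2 := ⟨⟨hts, le_trans (le_of_lt hrs) hs2b⟩, hcon⟩
      exact absurd (csInf_le hS2bdd this) (not_le.mpr hrs)
  clear_value s1 s2
  set d : ℝ := s2 - s1 with hd
  have hd0 : 0 ≤ d := by rw [hd]; linarith
  clear_value d
  -- the key length bound
  have hdL : d ≤ L := by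
    rcases le_or_gt d h with hdh | hdh
    · -- short interval: trivial
      have : h ≤ L := by rw [hh, hL, hR]; nlinarith [sq_nonneg q]
      linarith
    · -- long interval: chain argument
      set n : ℕ := ⌈d / h⌉₊ with hn
      have hn2 : 2 ≤ n := by
        have h1 : (1 : ℕ) < n := by
          rw [hn, Nat.lt_ceil]
          push_cast
          rw [lt_div_iff₀ hh0]; linarith
        omega
      clear_value n
      have hn0 : (0 : ℝ) < n := by
        have hpos : 0 < n := by omega
        exact_mod_cast hpos
      have hd0' : 0 < d := lt_trans hh0 hdh
      set δ : ℝ := d / n with hδ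
      have hδ0 : 0 < δ := by rw [hδ]; exact div_pos hd0' hn0
      clear_value δ
      have hnδ : (n : ℝ) * δ = d := by
        rw [hδ, mul_comm, div_mul_cancel₀ d hn0.ne']
      have hδh : δ ≤ h := by
        have hceil : d / h ≤ (n : ℝ) := by rw [hn]; exact Nat.le_ceil _
        rw [hδ, div_le_iff₀ hn0]
        calc d = (d / h) * h := (div_mul_cancel₀ d hh0.ne').symm
          _ ≤ (n : ℝ) * h := by nlinarith
          _ = h * n := by ring
      set u : ℕ → ℝ := fun i => s1 + i * δ with hu
      have hue : ∀ i : ℕ, u i = s1 + i * δ := fun i => rfl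
      clear_value u
      have hun : u n = s2 := by rw [hue n, hnδ, hd]; ring
      have humem : ∀ i : ℕ, i ≤ n → u i ∈ Set.Icc a b := by
        intro i hi
        have hi' : (i : ℝ) ≤ n := by exact_mod_cast hi
        have h0i : 0 ≤ (i : ℝ) * δ := by positivity
        have h1 : (i : ℝ) * δ ≤ d := by nlinarith
        rw [hue i]
        exact ⟨by linarith [hs1I.1], by rw [hd] at h1; linarith [hs2I.2]⟩
      have hint : ∀ i : ℕ, 1 ≤ i → i ≤ n - 1 →
          R < Metric.infDist (β (u i)) (Set.range l) := by
        intro i h1i hin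
        have h1i' : (1 : ℝ) ≤ i := by exact_mod_cast h1i
        have hin' : (i : ℝ) ≤ (n : ℝ) - 1 := by
          have : i + 1 ≤ n := by omega
          have : ((i : ℝ) + 1) ≤ n := by exact_mod_cast this
          linarith
        apply hfar
        · rw [hue i]; nlinarith
        · rw [hue i]
          have : (i : ℝ) * δ < d := by nlinarith
          rw [hd] at this; linarith
      -- consecutive projections move slowly
      have hstep : ∀ i : ℕ, 1 ≤ i → i ≤ n - 2 →
          dist (π (β (u i))) (π (β (u (i + 1)))) ≤ E := by
        intro i h1i hin
        have hiI : u i ∈ Set.Icc a b := humem i (by omega)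
        have hi1I : u (i + 1) ∈ Set.Icc a b := humem (i + 1) (by omega)
        have hdist : dist (β (u i)) (β (u (i + 1))) ≤ R := by
          have := (hβ (u i) hiI (u (i + 1)) hi1I).2
          have habs : |u i - u (i + 1)| = δ := by
            rw [hue i, hue (i + 1)]
            push_cast
            rw [show s1 + (i : ℝ) * δ - (s1 + ((i : ℝ) + 1) * δ) = -δ by ring,
              abs_neg, abs_of_pos hδ0]
          rw [habs] at this
          nlinarith
        exact proj_step hl hπ hSC' hR0 (hint i h1i (by omega)) hdist
      -- telescoping
      have htel : ∀ j : ℕ, 1 ≤ j → j ≤ n - 1 →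
          dist (π (β (u 1))) (π (β (u j))) ≤ ((j : ℝ) - 1) * E := by
        intro j hj1
        induction j, hj1 using Nat.le_induction with
        | base => intro _; simp
        | succ j hj ih =>
          intro hjn
          have hj' : j ≤ n - 1 := by omega
          have h1 := ih hj'
          have h2 := hstep j hj (by omega)
          calc dist (π (β (u 1))) (π (β (u (j + 1))))
              ≤ dist (π (β (u 1))) (π (β (u j))) + dist (π (β (u j))) (π (β (u (j + 1)))) :=
                dist_triangle _ _ _
            _ ≤ ((j : ℝ) - 1) * E + E := add_le_add h1 h2
            _ = (((j + 1 : ℕ) : ℝ) - 1) * E := by push_cast; ring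
      -- endpoint estimates
      have h1I : u 1 ∈ Set.Icc a b := humem 1 (by omega)
      have hn1I : u (n - 1) ∈ Set.Icc a b := humem (n - 1) (by omega)
      have hcast : ((n - 1 : ℕ) : ℝ) = (n : ℝ) - 1 := by
        have h1n : 1 ≤ n := by omega
        rw [Nat.cast_sub h1n, Nat.cast_one]
      have hd1 : dist (β s1) (β (u 1)) ≤ R := by
        have hub := (hβ s1 hs1I (u 1) h1I).2
        have habs : |s1 - u 1| = δ := by
          rw [hue 1]
          push_cast
          rw [show s1 - (s1 + 1 * δ) = -δ by ring, abs_neg, abs_of_pos hδ0]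
        rw [habs] at hub
        nlinarith
      have hd3 : dist (β (u (n - 1))) (β s2) ≤ R := by
        have hub := (hβ (u (n - 1)) hn1I s2 hs2I).2
        have habs : |u (n - 1) - s2| = δ := by
          rw [hue (n - 1), hcast, ← hun, hue n]
          rw [show s1 + ((n : ℝ) - 1) * δ - (s1 + (n : ℝ) * δ) = -δ by ring, abs_neg,
            abs_of_pos hδ0]
        rw [habs] at hub
        nlinarith
      have hi1 : Metric.infDist (β (u 1)) (Set.range l) ≤ 2 * R + Q := by
        have hmono : Metric.infDist (β (u 1)) (Set.range l)
            ≤ Metric.infDist (β s1) (Set.range l) + dist (β (u 1)) (β s1) :=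
          Metric.infDist_le_infDist_add_dist
        rw [dist_comm] at hmono
        linarith
      have hi3 : Metric.infDist (β (u (n - 1))) (Set.range l) ≤ 2 * R + Q := by
        have hmono : Metric.infDist (β (u (n - 1))) (Set.range l)
            ≤ Metric.infDist (β s2) (Set.range l) + dist (β (u (n - 1))) (β s2) :=
          Metric.infDist_le_infDist_add_dist
        linarith
      have hmid : dist (β (u 1)) (β (u (n - 1)))
          ≤ (2 * R + Q) + ((n : ℝ) - 2) * E + (2 * R + Q) := by
        have htel' := htel (n - 1) (by omega) (le_refl _)
        rw [hcast] at htel'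
        have heq : ((n : ℝ) - 1 - 1) * E = ((n : ℝ) - 2) * E := by ring
        rw [heq] at htel'
        have hiso : dist (π (β (u 1))) (π (β (u (n - 1))))
            = dist (l (π (β (u 1)))) (l (π (β (u (n - 1))))) := (hl.dist_eq _ _).symm
        have h4 : dist (β (u 1)) (β (u (n - 1)))
            ≤ dist (β (u 1)) (l (π (β (u 1)))) + dist (l (π (β (u 1)))) (l (π (β (u (n - 1)))))
              + dist (l (π (β (u (n - 1))))) (β (u (n - 1))) := dist_triangle4 _ _ _ _
        rw [← hiso, hπ (β (u 1)), dist_comm (l (π (β (u (n - 1))))) (β (u (n - 1))),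
          hπ (β (u (n - 1)))] at h4
        linarith
      have hlow : (1 / q) * d - Q ≤ dist (β s1) (β s2) := by
        have hlb := (hβ s1 hs1I s2 hs2I).1
        have habs : |s1 - s2| = d := by
          rw [abs_sub_comm, ← hd, abs_of_nonneg hd0]
        rwa [habs] at hlb
      have hup : dist (β s1) (β s2) ≤ 6 * R + 2 * Q + ((n : ℝ) - 2) * E := by
        have h5 : dist (β s1) (β s2)
            ≤ dist (β s1) (β (u 1)) + dist (β (u 1)) (β (u (n - 1)))
              + dist (β (u (n - 1))) (β s2) := dist_triangle4 _ _ _ _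
        linarith
      have hnlt : (n : ℝ) < d / h + 1 := by
        rw [hn]; exact Nat.ceil_lt_add_one (div_nonneg hd0 hh0.le)
      have hEh : ((n : ℝ) - 2) * E ≤ d / (2 * q) := by
        have hE0 : (0 : ℝ) ≤ E := by linarith
        have h6 : ((n : ℝ) - 2) * E ≤ (d / h - 1) * E :=
          mul_le_mul_of_nonneg_right (by linarith) hE0
        have h8 : (d / h - 1) * E = (d / h) * E - E := by ring
        rw [h8] at h6
        have h7 : (d / h) * E = d / (2 * q) := by
          rw [hh]
          rw [div_mul_eq_mul_div, div_eq_div_iff (by positivity) (by positivity)]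
          ring
        linarith
      have hfin : d / (2 * q) ≤ 6 * R + 3 * Q := by
        have e : (1 / q) * d - d / (2 * q) = d / (2 * q) := by
          rw [one_div_mul_eq_div, div_sub_div _ _ hq0.ne' (by positivity : (2*q:ℝ) ≠ 0),
            div_eq_div_iff (by positivity) (by positivity)]
          ring
        linarith
      rw [hL]
      rw [div_le_iff₀ (by positivity : (0 : ℝ) < 2 * q)] at hfin
      linarith
  -- conclusion
  have hts1 : dist (β t0) (β s1) ≤ q * |t0 - s1| + Q := (hβ t0 ht0 s1 hs1I).2
  have habs : |t0 - s1| = t0 - s1 := abs_of_nonneg (by linarith)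
  have hinf : Metric.infDist (β t0) (Set.range l)
      ≤ Metric.infDist (β s1) (Set.range l) + dist (β t0) (β s1) :=
    Metric.infDist_le_infDist_add_dist
  have hle : t0 - s1 ≤ L := by rw [hd] at hdL; linarith
  have : q * |t0 - s1| ≤ q * L := by rw [habs]; nlinarith
  calc Metric.infDist (β t0) (Set.range l) ≤ (R + Q) + (q * |t0 - s1| + Q) := by linarith
    _ ≤ q * L + R + 2 * Q := by linarith
end
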